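/- arXiv:1804.08515 — 10 statements merged into one kernel-verified Lean document; each statement's English description precedes it below -/
import Mathlib

section
/- Let H be a graded connected Hopf algebra over a field k of characteristic zero and α : H₁ → k a nonzero linear map. Let q : H → k be a linear form such that q(1) = 1, q restricted to H₁ equals α, and (q ⋆ q)(x) = 2^{|x|} q(x) for every homogeneous x ∈ H. Then q is an algebra character: q(xy) = q(x)q(y) for all x, y ∈ H. -/
open TensorProduct

/-- Convolution product of two linear forms on a coalgebra. -/
noncomputable def conv {k H : Type*} [CommSemiring k] [Semiring H] [Bialgebra k H]
    (f g : H →ₗ[k] k) : H →ₗ[k] k :=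
  (LinearMap.mul' k k) ∘ₗ (TensorProduct.map f g) ∘ₗ Coalgebra.comul

/-- A grading making a Hopf (bi)algebra graded and connected: the product and the coproduct
respect the grading and the degree-zero part is spanned by the unit. -/
structure GradedConnected (k H : Type*) [CommSemiring k] [Semiring H] [Bialgebra k H] where
  grading : ℕ → Submodule k H
  internal : DirectSum.IsInternal grading
  connected : grading 0 = Submodule.span k {1}
  mul_mem : ∀ {p q : ℕ} {x y : H}, x ∈ grading p → y ∈ grading q → x * y ∈ grading (p + q)
  comul_mem : ∀ {n : ℕ} {x : H}, x ∈ grading n →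
    Coalgebra.comul (R := k) x ∈
      ⨆ p ∈ Finset.range (n + 1),
        LinearMap.range (TensorProduct.mapIncl (grading p) (grading (n - p)))

section Aux

variable {k H : Type*} [CommSemiring k] [Semiring H] [Bialgebra k H] (G : GradedConnected k H)

/-- Induction principle for membership in the image of `H_a ⊗ H_b` in `H ⊗ H`. -/
theorem GC.S_induction {a b : ℕ} {C : H ⊗[k] H → Prop} {t : H ⊗[k] H}
    (ht : t ∈ LinearMap.range (TensorProduct.mapIncl (G.grading a) (G.grading b)))
    (h0 : C 0) (hadd : ∀ u v, C u → C v → C (u + v))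
    (htmul : ∀ x ∈ G.grading a, ∀ y ∈ G.grading b, C (x ⊗ₜ[k] y)) : C t := by
  obtain ⟨u, rfl⟩ := ht
  induction u using TensorProduct.induction_on with
  | zero => simpa using h0
  | tmul x y => exact htmul x x.2 y y.2
  | add u v hu hv => rw [map_add]; exact hadd _ _ hu hv

theorem GC.one_mem_zero : (1 : H) ∈ G.grading 0 := by
  rw [G.connected]; exact Submodule.mem_span_singleton_self 1

theorem GC.tmul_mem {a b : ℕ} {x y : H} (hx : x ∈ G.grading a) (hy : y ∈ G.grading b) :
    x ⊗ₜ[k] y ∈ LinearMap.range (TensorProduct.mapIncl (G.grading a) (G.grading b)) :=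
  ⟨(⟨x, hx⟩ : G.grading a) ⊗ₜ[k] (⟨y, hy⟩ : G.grading b), rfl⟩

theorem GC.S_right_zero {a : ℕ} {t : H ⊗[k] H}
    (ht : t ∈ LinearMap.range (TensorProduct.mapIncl (G.grading a) (G.grading 0))) :
    ∃ z ∈ G.grading a, t = z ⊗ₜ[k] (1 : H) := by
  refine GC.S_induction (C := fun t => ∃ z ∈ G.grading a, t = z ⊗ₜ[k] (1 : H)) G ht
    ⟨0, zero_mem _, by simp⟩ ?_ ?_
  · rintro u v ⟨z1, hz1, rfl⟩ ⟨z2, hz2, rfl⟩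
    exact ⟨z1 + z2, add_mem hz1 hz2, by rw [add_tmul]⟩
  · intro x hx y hy
    rw [G.connected, Submodule.mem_span_singleton] at hy
    obtain ⟨c, rfl⟩ := hy
    exact ⟨c • x, Submodule.smul_mem _ _ hx, by rw [smul_tmul]⟩

theorem GC.S_left_zero {b : ℕ} {t : H ⊗[k] H}
    (ht : t ∈ LinearMap.range (TensorProduct.mapIncl (G.grading 0) (G.grading b))) :
    ∃ z ∈ G.grading b, t = (1 : H) ⊗ₜ[k] z := by
  refine GC.S_induction (C := fun t => ∃ z ∈ G.grading b, t = (1 : H) ⊗ₜ[k] z) G ht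
    ⟨0, zero_mem _, by simp⟩ ?_ ?_
  · rintro u v ⟨z1, hz1, rfl⟩ ⟨z2, hz2, rfl⟩
    exact ⟨z1 + z2, add_mem hz1 hz2, by rw [tmul_add]⟩
  · intro x hx y hy
    rw [G.connected, Submodule.mem_span_singleton] at hx
    obtain ⟨c, rfl⟩ := hx
    exact ⟨c • y, Submodule.smul_mem _ _ hy, by rw [smul_tmul]⟩

/-- `(id ⊗ counit)` followed by `rid`. -/
noncomputable def GC.Lmap (k H : Type*) [CommSemiring k] [Semiring H] [Bialgebra k H] :
    H ⊗[k] H →ₗ[k] H :=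
  (TensorProduct.rid k H).toLinearMap ∘ₗ LinearMap.lTensor H (Coalgebra.counit (R := k))

noncomputable def GC.Rmap (k H : Type*) [CommSemiring k] [Semiring H] [Bialgebra k H] :
    H ⊗[k] H →ₗ[k] H :=
  (TensorProduct.lid k H).toLinearMap ∘ₗ LinearMap.rTensor H (Coalgebra.counit (R := k))

@[simp] theorem GC.Lmap_tmul (x y : H) :
    GC.Lmap k H (x ⊗ₜ[k] y) = Coalgebra.counit (R := k) y • x := by
  simp [GC.Lmap]

@[simp] theorem GC.Rmap_tmul (x y : H) :
    GC.Rmap k H (x ⊗ₜ[k] y) = Coalgebra.counit (R := k) x • y := by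
  simp [GC.Rmap]

theorem GC.Lmap_comul (x : H) : GC.Lmap k H (Coalgebra.comul (R := k) x) = x := by
  simp [GC.Lmap, Coalgebra.lTensor_counit_comul]

theorem GC.Rmap_comul (x : H) : GC.Rmap k H (Coalgebra.comul (R := k) x) = x := by
  simp [GC.Rmap, Coalgebra.rTensor_counit_comul]

theorem GC.Lmap_mem {a b : ℕ} {t : H ⊗[k] H}
    (ht : t ∈ LinearMap.range (TensorProduct.mapIncl (G.grading a) (G.grading b))) :
    GC.Lmap k H t ∈ G.grading a := by
  refine GC.S_induction (C := fun t => GC.Lmap k H t ∈ G.grading a) G ht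
    (by simpa using zero_mem _) ?_ ?_
  · intro u v hu hv; rw [map_add]; exact add_mem hu hv
  · intro x hx y hy; rw [GC.Lmap_tmul]; exact Submodule.smul_mem _ _ hx

theorem GC.Rmap_mem {a b : ℕ} {t : H ⊗[k] H}
    (ht : t ∈ LinearMap.range (TensorProduct.mapIncl (G.grading a) (G.grading b))) :
    GC.Rmap k H t ∈ G.grading b := by
  refine GC.S_induction (C := fun t => GC.Rmap k H t ∈ G.grading b) G ht
    (by simpa using zero_mem _) ?_ ?_
  · intro u v hu hv; rw [map_add]; exact add_mem hu hv
  · intro x hx y hy; rw [GC.Rmap_tmul]; exact Submodule.smul_mem _ _ hy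

end Aux

section Decomp

variable {k H : Type*} [CommRing k] [Ring H] [Bialgebra k H] (G : GradedConnected k H)

theorem GC.mem_ne_iSup {p m : ℕ} (hpm : p ≠ m) {v : H} (hv : v ∈ G.grading p) :
    v ∈ ⨆ j ≠ m, G.grading j :=
  Submodule.mem_iSup_of_mem p (by exact Submodule.mem_iSup_of_mem hpm hv)

theorem GC.eq_of_sub_mem {m : ℕ} {x z : H} (hx : x ∈ G.grading m) (hz : z ∈ G.grading m)
    (hmem : x - z ∈ ⨆ j ≠ m, G.grading j) : z = x := by
  have h0 := Submodule.disjoint_def.mp (G.internal.submodule_iSupIndep m) (x - z)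
    (sub_mem hx hz) hmem
  rw [sub_eq_zero] at h0
  exact h0.symm

theorem GC.comul_decomp {m : ℕ} (hm : 1 ≤ m) {x : H} (hx : x ∈ G.grading m) :
    ∃ t : ℕ → H ⊗[k] H,
      (∀ p, t p ∈ LinearMap.range (TensorProduct.mapIncl (G.grading p) (G.grading (m - p)))) ∧
      Coalgebra.comul (R := k) x
        = x ⊗ₜ[k] (1 : H) + (1 : H) ⊗ₜ[k] x + ∑ p ∈ Finset.Ioo 0 m, t p := by
  classical
  obtain ⟨μ, hμ⟩ := (Submodule.mem_iSup_finset_iff_exists_sum _ _).mp (G.comul_mem hx)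
  set t : ℕ → H ⊗[k] H := fun p => (μ p : H ⊗[k] H) with htdef
  have ht : ∀ p, t p ∈ LinearMap.range (TensorProduct.mapIncl (G.grading p) (G.grading (m - p))) :=
    fun p => (μ p).2
  have hsplit : Finset.range (m + 1) = insert 0 (insert m (Finset.Ioo 0 m)) := by
    ext p
    simp only [Finset.mem_range, Finset.mem_insert, Finset.mem_Ioo]
    omega
  have hsum : Coalgebra.comul (R := k) x = t 0 + t m + ∑ p ∈ Finset.Ioo 0 m, t p := by
    rw [← hμ, hsplit, Finset.sum_insert (by simp only [Finset.mem_insert, Finset.mem_Ioo]; omega),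
      Finset.sum_insert (by simp [Finset.mem_Ioo])]
    exact (add_assoc _ _ _).symm
  obtain ⟨z, hz, hzt⟩ := GC.S_right_zero G (show t m ∈ _ by have h := ht m; rwa [Nat.sub_self] at h)
  obtain ⟨w, hw, hwt⟩ := GC.S_left_zero G (show t 0 ∈ _ by have h := ht 0; rwa [Nat.sub_zero] at h)
  -- identify z = x via Lmap
  have hzx : z = x := by
    refine GC.eq_of_sub_mem G hx hz ?_
    have hLz : GC.Lmap k H (t m) = z := by
      rw [hzt, GC.Lmap_tmul, Bialgebra.counit_one, one_smul]
    have hLx : x = GC.Lmap k H (t 0) + z + ∑ p ∈ Finset.Ioo 0 m, GC.Lmap k H (t p) := by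
      conv_lhs => rw [← GC.Lmap_comul (k := k) x]
      rw [hsum, map_add, map_add, map_sum, hLz]
    have hxz : x - z = GC.Lmap k H (t 0) + ∑ p ∈ Finset.Ioo 0 m, GC.Lmap k H (t p) := by
      rw [hLx]; abel
    rw [hxz]
    refine add_mem (GC.mem_ne_iSup G (by omega) (GC.Lmap_mem G (ht 0))) ?_
    refine Submodule.sum_mem _ fun p hp => ?_
    rw [Finset.mem_Ioo] at hp
    exact GC.mem_ne_iSup G (by omega) (GC.Lmap_mem G (ht p))
  -- identify w = x via Rmap
  have hwx : w = x := by
    refine GC.eq_of_sub_mem G hx hw ?_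
    have hRw : GC.Rmap k H (t 0) = w := by
      rw [hwt, GC.Rmap_tmul, Bialgebra.counit_one, one_smul]
    have hRx : x = w + GC.Rmap k H (t m) + ∑ p ∈ Finset.Ioo 0 m, GC.Rmap k H (t p) := by
      conv_lhs => rw [← GC.Rmap_comul (k := k) x]
      rw [hsum, map_add, map_add, map_sum, hRw]
    have hxw : x - w = GC.Rmap k H (t m) + ∑ p ∈ Finset.Ioo 0 m, GC.Rmap k H (t p) := by
      rw [hRx]; abel
    rw [hxw]
    refine add_mem (GC.mem_ne_iSup G (by omega) (GC.Rmap_mem G (ht m))) ?_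
    refine Submodule.sum_mem _ fun p hp => ?_
    rw [Finset.mem_Ioo] at hp
    exact GC.mem_ne_iSup G (by omega) (GC.Rmap_mem G (ht p))
  refine ⟨t, ht, ?_⟩
  rw [hsum, hwt, hzt, hzx, hwx]
  abel

end Decomp

section Key

variable {k H : Type*} [CommRing k] [Ring H] [Bialgebra k H] (G : GradedConnected k H)
  (q : H →ₗ[k] k)

/-- The linear form `F(x ⊗ y) = q x * q y` on `H ⊗ H`. -/
noncomputable def GC.F (q : H →ₗ[k] k) : H ⊗[k] H →ₗ[k] k :=
  (LinearMap.mul' k k) ∘ₗ (TensorProduct.map q q)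

@[simp] theorem GC.F_tmul (x y : H) : GC.F q (x ⊗ₜ[k] y) = q x * q y := by
  simp [GC.F]

theorem GC.F_mul {N : ℕ}
    (ih : ∀ a b : ℕ, a + b < N → ∀ x ∈ G.grading a, ∀ y ∈ G.grading b, q (x * y) = q x * q y)
    {a b c d : ℕ} (hac : a + c < N) (hbd : b + d < N) {u v : H ⊗[k] H}
    (hu : u ∈ LinearMap.range (TensorProduct.mapIncl (G.grading a) (G.grading b)))
    (hv : v ∈ LinearMap.range (TensorProduct.mapIncl (G.grading c) (G.grading d))) :
    GC.F q (u * v) = GC.F q u * GC.F q v := by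
  have pure : ∀ x ∈ G.grading a, ∀ y ∈ G.grading b,
      GC.F q ((x ⊗ₜ[k] y) * v) = GC.F q (x ⊗ₜ[k] y) * GC.F q v := by
    intro x hx y hy
    refine GC.S_induction
      (C := fun v => GC.F q ((x ⊗ₜ[k] y) * v) = GC.F q (x ⊗ₜ[k] y) * GC.F q v) G hv
      (by simp) ?_ ?_
    · intro v1 v2 h1 h2
      rw [mul_add, map_add, map_add, mul_add, h1, h2]
    · intro z hz w hw
      rw [Algebra.TensorProduct.tmul_mul_tmul, GC.F_tmul, GC.F_tmul, GC.F_tmul,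
        ih a c hac x hx z hz, ih b d hbd y hy w hw]
      ring
  refine GC.S_induction
    (C := fun u => GC.F q (u * v) = GC.F q u * GC.F q v) G hu (by simp) ?_ pure
  · intro u1 u2 h1 h2
    rw [add_mul, map_add, map_add, add_mul, h1, h2]

end Key


/-- The inverse-factorial character of a graded connected Hopf algebra is
multiplicative. -/
theorem stmt2 {k H : Type*} [Field k] [CharZero k] [Ring H] [HopfAlgebra k H]
    (G : GradedConnected k H)
    (α : ↥(G.grading 1) →ₗ[k] k) (hα : α ≠ 0)
    (q : H →ₗ[k] k)
    (hq1 : q 1 = 1)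
    (hqα : ∀ x : ↥(G.grading 1), q x = α x)
    (hqconv : ∀ n : ℕ, ∀ x ∈ G.grading n, conv q q x = 2 ^ n * q x) :
    ∀ x y : H, q (x * y) = q x * q y := by
  classical
  have hFconv : ∀ n : ℕ, ∀ z ∈ G.grading n,
      GC.F q (Coalgebra.comul (R := k) z) = 2 ^ n * q z := by
    intro n z hz
    have := hqconv n z hz
    simpa [conv, GC.F, LinearMap.comp_apply] using this
  -- multiplicativity on homogeneous elements, by strong induction on total degree
  have main : ∀ N : ℕ, ∀ m c : ℕ, m + c = N →
      ∀ x ∈ G.grading m, ∀ y ∈ G.grading c, q (x * y) = q x * q y := by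
    intro N
    induction N using Nat.strong_induction_on with
    | _ N ih =>
    intro m c hmc x hx y hy
    have ih' : ∀ a b : ℕ, a + b < N →
        ∀ x ∈ G.grading a, ∀ y ∈ G.grading b, q (x * y) = q x * q y :=
      fun a b h => ih (a + b) h a b rfl
    rcases Nat.eq_zero_or_pos m with hm | hm
    · subst hm
      rw [G.connected, Submodule.mem_span_singleton] at hx
      obtain ⟨a, rfl⟩ := hx
      rw [smul_mul_assoc, one_mul, map_smul, map_smul, smul_eq_mul, smul_eq_mul, hq1, mul_one]
    rcases Nat.eq_zero_or_pos c with hc | hc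
    · subst hc
      rw [G.connected, Submodule.mem_span_singleton] at hy
      obtain ⟨a, rfl⟩ := hy
      rw [mul_smul_comm, mul_one, map_smul, map_smul, smul_eq_mul, smul_eq_mul, hq1, mul_one]
      ring
    -- now 1 ≤ m, 1 ≤ c, so 2 ≤ N
    obtain ⟨t, ht, hdx⟩ := GC.comul_decomp G hm hx
    obtain ⟨s, hs, hdy⟩ := GC.comul_decomp G hc hy
    set XR : H ⊗[k] H := ∑ p ∈ Finset.Ioo 0 m, t p with hXR
    set YR : H ⊗[k] H := ∑ p ∈ Finset.Ioo 0 c, s p with hYR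
    set X0 : H ⊗[k] H := x ⊗ₜ[k] (1 : H) with hX0
    set X1 : H ⊗[k] H := (1 : H) ⊗ₜ[k] x with hX1
    set Y0 : H ⊗[k] H := y ⊗ₜ[k] (1 : H) with hY0
    set Y1 : H ⊗[k] H := (1 : H) ⊗ₜ[k] y with hY1
    have hX0m := GC.tmul_mem G hx (GC.one_mem_zero G)
    have hX1m := GC.tmul_mem G (GC.one_mem_zero G) hx
    have hY0m := GC.tmul_mem G hy (GC.one_mem_zero G)
    have hY1m := GC.tmul_mem G (GC.one_mem_zero G) hy
    -- the seven cross terms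
    have k01 : GC.F q (X0 * Y1) = GC.F q X0 * GC.F q Y1 :=
      GC.F_mul G q ih' (by omega) (by omega) hX0m hY1m
    have k10 : GC.F q (X1 * Y0) = GC.F q X1 * GC.F q Y0 :=
      GC.F_mul G q ih' (by omega) (by omega) hX1m hY0m
    have k0R : GC.F q (X0 * YR) = GC.F q X0 * GC.F q YR := by
      rw [hYR, Finset.mul_sum, map_sum, map_sum, Finset.mul_sum]
      refine Finset.sum_congr rfl fun p hp => ?_
      rw [Finset.mem_Ioo] at hp
      exact GC.F_mul G q ih' (by omega) (by omega) hX0m (hs p)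
    have k1R : GC.F q (X1 * YR) = GC.F q X1 * GC.F q YR := by
      rw [hYR, Finset.mul_sum, map_sum, map_sum, Finset.mul_sum]
      refine Finset.sum_congr rfl fun p hp => ?_
      rw [Finset.mem_Ioo] at hp
      exact GC.F_mul G q ih' (by omega) (by omega) hX1m (hs p)
    have kR0 : GC.F q (XR * Y0) = GC.F q XR * GC.F q Y0 := by
      rw [hXR, Finset.sum_mul, map_sum, map_sum, Finset.sum_mul]
      refine Finset.sum_congr rfl fun p hp => ?_
      rw [Finset.mem_Ioo] at hp
      exact GC.F_mul G q ih' (by omega) (by omega) (ht p) hY0m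
    have kR1 : GC.F q (XR * Y1) = GC.F q XR * GC.F q Y1 := by
      rw [hXR, Finset.sum_mul, map_sum, map_sum, Finset.sum_mul]
      refine Finset.sum_congr rfl fun p hp => ?_
      rw [Finset.mem_Ioo] at hp
      exact GC.F_mul G q ih' (by omega) (by omega) (ht p) hY1m
    have kRR : GC.F q (XR * YR) = GC.F q XR * GC.F q YR := by
      rw [hXR, hYR, Finset.sum_mul_sum, map_sum, map_sum, map_sum, Finset.sum_mul_sum]
      refine Finset.sum_congr rfl fun p hp => ?_
      rw [map_sum]
      refine Finset.sum_congr rfl fun p' hp' => ?_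
      rw [Finset.mem_Ioo] at hp hp'
      exact GC.F_mul G q ih' (by omega) (by omega) (ht p) (hs p')
    -- extreme terms
    have v00 : GC.F q (X0 * Y0) = q (x * y) := by
      rw [hX0, hY0, Algebra.TensorProduct.tmul_mul_tmul, one_mul, GC.F_tmul, hq1, mul_one]
    have v11 : GC.F q (X1 * Y1) = q (x * y) := by
      rw [hX1, hY1, Algebra.TensorProduct.tmul_mul_tmul, one_mul, GC.F_tmul, hq1, one_mul]
    have w00 : GC.F q X0 * GC.F q Y0 = q x * q y := by
      rw [hX0, hY0, GC.F_tmul, GC.F_tmul, hq1, mul_one, mul_one]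
    have w11 : GC.F q X1 * GC.F q Y1 = q x * q y := by
      rw [hX1, hY1, GC.F_tmul, GC.F_tmul, hq1, one_mul, one_mul]
    -- the two global evaluations
    have h1 : GC.F q (Coalgebra.comul (R := k) x * Coalgebra.comul (R := k) y)
        = 2 ^ N * q (x * y) := by
      rw [← Bialgebra.comul_mul]
      exact hFconv N (x * y) (hmc ▸ G.mul_mem hx hy)
    have h2 : GC.F q (Coalgebra.comul (R := k) x) * GC.F q (Coalgebra.comul (R := k) y)
        = 2 ^ N * (q x * q y) := by
      rw [hFconv m x hx, hFconv c y hy, ← hmc, pow_add]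
      ring
    have e1 : (2 : k) ^ N * q (x * y)
        = q (x * y) + GC.F q X0 * GC.F q Y1 + GC.F q X0 * GC.F q YR
          + GC.F q X1 * GC.F q Y0 + q (x * y) + GC.F q X1 * GC.F q YR
          + GC.F q XR * GC.F q Y0 + GC.F q XR * GC.F q Y1 + GC.F q XR * GC.F q YR := by
      rw [← h1, hdx, hdy]
      simp only [add_mul, mul_add, map_add]
      rw [v00, v11, k01, k0R, k10, k1R, kR0, kR1, kRR]
      ring
    have e2 : (2 : k) ^ N * (q x * q y)
        = q x * q y + GC.F q X0 * GC.F q Y1 + GC.F q X0 * GC.F q YR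
          + GC.F q X1 * GC.F q Y0 + q x * q y + GC.F q X1 * GC.F q YR
          + GC.F q XR * GC.F q Y0 + GC.F q XR * GC.F q Y1 + GC.F q XR * GC.F q YR := by
      rw [← h2, hdx, hdy]
      simp only [map_add, add_mul, mul_add]
      rw [w00, w11]
      ring
    have hpow : ((2 : k) ^ N - 2) ≠ 0 := by
      have h4 : (4 : ℕ) ≤ 2 ^ N := by
        calc (4 : ℕ) = 2 ^ 2 := by norm_num
        _ ≤ 2 ^ N := Nat.pow_le_pow_right (by norm_num) (by omega)
      have hne : ((2 ^ N : ℕ) : k) ≠ ((2 : ℕ) : k) := Nat.cast_injective.ne (by omega)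
      refine sub_ne_zero.mpr ?_
      simpa using hne
    have hzero : ((2 : k) ^ N - 2) * (q (x * y) - q x * q y) = 0 := by
      linear_combination e1 - e2
    rcases mul_eq_zero.mp hzero with h | h
    · exact absurd h hpow
    · exact sub_eq_zero.mp h
  intro x y
  have htop : ∀ z : H, z ∈ ⨆ i, G.grading i := by
    rw [G.internal.submodule_iSup_eq_top]; exact fun z => trivial
  have step1 : ∀ (m : ℕ) (x : H), x ∈ G.grading m → ∀ y : H, q (x * y) = q x * q y := by
    intro m x hx y
    refine Submodule.iSup_induction (motive := fun y => q (x * y) = q x * q y) G.grading (htop y)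
      ?_ (by simp) ?_
    · intro c y hy
      exact main (m + c) m c rfl x hx y hy
    · intro y1 y2 h1 h2
      rw [mul_add, map_add, map_add, mul_add, h1, h2]
  refine Submodule.iSup_induction (motive := fun x => q (x * y) = q x * q y) G.grading (htop x)
    ?_ (by simp) ?_
  · intro m x hx
    exact step1 m x hx y
  · intro x1 x2 h1 h2
    rw [add_mul, map_add, map_add, add_mul, h1, h2]
end

section
/- Let H be a graded connected Hopf algebra over a field k of characteristic zero, α : H₁ → k a nonzero linear map, and q = q_α the associated inverse-factorial character. For h ∈ k let q_h : H → k be the linear form defined on homogeneous elements by q_h(y) := h^{|y|} q(y). Then for any h, k' ∈ k, the convolution identity (q_h ⋆ q_{k'})(x) = (h + k')^{|x|} q(x) holds for every homogeneous x ∈ H; equivalently, in Sweedler notation with homogeneous components, q(x)(h+k')^{|x|} = Σ_{(x)} q(x₁)q(x₂) h^{|x₁|} (k')^{|x₂|}. -/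
open TensorProduct

set_option linter.unusedSectionVars false

section AuxCombinatorics

/-- The key binomial identity, in a characteristic-zero field:
`∑_{p=1}^{j-1} C(n-p, n-j) C(n,p) = (2^j - 2) C(n,j)` for `1 ≤ j ≤ n`. -/
lemma key_ident {k : Type*} [Field k] [CharZero k] (n j : ℕ) (h1 : 1 ≤ j) (hj : j ≤ n) :
    ∑ p ∈ Finset.Icc 1 (j - 1), ((n - p).choose (n - j) : k) * (n.choose p : k)
      = ((2 : k) ^ j - 2) * (n.choose j : k) := by
  have hterm : ∀ p ∈ Finset.range (j + 1),
      ((n - p).choose (n - j) : k) * (n.choose p : k)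
        = (n.choose j : k) * (j.choose p : k) := by
    intro p hp
    have hpj : p ≤ j := Nat.lt_succ_iff.mp (Finset.mem_range.mp hp)
    have h3 : (n - p).choose (n - j) = (n - p).choose (j - p) := by
      rw [← Nat.choose_symm (by omega : j - p ≤ n - p)]
      congr 1
      omega
    rw [h3, ← Nat.cast_mul, ← Nat.cast_mul, mul_comm ((n - p).choose (j - p)) (n.choose p),
      ← Nat.choose_mul (n := n) hpj]
  have hfull : ∑ p ∈ Finset.range (j + 1),
      ((n - p).choose (n - j) : k) * (n.choose p : k) = (2 : k) ^ j * (n.choose j : k) := by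
    rw [Finset.sum_congr rfl hterm, ← Finset.mul_sum]
    have : ∑ p ∈ Finset.range (j + 1), (j.choose p : k) = (2 : k) ^ j := by
      rw [← Nat.cast_sum]
      rw [Nat.sum_range_choose]
      push_cast
      ring
    rw [this, mul_comm]
  have e1 : Finset.range (j + 1) = insert 0 (Finset.Icc 1 j) := by
    ext p; simp; omega
  have e2 : Finset.Icc 1 j = insert j (Finset.Icc 1 (j - 1)) := by
    ext p; simp; omega
  rw [e1, Finset.sum_insert (by simp), e2, Finset.sum_insert (by simp; omega)] at hfull
  have f0 : ((n - 0).choose (n - j) : k) * (n.choose 0 : k) = (n.choose j : k) := by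
    simp [Nat.choose_symm hj]
  have fj : ((n - j).choose (n - j) : k) * (n.choose j : k) = (n.choose j : k) := by
    simp
  rw [f0, fj] at hfull
  linear_combination hfull

/-- Polynomial-identity extraction: from the one-parameter family of relations we
get the coefficient relations. -/
lemma poly_extract {k : Type*} [Field k] [CharZero k] (n : ℕ) (s : ℕ → k)
    (Rel : ∀ t : k, ∑ p ∈ Finset.range (n + 1), t ^ (n - p) * s p
        + ∑ p ∈ Finset.Icc 1 n, (1 + t) ^ (n - p) * s p
        = ∑ p ∈ Finset.range (n + 1), 2 ^ p * t ^ (n - p) * s p) :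
    ∀ j, 1 ≤ j → j ≤ n →
      ∑ p ∈ Finset.Icc 1 n, ((n - p).choose (n - j) : k) * s p = ((2 : k) ^ j - 1) * s j := by
  set P : Polynomial k :=
    (∑ p ∈ Finset.range (n + 1), Polynomial.C (s p) * Polynomial.X ^ (n - p))
    + (∑ p ∈ Finset.Icc 1 n, Polynomial.C (s p) * (Polynomial.X + 1) ^ (n - p))
    - (∑ p ∈ Finset.range (n + 1), Polynomial.C (2 ^ p * s p) * Polynomial.X ^ (n - p))
    with hPdef
  have hP : P = 0 := by
    apply Polynomial.funext
    intro t
    have hrel := Rel t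
    simp only [add_comm (1 : k) t] at hrel
    simp only [hPdef, Polynomial.eval_sub, Polynomial.eval_add, Polynomial.eval_finset_sum,
      Polynomial.eval_mul, Polynomial.eval_pow, Polynomial.eval_C, Polynomial.eval_X,
      Polynomial.eval_one, Polynomial.eval_zero]
    have e1 : ∑ p ∈ Finset.range (n + 1), s p * t ^ (n - p)
        = ∑ p ∈ Finset.range (n + 1), t ^ (n - p) * s p :=
      Finset.sum_congr rfl fun p _ => mul_comm _ _
    have e2 : ∑ p ∈ Finset.Icc 1 n, s p * (t + 1) ^ (n - p)
        = ∑ p ∈ Finset.Icc 1 n, (t + 1) ^ (n - p) * s p :=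
      Finset.sum_congr rfl fun p _ => mul_comm _ _
    have e3 : ∑ p ∈ Finset.range (n + 1), 2 ^ p * s p * t ^ (n - p)
        = ∑ p ∈ Finset.range (n + 1), 2 ^ p * t ^ (n - p) * s p :=
      Finset.sum_congr rfl fun p _ => by ring
    rw [e1, e2, e3, hrel]
    ring
  intro j hj1 hjn
  have hc : P.coeff (n - j) = 0 := by rw [hP]; simp
  rw [hPdef] at hc
  simp only [Polynomial.coeff_sub, Polynomial.coeff_add, Polynomial.finset_sum_coeff,
    Polynomial.coeff_C_mul, Polynomial.coeff_X_pow, Polynomial.coeff_X_add_one_pow] at hc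
  have d1 : ∑ p ∈ Finset.range (n + 1), s p * (if n - j = n - p then (1 : k) else 0) = s j := by
    rw [Finset.sum_eq_single j]
    · simp
    · intro p hp hpj
      have : ¬ (n - j = n - p) := by
        have := Nat.lt_succ_iff.mp (Finset.mem_range.mp hp); omega
      simp [this]
    · intro hj; exact absurd (Finset.mem_range.mpr (by omega)) hj
  have d3 : ∑ p ∈ Finset.range (n + 1), 2 ^ p * s p * (if n - j = n - p then (1 : k) else 0)
      = 2 ^ j * s j := by
    rw [Finset.sum_eq_single j]
    · simp
    · intro p hp hpj
      have : ¬ (n - j = n - p) := by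
        have := Nat.lt_succ_iff.mp (Finset.mem_range.mp hp); omega
      simp [this]
    · intro hj; exact absurd (Finset.mem_range.mpr (by omega)) hj
  rw [d1, d3] at hc
  have : ∑ p ∈ Finset.Icc 1 n, s p * ((n - p).choose (n - j) : k)
      = ∑ p ∈ Finset.Icc 1 n, ((n - p).choose (n - j) : k) * s p :=
    Finset.sum_congr rfl fun p _ => mul_comm _ _
  rw [this] at hc
  linear_combination hc

/-- Solving the triangular recurrence coming from the coefficient relations. -/
lemma solve_rec {k : Type*} [Field k] [CharZero k] (n : ℕ) (s : ℕ → k)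
    (R2 : ∀ j, 1 ≤ j → j ≤ n →
      ∑ p ∈ Finset.Icc 1 n, ((n - p).choose (n - j) : k) * s p = ((2 : k) ^ j - 1) * s j) :
    ∀ j, 1 ≤ j → j ≤ n → (n : k) * s j = (n.choose j : k) * s 1 := by
  intro j
  induction j using Nat.strong_induction_on with
  | _ j IH =>
    intro hj1 hjn
    rcases eq_or_lt_of_le hj1 with h1 | h2
    · rw [← h1]; rw [Nat.choose_one_right]
    · have hj2 : 2 ≤ j := h2
      have htrunc : ∑ p ∈ Finset.Icc 1 n, ((n - p).choose (n - j) : k) * s p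
          = ∑ p ∈ Finset.Icc 1 j, ((n - p).choose (n - j) : k) * s p := by
        symm
        apply Finset.sum_subset
        · intro p hp; simp at hp ⊢; omega
        · intro p hp hpj
          simp only [Finset.mem_Icc] at hp hpj
          have : n - p < n - j := by omega
          rw [Nat.choose_eq_zero_of_lt this]
          simp
      have hsplit : Finset.Icc 1 j = insert j (Finset.Icc 1 (j - 1)) := by
        ext p; simp; omega
      have hrel := R2 j hj1 hjn
      rw [htrunc, hsplit, Finset.sum_insert (by simp; omega)] at hrel
      rw [Nat.choose_self] at hrel
      have hrel2 : ∑ p ∈ Finset.Icc 1 (j - 1), ((n - p).choose (n - j) : k) * s p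
          = ((2 : k) ^ j - 2) * s j := by linear_combination hrel
      have hmul : ((2 : k) ^ j - 2) * ((n : k) * s j)
          = ((2 : k) ^ j - 2) * ((n.choose j : k) * s 1) := by
        calc ((2 : k) ^ j - 2) * ((n : k) * s j)
            = (n : k) * (((2 : k) ^ j - 2) * s j) := by ring
          _ = (n : k) * ∑ p ∈ Finset.Icc 1 (j - 1), ((n - p).choose (n - j) : k) * s p := by
              rw [hrel2]
          _ = ∑ p ∈ Finset.Icc 1 (j - 1), ((n - p).choose (n - j) : k) * ((n : k) * s p) := by
              rw [Finset.mul_sum]; exact Finset.sum_congr rfl fun p _ => by ring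
          _ = ∑ p ∈ Finset.Icc 1 (j - 1), ((n - p).choose (n - j) : k) * (n.choose p : k) * s 1 := by
              refine Finset.sum_congr rfl fun p hp => ?_
              simp only [Finset.mem_Icc] at hp
              rw [IH p (by omega) hp.1 (by omega)]
              ring
          _ = (∑ p ∈ Finset.Icc 1 (j - 1), ((n - p).choose (n - j) : k) * (n.choose p : k)) * s 1 := by
              rw [Finset.sum_mul]
          _ = ((2 : k) ^ j - 2) * ((n.choose j : k) * s 1) := by
              rw [key_ident n j hj1 hjn]; ring
      have hne : ((2 : k) ^ j - 2) ≠ 0 := by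
        have h4 : (4 : ℕ) ≤ 2 ^ j := by
          calc (4 : ℕ) = 2 ^ 2 := by norm_num
            _ ≤ 2 ^ j := Nat.pow_le_pow_right (by norm_num) hj2
        have : ((2 : k) ^ j) = ((2 ^ j : ℕ) : k) := by push_cast; ring
        rw [this, sub_ne_zero]
        intro hcontr
        have h2' : (2 ^ j : ℕ) = (2 : ℕ) := by exact_mod_cast hcontr
        omega
      exact mul_left_cancel₀ hne hmul

end AuxCombinatorics

section AuxHopf
variable {k H : Type*} [CommSemiring k] [Semiring H] [Bialgebra k H]

lemma conv_apply (f g : H →ₗ[k] k) (x : H) :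
    conv f g x = LinearMap.mul' k k (TensorProduct.map f g (Coalgebra.comul x)) := rfl

/-- Associativity of the convolution product. -/
lemma conv_assoc (f g h : H →ₗ[k] k) : conv (conv f g) h = conv f (conv g h) := by
  ext x
  have h1 : TensorProduct.map (conv f g) h
      = (LinearMap.mul' k k).rTensor k ∘ₗ TensorProduct.map (TensorProduct.map f g) h
        ∘ₗ (Coalgebra.comul (R := k) (A := H)).rTensor H := by
    unfold conv
    rw [LinearMap.rTensor, LinearMap.rTensor, ← TensorProduct.map_comp, ← TensorProduct.map_comp]
    simp
  have h2 : TensorProduct.map f (conv g h)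
      = (LinearMap.mul' k k).lTensor k ∘ₗ TensorProduct.map f (TensorProduct.map g h)
        ∘ₗ (Coalgebra.comul (R := k) (A := H)).lTensor H := by
    unfold conv
    rw [LinearMap.lTensor, LinearMap.lTensor, ← TensorProduct.map_comp, ← TensorProduct.map_comp]
    simp
  have key : (LinearMap.mul' k k) ∘ₗ (LinearMap.mul' k k).rTensor k
        ∘ₗ TensorProduct.map (TensorProduct.map f g) h
      = (LinearMap.mul' k k) ∘ₗ (LinearMap.mul' k k).lTensor k
        ∘ₗ TensorProduct.map f (TensorProduct.map g h)
        ∘ₗ (TensorProduct.assoc k H H H).toLinearMap := by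
    apply TensorProduct.ext_threefold
    intro a b c
    simp [LinearMap.mul'_apply, mul_assoc]
  rw [conv_apply, conv_apply, h1, h2]
  simp only [LinearMap.comp_apply]
  have hk := LinearMap.congr_fun key ((Coalgebra.comul (R := k)).rTensor H (Coalgebra.comul x))
  simp only [LinearMap.comp_apply, LinearEquiv.coe_coe] at hk
  rw [hk, Coalgebra.coassoc_apply]

end AuxHopf

section AuxGraded
variable {k H : Type*} [Field k] [CharZero k] [Ring H] [HopfAlgebra k H]
variable (G : GradedConnected k H)

/-- The degree-scaling map `D t`, acting by `t^n` on the `n`-th graded piece. -/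
noncomputable def Dmap (t : k) : H →ₗ[k] H :=
  letI := G.internal.chooseDecomposition
  (DirectSum.toModule k ℕ H fun n => t ^ n • (G.grading n).subtype) ∘ₗ
    (DirectSum.decomposeLinearEquiv G.grading).toLinearMap

lemma Dmap_of_mem {t : k} {m : ℕ} {y : H} (hy : y ∈ G.grading m) :
    Dmap G t y = t ^ m • y := by
  letI := G.internal.chooseDecomposition
  unfold Dmap
  simp only [LinearMap.comp_apply, LinearEquiv.coe_coe, DirectSum.decomposeLinearEquiv_apply]
  rw [DirectSum.decompose_of_mem _ hy, ← DirectSum.lof_eq_of k,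
    DirectSum.toModule_lof (R := k)]
  simp

/-- components: if `∑_{p ∈ range(n+1)} w p = x` with `w p ∈ gr (n-p)` and `x ∈ gr n`,
then `w 0 = x`. -/
lemma first_component {n : ℕ} {x : H} (hx : x ∈ G.grading n) (w : ℕ → H)
    (hw : ∀ p ∈ Finset.range (n + 1), w p ∈ G.grading (n - p))
    (hsum : ∑ p ∈ Finset.range (n + 1), w p = x) : w 0 = x := by
  letI := G.internal.chooseDecomposition
  have key : ((DirectSum.decompose G.grading (∑ p ∈ Finset.range (n + 1), w p)) n : H) = w 0 := by
    rw [DirectSum.decompose_sum, DFinsupp.finset_sum_apply, AddSubmonoidClass.coe_finset_sum]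
    rw [Finset.sum_eq_single 0]
    · exact DirectSum.decompose_of_mem_same _ (hw 0 (by simp))
    · intro p hp hp0
      have hpn : p ≤ n := Nat.lt_succ_iff.mp (Finset.mem_range.mp hp)
      have hne : n - p ≠ n := by omega
      rw [DirectSum.decompose_of_mem_ne _ (hw p hp) hne]
    · simp
  rw [hsum, DirectSum.decompose_of_mem_same _ hx] at key
  exact key.symm

lemma last_component {n : ℕ} {x : H} (hx : x ∈ G.grading n) (w : ℕ → H)
    (hw : ∀ p ∈ Finset.range (n + 1), w p ∈ G.grading p)
    (hsum : ∑ p ∈ Finset.range (n + 1), w p = x) : w n = x := by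
  letI := G.internal.chooseDecomposition
  have key : ((DirectSum.decompose G.grading (∑ p ∈ Finset.range (n + 1), w p)) n : H) = w n := by
    rw [DirectSum.decompose_sum, DFinsupp.finset_sum_apply, AddSubmonoidClass.coe_finset_sum]
    rw [Finset.sum_eq_single n]
    · exact DirectSum.decompose_of_mem_same _ (hw n (by simp))
    · intro p hp hpn
      rw [DirectSum.decompose_of_mem_ne _ (hw p hp) hpn]
    · simp
  rw [hsum, DirectSum.decompose_of_mem_same _ hx] at key
  exact key.symm

/-- `Φ f g = mul ∘ (f ⊗ g) : H ⊗ H → k`. -/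
noncomputable def Phi (f g : H →ₗ[k] k) : H ⊗[k] H →ₗ[k] k :=
  LinearMap.mul' k k ∘ₗ TensorProduct.map f g

lemma Phi_tmul (f g : H →ₗ[k] k) (a b : H) : Phi f g (a ⊗ₜ b) = f a * g b := by
  simp [Phi, LinearMap.mul'_apply]

lemma conv_eq_Phi (f g : H →ₗ[k] k) (x : H) : conv f g x = Phi f g (Coalgebra.comul x) := rfl

/-- evaluation of `Φ f g` on a tensor in `gr p ⊗ gr m`, when `f`, `g` scale `q`. -/
lemma Phi_eval (q : H →ₗ[k] k) {p m : ℕ} {A B : k} {f g : H →ₗ[k] k}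
    (hf : ∀ y ∈ G.grading p, f y = A * q y) (hg : ∀ y ∈ G.grading m, g y = B * q y)
    {T : H ⊗[k] H}
    (hT : T ∈ LinearMap.range (TensorProduct.mapIncl (G.grading p) (G.grading m))) :
    Phi f g T = A * B * Phi q q T := by
  obtain ⟨t, rfl⟩ := hT
  induction t with
  | zero => simp
  | tmul a b =>
      simp only [TensorProduct.mapIncl, TensorProduct.map_tmul, Submodule.coe_subtype, Phi_tmul]
      rw [hf a a.2, hg b b.2]
      ring
  | add u v hu hv => simp only [map_add, hu, hv]; ring

/-- elements of the image of `gr 0 ⊗ gr m` have the form `1 ⊗ z`. -/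
lemma tensor_zero_left {m : ℕ} {T : H ⊗[k] H}
    (hT : T ∈ LinearMap.range (TensorProduct.mapIncl (G.grading 0) (G.grading m))) :
    ∃ z ∈ G.grading m, T = (1 : H) ⊗ₜ[k] z := by
  obtain ⟨t, rfl⟩ := hT
  induction t with
  | zero => exact ⟨0, Submodule.zero_mem _, by simp⟩
  | tmul a b =>
      have ha : (a : H) ∈ Submodule.span k {(1 : H)} := by rw [← G.connected]; exact a.2
      obtain ⟨c, hc⟩ := Submodule.mem_span_singleton.mp ha
      refine ⟨c • (b : H), Submodule.smul_mem _ _ b.2, ?_⟩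
      show (a : H) ⊗ₜ[k] (b : H) = _
      rw [← hc, TensorProduct.smul_tmul]
  | add u v hu hv =>
      obtain ⟨z1, hz1, e1⟩ := hu
      obtain ⟨z2, hz2, e2⟩ := hv
      refine ⟨z1 + z2, Submodule.add_mem _ hz1 hz2, ?_⟩
      rw [map_add, e1, e2, TensorProduct.tmul_add]

lemma tensor_zero_right {p : ℕ} {T : H ⊗[k] H}
    (hT : T ∈ LinearMap.range (TensorProduct.mapIncl (G.grading p) (G.grading 0))) :
    ∃ z ∈ G.grading p, T = z ⊗ₜ[k] (1 : H) := by
  obtain ⟨t, rfl⟩ := hT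
  induction t with
  | zero => exact ⟨0, Submodule.zero_mem _, by simp⟩
  | tmul a b =>
      have hb : (b : H) ∈ Submodule.span k {(1 : H)} := by rw [← G.connected]; exact b.2
      obtain ⟨c, hc⟩ := Submodule.mem_span_singleton.mp hb
      refine ⟨c • (a : H), Submodule.smul_mem _ _ a.2, ?_⟩
      show (a : H) ⊗ₜ[k] (b : H) = _
      rw [← hc, ← TensorProduct.smul_tmul]
  | add u v hu hv =>
      obtain ⟨z1, hz1, e1⟩ := hu
      obtain ⟨z2, hz2, e2⟩ := hv
      refine ⟨z1 + z2, Submodule.add_mem _ hz1 hz2, ?_⟩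
      rw [map_add, e1, e2, TensorProduct.add_tmul]

/-- apply the counit to the left factor. -/
noncomputable def epsL : H ⊗[k] H →ₗ[k] H :=
  (TensorProduct.lid k H).toLinearMap ∘ₗ (Coalgebra.counit (R := k)).rTensor H

/-- apply the counit to the right factor. -/
noncomputable def epsR : H ⊗[k] H →ₗ[k] H :=
  (TensorProduct.rid k H).toLinearMap ∘ₗ (Coalgebra.counit (R := k)).lTensor H

lemma epsL_comul (x : H) : epsL (Coalgebra.comul (R := k) x) = x := by
  simp [epsL, Coalgebra.rTensor_counit_comul]

lemma epsR_comul (x : H) : epsR (Coalgebra.comul (R := k) x) = x := by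
  simp [epsR, Coalgebra.lTensor_counit_comul]

lemma epsL_mem {p m : ℕ} {T : H ⊗[k] H}
    (hT : T ∈ LinearMap.range (TensorProduct.mapIncl (G.grading p) (G.grading m))) :
    epsL T ∈ G.grading m := by
  obtain ⟨t, rfl⟩ := hT
  induction t with
  | zero => simp
  | tmul a b =>
      simp only [TensorProduct.mapIncl, TensorProduct.map_tmul, Submodule.coe_subtype, epsL,
        LinearMap.comp_apply, LinearMap.rTensor_tmul, LinearEquiv.coe_coe, TensorProduct.lid_tmul]
      exact Submodule.smul_mem _ _ b.2
  | add u v hu hv => rw [map_add, map_add]; exact Submodule.add_mem _ hu hv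

lemma epsR_mem {p m : ℕ} {T : H ⊗[k] H}
    (hT : T ∈ LinearMap.range (TensorProduct.mapIncl (G.grading p) (G.grading m))) :
    epsR T ∈ G.grading p := by
  obtain ⟨t, rfl⟩ := hT
  induction t with
  | zero => simp
  | tmul a b =>
      simp only [TensorProduct.mapIncl, TensorProduct.map_tmul, Submodule.coe_subtype, epsR,
        LinearMap.comp_apply, LinearMap.lTensor_tmul, LinearEquiv.coe_coe, TensorProduct.rid_tmul]
      exact Submodule.smul_mem _ _ a.2
  | add u v hu hv => rw [map_add, map_add]; exact Submodule.add_mem _ hu hv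

/-- The main induction: the Hopf-algebraic binomial formula. -/
lemma main_binomial (q : H →ₗ[k] k) (hq1 : q 1 = 1)
    (hqconv : ∀ n : ℕ, ∀ x ∈ G.grading n, conv q q x = 2 ^ n * q x) :
    ∀ n : ℕ, ∀ x ∈ G.grading n, ∀ (h k' : k) (f g : H →ₗ[k] k),
      (∀ m : ℕ, ∀ y ∈ G.grading m, f y = h ^ m * q y) →
      (∀ m : ℕ, ∀ y ∈ G.grading m, g y = k' ^ m * q y) →
      conv f g x = (h + k') ^ n * q x := by
  intro n
  induction n using Nat.strong_induction_on with
  | _ n IH =>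
  intro x hx h k' f g hf hg
  obtain ⟨μ, hμ⟩ := (Submodule.mem_iSup_finset_iff_exists_sum _ _).mp (G.comul_mem hx)
  set T : ℕ → H ⊗[k] H := fun p => (μ p : H ⊗[k] H) with hTdef
  have hT : ∀ p, T p ∈ LinearMap.range
      (TensorProduct.mapIncl (G.grading p) (G.grading (n - p))) := fun p => (μ p).2
  have hμsum : ∑ p ∈ Finset.range (n + 1), T p = Coalgebra.comul x := hμ
  set s : ℕ → k := fun p => Phi q q (T p) with hsdef
  have hconv : ∀ (f' g' : H →ₗ[k] k),
      conv f' g' x = ∑ p ∈ Finset.range (n + 1), Phi f' g' (T p) := by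
    intro f' g'
    rw [conv_eq_Phi, ← hμsum, map_sum]
  -- T 0 = 1 ⊗ x
  obtain ⟨z, hzmem, hz⟩ := tensor_zero_left G (hT 0)
  have hzx : z = x := by
    have h0 : epsL (T 0) = z := by rw [hz]; simp [epsL, Bialgebra.counit_one]
    rw [← h0]
    apply first_component G hx (fun p => epsL (T p)) (fun p hp => epsL_mem G (hT p))
    rw [← map_sum, hμsum, epsL_comul]
  rw [hzx] at hz
  have hs0 : s 0 = q x := by
    show Phi q q (T 0) = q x
    rw [hz, Phi_tmul, hq1, one_mul]
  have hqhom : ∀ m : ℕ, ∀ y ∈ G.grading m, q y = (1 : k) ^ m * q y := by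
    intro m y hy; rw [one_pow, one_mul]
  -- all coefficients
  have hsall : ∀ p ∈ Finset.range (n + 1), s p = (n.choose p : k) * q x := by
    rcases Nat.eq_zero_or_pos n with hn0 | hn1
    · subst hn0
      intro p hp
      have hp0 : p = 0 := by have := Finset.mem_range.mp hp; omega
      subst hp0
      simpa using hs0
    · -- T n = x ⊗ 1
      have hTn := hT n
      rw [Nat.sub_self] at hTn
      obtain ⟨z', hz'mem, hz'⟩ := tensor_zero_right G hTn
      have hz'x : z' = x := by
        have h0 : epsR (T n) = z' := by rw [hz']; simp [epsR, Bialgebra.counit_one]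
        rw [← h0]
        apply last_component G hx (fun p => epsR (T p)) (fun p hp => epsR_mem G (hT p))
        rw [← map_sum, hμsum, epsR_comul]
      have hsn : s n = q x := by
        show Phi q q (T n) = q x
        rw [hz', hz'x, Phi_tmul, hq1, mul_one]
      -- the one-parameter relation coming from associativity
      have Rel : ∀ t : k, ∑ p ∈ Finset.range (n + 1), t ^ (n - p) * s p
          + ∑ p ∈ Finset.Icc 1 n, (1 + t) ^ (n - p) * s p
          = ∑ p ∈ Finset.range (n + 1), 2 ^ p * t ^ (n - p) * s p := by
        intro t
        set Qt : H →ₗ[k] k := q ∘ₗ Dmap G t with hQt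
        have hQthom : ∀ m : ℕ, ∀ y ∈ G.grading m, Qt y = t ^ m * q y := by
          intro m y hy
          rw [hQt, LinearMap.comp_apply, Dmap_of_mem G hy, map_smul, smul_eq_mul]
        have hinner : conv q Qt x = ∑ p ∈ Finset.range (n + 1), t ^ (n - p) * s p := by
          rw [hconv]
          refine Finset.sum_congr rfl fun p hp => ?_
          have heq := Phi_eval G q (hqhom p) (hQthom (n - p)) (hT p)
          rw [one_pow, one_mul] at heq
          exact heq
        have hsplit : Finset.range (n + 1) = insert 0 (Finset.Icc 1 n) := by
          ext p; simp; omega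
        have hmid : ∀ p ∈ Finset.Icc 1 n,
            Phi q (conv q Qt) (T p) = (1 + t) ^ (n - p) * s p := by
          intro p hp
          simp only [Finset.mem_Icc] at hp
          have hlt : n - p < n := by omega
          have hcq : ∀ y ∈ G.grading (n - p), conv q Qt y = (1 + t) ^ (n - p) * q y :=
            fun y hy => IH (n - p) hlt y hy 1 t q Qt hqhom hQthom
          have heq := Phi_eval G q (hqhom p) hcq (hT p)
          rw [one_pow, one_mul] at heq
          exact heq
        have hL : conv q (conv q Qt) x
            = ∑ p ∈ Finset.range (n + 1), t ^ (n - p) * s p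
              + ∑ p ∈ Finset.Icc 1 n, (1 + t) ^ (n - p) * s p := by
          calc conv q (conv q Qt) x
              = ∑ p ∈ Finset.range (n + 1), Phi q (conv q Qt) (T p) := hconv _ _
            _ = Phi q (conv q Qt) (T 0)
                + ∑ p ∈ Finset.Icc 1 n, Phi q (conv q Qt) (T p) := by
                rw [hsplit, Finset.sum_insert (by simp)]
            _ = (∑ p ∈ Finset.range (n + 1), t ^ (n - p) * s p)
                + ∑ p ∈ Finset.Icc 1 n, (1 + t) ^ (n - p) * s p := by
                rw [hz, Phi_tmul, hq1, one_mul, hinner, Finset.sum_congr rfl hmid]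
        have hR : conv (conv q q) Qt x
            = ∑ p ∈ Finset.range (n + 1), 2 ^ p * t ^ (n - p) * s p := by
          rw [hconv]
          refine Finset.sum_congr rfl fun p hp => ?_
          have hcc : ∀ y ∈ G.grading p, conv q q y = (2 : k) ^ p * q y :=
            fun y hy => hqconv p y hy
          exact Phi_eval G q hcc (hQthom (n - p)) (hT p)
        rw [← hL, ← hR, ← conv_assoc]
      have R2 := poly_extract n s Rel
      have hclaim := solve_rec n s R2
      have hs1 : s 1 = (n : k) * q x := by
        have hcn := hclaim n hn1 le_rfl
        rw [Nat.choose_self, hsn, Nat.cast_one, one_mul] at hcn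
        exact hcn.symm
      intro p hp
      rcases Nat.eq_zero_or_pos p with hp0 | hp1
      · subst hp0; simpa using hs0
      · have hpn : p ≤ n := Nat.lt_succ_iff.mp (Finset.mem_range.mp hp)
        have hcp := hclaim p hp1 hpn
        rw [hs1] at hcp
        have hne : (n : k) ≠ 0 := Nat.cast_ne_zero.mpr (by omega)
        apply mul_left_cancel₀ hne
        rw [hcp]
        ring
  -- conclusion
  rw [hconv f g]
  have hterm : ∀ p ∈ Finset.range (n + 1),
      Phi f g (T p) = h ^ p * k' ^ (n - p) * s p :=
    fun p _ => Phi_eval G q (hf p) (hg (n - p)) (hT p)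
  have hterm2 : ∀ p ∈ Finset.range (n + 1),
      h ^ p * k' ^ (n - p) * s p = h ^ p * k' ^ (n - p) * ((n.choose p : k) * q x) :=
    fun p hp => by rw [hsall p hp]
  rw [Finset.sum_congr rfl hterm, Finset.sum_congr rfl hterm2, add_pow, Finset.sum_mul]
  exact Finset.sum_congr rfl fun p hp => by ring

end AuxGraded

/-- Hopf-algebraic binomial formula: for `q_h(y) := h^{|y|} q(y)` one has
`(q_h ⋆ q_{k'})(x) = (h+k')^{|x|} q(x)` on homogeneous elements. -/
theorem stmt4 {k H : Type*} [Field k] [CharZero k] [Ring H] [HopfAlgebra k H]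
    (G : GradedConnected k H)
    (α : ↥(G.grading 1) →ₗ[k] k) (hα : α ≠ 0)
    (q : H →ₗ[k] k)
    (hq1 : q 1 = 1)
    (hqα : ∀ x : ↥(G.grading 1), q x = α x)
    (hqconv : ∀ n : ℕ, ∀ x ∈ G.grading n, conv q q x = 2 ^ n * q x)
    (h k' : k) (qh qk : H →ₗ[k] k)
    (hqh : ∀ n : ℕ, ∀ y ∈ G.grading n, qh y = h ^ n * q y)
    (hqk : ∀ n : ℕ, ∀ y ∈ G.grading n, qk y = k' ^ n * q y) :
    ∀ n : ℕ, ∀ x ∈ G.grading n, conv qh qk x = (h + k') ^ n * q x := by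
  intro n x hx
  exact main_binomial G q hq1 hqconv n x hx h k' qh qk hqh hqk
end

section
/- Let (H, B) be a combinatorial Hopf algebra over ℝ with inverse-factorial character q normalized so that q(τ) = 1 for every τ ∈ B₁. Then for every x ∈ B, q(x) is a nonnegative rational number. -/
open TensorProduct

/-- A combinatorial Hopf algebra over `ℝ`: a graded connected Hopf algebra together with a
basis `b` of homogeneous elements whose graded pieces have at most exponentially growing
(finite) cardinality, and whose structure constants for the product and the coproduct are
nonnegative integers. -/
structure CombinatorialHopf (H : Type*) [Ring H] [HopfAlgebra ℝ H] (ι : Type*) extends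
    GradedConnected ℝ H where
  b : Module.Basis ι ℝ H
  deg : ι → ℕ
  homog : ∀ i : ι, b i ∈ grading (deg i)
  fin : ∀ n : ℕ, Finite {i : ι // deg i = n}
  growth : ∃ B C : ℝ, 0 < B ∧ 0 < C ∧
    ∀ n : ℕ, (Nat.card {i : ι // deg i = n} : ℝ) ≤ B * C ^ n
  mul_int : ∀ i j ρ : ι, ∃ m : ℕ, (b.repr (b i * b j)) ρ = (m : ℝ)
  comul_int : ∀ ρ i j : ι, ∃ m : ℕ,
    ((b.tensorProduct b).repr (Coalgebra.comul (R := ℝ) (b ρ))) (i, j) = (m : ℝ)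

/-- A combinatorial Hopf algebra is non-degenerate if the basis elements which are primitive
are exactly those of degree one (`B ∩ Prim(H) = B₁`). -/
def CombinatorialHopf.Nondegenerate {H : Type*} [Ring H] [HopfAlgebra ℝ H] {ι : Type*}
    (Ch : CombinatorialHopf H ι) : Prop :=
  ∀ i : ι,
    (Coalgebra.comul (R := ℝ) (Ch.b i) = Ch.b i ⊗ₜ[ℝ] 1 + 1 ⊗ₜ[ℝ] Ch.b i) ↔ Ch.deg i = 1

/-- A `γ`-regular `H`-rough path for a combinatorial Hopf algebra `(H, B)`. -/
def IsRoughPath {H : Type*} [CommRing H] [HopfAlgebra ℝ H] {ι : Type*}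
    (Ch : CombinatorialHopf H ι) (γ : ℝ) (X : ℝ → ℝ → (H →ₗ[ℝ] ℝ)) : Prop :=
  (∀ s t : ℝ, X s t 1 = 1) ∧
  (∀ s t : ℝ, ∀ x y : H, X s t (x * y) = X s t x * X s t y) ∧
  (∀ s u t : ℝ, ∀ x : H, conv (X s u) (X u t) x = X s t x) ∧
  (∀ i : ι, ∃ C : ℝ, ∀ s t : ℝ, s ≠ t →
    |X s t (Ch.b i)| ≤ C * |t - s| ^ (γ * (Ch.deg i : ℝ)))

/-- A `γ`-regular `N`-truncated `H`-rough path: the defining properties are only required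
in degrees at most `N`. -/
def IsTruncRoughPath {H : Type*} [CommRing H] [HopfAlgebra ℝ H] {ι : Type*}
    (Ch : CombinatorialHopf H ι) (γ : ℝ) (N : ℕ) (X : ℝ → ℝ → (H →ₗ[ℝ] ℝ)) : Prop :=
  (∀ s t : ℝ, X s t 1 = 1) ∧
  (∀ s t : ℝ, ∀ p q : ℕ, p + q ≤ N → ∀ x ∈ Ch.grading p, ∀ y ∈ Ch.grading q,
    X s t (x * y) = X s t x * X s t y) ∧
  (∀ s u t : ℝ, ∀ n : ℕ, n ≤ N → ∀ x ∈ Ch.grading n,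
    conv (X s u) (X u t) x = X s t x) ∧
  (∀ i : ι, Ch.deg i ≤ N → ∃ C : ℝ, ∀ s t : ℝ, s ≠ t →
    |X s t (Ch.b i)| ≤ C * |t - s| ^ (γ * (Ch.deg i : ℝ)))

section Aux

open TensorProduct

/-- Projection onto the degree `n` component of a graded connected bialgebra. -/
noncomputable def GradedConnected.proj {k H : Type*} [CommSemiring k] [Semiring H]
    [Bialgebra k H] (G : GradedConnected k H) (n : ℕ) : H →ₗ[k] H :=
  (G.grading n).subtype ∘ₗ (DirectSum.component k ℕ (fun m => G.grading m) n) ∘ₗ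
    (LinearEquiv.ofBijective (DirectSum.coeLinearMap G.grading) G.internal).symm.toLinearMap

theorem GradedConnected.proj_of_mem {k H : Type*} [CommSemiring k] [Semiring H]
    [Bialgebra k H] (G : GradedConnected k H) {n : ℕ} {x : H} (hx : x ∈ G.grading n) :
    G.proj n x = x := by
  have h1 : (DirectSum.component k ℕ (fun m => G.grading m) n)
      ((LinearEquiv.ofBijective (DirectSum.coeLinearMap G.grading) G.internal).symm x)
      = ⟨x, hx⟩ := G.internal.ofBijective_coeLinearMap_of_mem hx
  simp only [GradedConnected.proj, LinearMap.comp_apply, LinearEquiv.coe_coe]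
  rw [h1]; rfl

theorem GradedConnected.proj_of_mem_ne {k H : Type*} [CommSemiring k] [Semiring H]
    [Bialgebra k H] (G : GradedConnected k H) {m n : ℕ} (hmn : m ≠ n) {x : H}
    (hx : x ∈ G.grading m) : G.proj n x = 0 := by
  have h1 : (DirectSum.component k ℕ (fun m => G.grading m) n)
      ((LinearEquiv.ofBijective (DirectSum.coeLinearMap G.grading) G.internal).symm x)
      = 0 := G.internal.ofBijective_coeLinearMap_of_mem_ne hmn hx
  simp only [GradedConnected.proj, LinearMap.comp_apply, LinearEquiv.coe_coe]
  rw [h1]; rfl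

variable {H : Type*} [Ring H] [HopfAlgebra ℝ H] {ι : Type*} (Ch : CombinatorialHopf H ι)

/-- A homogeneous element of degree `n` is supported on basis elements of degree `n`. -/
theorem CombinatorialHopf.repr_deg {n : ℕ} {x : H} (hx : x ∈ Ch.grading n) (i : ι)
    (hi : Ch.b.repr x i ≠ 0) : Ch.deg i = n := by
  by_contra hne
  have h0 : Ch.b.repr (Ch.toGradedConnected.proj (Ch.deg i) x) i = 0 := by
    rw [Ch.toGradedConnected.proj_of_mem_ne (fun h => hne h.symm) hx]
    simp
  apply hi
  rw [← h0]
  conv_rhs => rw [← Ch.b.linearCombination_repr x, Finsupp.linearCombination_apply,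
    Finsupp.sum, map_sum, map_sum]
  rw [Finset.sum_apply']
  rw [Finset.sum_eq_single i]
  · rw [map_smul, map_smul, Ch.toGradedConnected.proj_of_mem (Ch.homog i)]
    simp
  · intro j _ hji
    by_cases hdj : Ch.deg j = Ch.deg i
    · rw [map_smul, map_smul, Ch.toGradedConnected.proj_of_mem (hdj ▸ Ch.homog j)]
      simp [Module.Basis.repr_self, Finsupp.single_apply, hji]
    · rw [map_smul, map_smul, Ch.toGradedConnected.proj_of_mem_ne hdj (Ch.homog j)]
      simp
  · intro hni
    simp [Finsupp.notMem_support_iff.mp hni]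
end Aux
section Aux2
open TensorProduct
variable {H : Type*} [Ring H] [HopfAlgebra ℝ H] {ι : Type*} (Ch : CombinatorialHopf H ι)

/-- Degree-zero basis elements are positive natural multiples of the unit. -/
theorem CombinatorialHopf.deg_zero {i : ι} (hi : Ch.deg i = 0) :
    ∃ c : ℕ, 0 < c ∧ Ch.b i = (c : ℝ) • 1 := by
  have hmem : Ch.b i ∈ Submodule.span ℝ {(1 : H)} := by
    have := Ch.homog i
    rwa [hi, Ch.connected] at this
  obtain ⟨a, ha⟩ := Submodule.mem_span_singleton.mp hmem
  have ha0 : a ≠ 0 := by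
    rintro rfl
    exact Ch.b.ne_zero i (by rw [← ha, zero_smul])
  have hsq : Ch.b i * Ch.b i = a • Ch.b i := by
    rw [← ha, smul_mul_assoc, mul_smul_comm, one_mul]
  have hra : Ch.b.repr (Ch.b i * Ch.b i) i = a := by
    rw [hsq, map_smul]
    simp [Module.Basis.repr_self]
  obtain ⟨m, hm⟩ := Ch.mul_int i i i
  refine ⟨m, ?_, ?_⟩
  · rcases Nat.eq_zero_or_pos m with h | h
    · exfalso; apply ha0; rw [← hra, hm, h]; simp
    · exact h
  · rw [← ha, ← hra, hm]

/-- Expand the value of a linear form via the coordinates in a basis. -/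
theorem repr_apply_sum {M' : Type*} [AddCommGroup M'] [Module ℝ M'] {κ : Type*}
    (B : Module.Basis κ ℝ M') (F : M' →ₗ[ℝ] ℝ) (z : M') :
    F z = ∑ p ∈ (B.repr z).support, (B.repr z) p * F (B p) := by
  conv_lhs => rw [← B.linearCombination_repr z]
  rw [Finsupp.linearCombination_apply, Finsupp.sum, map_sum]
  exact Finset.sum_congr rfl fun p _ => by rw [map_smul, smul_eq_mul]

/-- Expansion of the convolution of two linear forms on a basis element. -/
theorem conv_expand (f g : H →ₗ[ℝ] ℝ) (ρ : ι) :
    conv f g (Ch.b ρ) =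
      ∑ p ∈ ((Ch.b.tensorProduct Ch.b).repr (Coalgebra.comul (R := ℝ) (Ch.b ρ))).support,
        ((Ch.b.tensorProduct Ch.b).repr (Coalgebra.comul (R := ℝ) (Ch.b ρ))) p *
          (f (Ch.b p.1) * g (Ch.b p.2)) := by
  have : conv f g (Ch.b ρ) =
      ((LinearMap.mul' ℝ ℝ) ∘ₗ TensorProduct.map f g) (Coalgebra.comul (R := ℝ) (Ch.b ρ)) := rfl
  rw [this, repr_apply_sum (Ch.b.tensorProduct Ch.b)]
  refine Finset.sum_congr rfl fun p _ => ?_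
  rw [Module.Basis.tensorProduct_apply']
  simp [TensorProduct.map_tmul, LinearMap.mul'_apply]

/-- Left counit identity in coordinates. -/
theorem counit_left (φ : H →ₗ[ℝ] ℝ) (ρ : ι) :
    ∑ p ∈ ((Ch.b.tensorProduct Ch.b).repr (Coalgebra.comul (R := ℝ) (Ch.b ρ))).support,
        ((Ch.b.tensorProduct Ch.b).repr (Coalgebra.comul (R := ℝ) (Ch.b ρ))) p *
          (Coalgebra.counit (R := ℝ) (Ch.b p.1) * φ (Ch.b p.2)) = φ (Ch.b ρ) := by
  have key : (φ ∘ₗ (TensorProduct.lid ℝ H).toLinearMap ∘ₗ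
      LinearMap.rTensor H (Coalgebra.counit (R := ℝ)))
      (Coalgebra.comul (R := ℝ) (Ch.b ρ)) = φ (Ch.b ρ) := by
    simp only [LinearMap.comp_apply, LinearEquiv.coe_coe]
    rw [Coalgebra.rTensor_counit_comul]
    simp
  rw [repr_apply_sum (Ch.b.tensorProduct Ch.b)] at key
  rw [← key]
  refine Finset.sum_congr rfl fun p _ => ?_
  rw [Module.Basis.tensorProduct_apply']
  simp [LinearMap.rTensor_tmul, TensorProduct.lid_tmul, smul_eq_mul]

/-- Right counit identity in coordinates. -/
theorem counit_right (φ : H →ₗ[ℝ] ℝ) (ρ : ι) :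
    ∑ p ∈ ((Ch.b.tensorProduct Ch.b).repr (Coalgebra.comul (R := ℝ) (Ch.b ρ))).support,
        ((Ch.b.tensorProduct Ch.b).repr (Coalgebra.comul (R := ℝ) (Ch.b ρ))) p *
          (φ (Ch.b p.1) * Coalgebra.counit (R := ℝ) (Ch.b p.2)) = φ (Ch.b ρ) := by
  have key : (φ ∘ₗ (TensorProduct.rid ℝ H).toLinearMap ∘ₗ
      LinearMap.lTensor H (Coalgebra.counit (R := ℝ)))
      (Coalgebra.comul (R := ℝ) (Ch.b ρ)) = φ (Ch.b ρ) := by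
    simp only [LinearMap.comp_apply, LinearEquiv.coe_coe]
    rw [Coalgebra.lTensor_counit_comul]
    simp
  rw [repr_apply_sum (Ch.b.tensorProduct Ch.b)] at key
  rw [← key]
  refine Finset.sum_congr rfl fun p _ => ?_
  rw [Module.Basis.tensorProduct_apply']
  simp only [LinearMap.comp_apply, LinearMap.lTensor_tmul, LinearEquiv.coe_coe,
    TensorProduct.rid_tmul, map_smul, smul_eq_mul]
  ring

end Aux2
section Aux3
open TensorProduct
variable {H : Type*} [Ring H] [HopfAlgebra ℝ H] {ι : Type*} (Ch : CombinatorialHopf H ι)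

/-- The coproduct of a basis element is supported in complementary degrees. -/
theorem CombinatorialHopf.deg_sum {ρ : ι} {p : ι × ι}
    (hp : p ∈ ((Ch.b.tensorProduct Ch.b).repr (Coalgebra.comul (R := ℝ) (Ch.b ρ))).support) :
    Ch.deg p.1 + Ch.deg p.2 = Ch.deg ρ := by
  by_contra hne
  set n := Ch.deg ρ with hn
  have hker : (⨆ m ∈ Finset.range (n + 1),
      LinearMap.range (TensorProduct.mapIncl (Ch.grading m) (Ch.grading (n - m)))) ≤
      LinearMap.ker ((Ch.b.tensorProduct Ch.b).coord p) := by
    refine iSup_le fun m => iSup_le fun hm => ?_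
    have hmn : m ≤ n := Nat.lt_succ_iff.mp (Finset.mem_range.mp hm)
    rintro z ⟨w, rfl⟩
    rw [LinearMap.mem_ker]
    induction w using TensorProduct.induction_on with
    | zero => rw [map_zero, map_zero]
    | tmul x y =>
      obtain ⟨x, hx⟩ := x
      obtain ⟨y, hy⟩ := y
      rw [TensorProduct.mapIncl, TensorProduct.map_tmul]
      simp only [Submodule.coe_subtype, Module.Basis.coord_apply]
      have hrepr : (Ch.b.tensorProduct Ch.b).repr (x ⊗ₜ[ℝ] y) (p.1, p.2) =
          Ch.b.repr y p.2 • Ch.b.repr x p.1 := Module.Basis.tensorProduct_repr_tmul_apply _ _ _ _ _ _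
      rw [show p = (p.1, p.2) from rfl, hrepr]
      by_cases h1 : Ch.b.repr x p.1 = 0
      · rw [h1, smul_zero]
      by_cases h2 : Ch.b.repr y p.2 = 0
      · rw [h2, zero_smul]
      exfalso
      apply hne
      rw [Ch.repr_deg hx p.1 h1, Ch.repr_deg hy p.2 h2]
      omega
    | add a c iha ihc =>
      rw [map_add, map_add, iha, ihc, add_zero]
  have h0 := LinearMap.mem_ker.mp (hker (Ch.comul_mem (Ch.homog ρ)))
  rw [Module.Basis.coord_apply] at h0
  exact Finsupp.mem_support_iff.mp hp h0

/-- The counit vanishes on basis elements of positive degree. -/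
theorem CombinatorialHopf.counit_zero :
    ∀ n : ℕ, ∀ i : ι, Ch.deg i = n → n ≠ 0 → Coalgebra.counit (R := ℝ) (Ch.b i) = 0 := by
  intro n
  induction n using Nat.strong_induction_on with
  | _ n IH =>
    intro ρ hρ hn0
    set M := (Ch.b.tensorProduct Ch.b).repr (Coalgebra.comul (R := ℝ) (Ch.b ρ)) with hM
    set S := M.support with hS
    set ε : H →ₗ[ℝ] ℝ := Coalgebra.counit (R := ℝ) with hε
    set t : ι × ι → ℝ := fun p => M p * (ε (Ch.b p.1) * ε (Ch.b p.2)) with ht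
    -- full sum
    have hfull : ∑ p ∈ S, t p = ε (Ch.b ρ) := counit_left Ch ε ρ
    -- sum over pairs with first component of degree zero
    have hA : ∑ p ∈ S.filter (fun p => Ch.deg p.1 = 0), t p = ε (Ch.b ρ) := by
      have hid := counit_left Ch (ε ∘ₗ Ch.toGradedConnected.proj n) ρ
      rw [LinearMap.comp_apply, Ch.toGradedConnected.proj_of_mem (hρ ▸ Ch.homog ρ)] at hid
      rw [← hid, Finset.sum_filter]
      refine Finset.sum_congr rfl fun p hp => ?_
      have hd := Ch.deg_sum hp
      by_cases h1 : Ch.deg p.1 = 0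
      · have h2 : Ch.deg p.2 = n := by omega
        rw [if_pos h1, ht]
        simp only [LinearMap.comp_apply]
        rw [Ch.toGradedConnected.proj_of_mem (h2 ▸ Ch.homog p.2)]
      · have h2 : Ch.deg p.2 ≠ n := by omega
        rw [if_neg h1]
        simp only [LinearMap.comp_apply]
        rw [Ch.toGradedConnected.proj_of_mem_ne h2 (Ch.homog p.2)]
        simp
    -- sum over pairs with second component of degree zero
    have hB : ∑ p ∈ S.filter (fun p => Ch.deg p.2 = 0), t p = ε (Ch.b ρ) := by
      have hid := counit_right Ch (ε ∘ₗ Ch.toGradedConnected.proj n) ρ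
      rw [LinearMap.comp_apply, Ch.toGradedConnected.proj_of_mem (hρ ▸ Ch.homog ρ)] at hid
      rw [← hid, Finset.sum_filter]
      refine Finset.sum_congr rfl fun p hp => ?_
      have hd := Ch.deg_sum hp
      by_cases h2 : Ch.deg p.2 = 0
      · have h1 : Ch.deg p.1 = n := by omega
        rw [if_pos h2, ht]
        simp only [LinearMap.comp_apply]
        rw [Ch.toGradedConnected.proj_of_mem (h1 ▸ Ch.homog p.1)]
      · have h1 : Ch.deg p.1 ≠ n := by omega
        rw [if_neg h2]
        simp only [LinearMap.comp_apply]
        rw [Ch.toGradedConnected.proj_of_mem_ne h1 (Ch.homog p.1)]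
        simp
    -- middle terms vanish
    have hsplit : ∑ p ∈ S, t p =
        ∑ p ∈ S.filter (fun p => Ch.deg p.1 = 0), t p +
        ∑ p ∈ S.filter (fun p => ¬ Ch.deg p.1 = 0), t p :=
      (Finset.sum_filter_add_sum_filter_not S _ t).symm
    have hmid : ∑ p ∈ S.filter (fun p => ¬ Ch.deg p.1 = 0), t p =
        ∑ p ∈ S.filter (fun p => Ch.deg p.2 = 0), t p := by
      rw [Finset.sum_filter, Finset.sum_filter]
      refine Finset.sum_congr rfl fun p hp => ?_
      have hd := Ch.deg_sum hp
      by_cases h1 : Ch.deg p.1 = 0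
      · have h2 : Ch.deg p.2 ≠ 0 := by omega
        rw [if_neg (by simp [h1] : ¬¬Ch.deg p.1 = 0), if_neg h2]
      · by_cases h2 : Ch.deg p.2 = 0
        · rw [if_pos h1, if_pos h2]
        · rw [if_pos h1, if_neg h2]
          have hlt : Ch.deg p.1 < n := by omega
          have hz1 := IH (Ch.deg p.1) hlt p.1 rfl h1
          rw [ht]
          simp only []
          rw [show ε (Ch.b p.1) = 0 from hz1]
          ring
    have h2e : ∑ p ∈ S, t p = ε (Ch.b ρ) + ε (Ch.b ρ) := by
      rw [hsplit, hA, hmid, hB]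
    rw [hfull] at h2e
    have hz : ε (Ch.b ρ) = 0 := by linarith
    exact hz
end Aux3
/-- The inverse-factorial character of a combinatorial Hopf algebra takes
nonnegative rational values on all basis elements. -/
theorem stmt7 {H : Type*} [Ring H] [HopfAlgebra ℝ H] {ι : Type*}
    (Ch : CombinatorialHopf H ι)
    (q : H →ₗ[ℝ] ℝ) (hq1 : q 1 = 1)
    (hqB1 : ∀ i : ι, Ch.deg i = 1 → q (Ch.b i) = 1)
    (hqconv : ∀ n : ℕ, ∀ x ∈ Ch.grading n, conv q q x = 2 ^ n * q x) :
    ∀ i : ι, ∃ r : ℚ, 0 ≤ r ∧ q (Ch.b i) = (r : ℝ) := by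
  suffices h : ∀ n : ℕ, ∀ i : ι, Ch.deg i = n → ∃ r : ℚ, 0 ≤ r ∧ q (Ch.b i) = (r : ℝ) by
    intro i; exact h (Ch.deg i) i rfl
  intro n
  induction n using Nat.strong_induction_on with
  | _ n IH =>
  intro ρ hρ
  rcases Nat.lt_or_ge n 2 with hn | hn
  · interval_cases n
    · -- degree zero
      obtain ⟨c, hc, hb⟩ := Ch.deg_zero hρ
      refine ⟨(c : ℚ), by positivity, ?_⟩
      rw [hb, map_smul, hq1, smul_eq_mul, mul_one]
      norm_cast
    · -- degree one
      exact ⟨1, by norm_num, by rw [hqB1 ρ hρ]; norm_num⟩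
  · -- degree at least two
    set M := (Ch.b.tensorProduct Ch.b).repr (Coalgebra.comul (R := ℝ) (Ch.b ρ)) with hM
    set S := M.support with hS
    set t : ι × ι → ℝ := fun p => M p * (q (Ch.b p.1) * q (Ch.b p.2)) with ht
    have hfull : ∑ p ∈ S, t p = 2 ^ n * q (Ch.b ρ) := by
      have hcv := hqconv n (Ch.b ρ) (hρ ▸ Ch.homog ρ)
      rw [conv_expand Ch q q ρ] at hcv
      exact hcv
    have hA : ∑ p ∈ S.filter (fun p => Ch.deg p.1 = 0), t p = q (Ch.b ρ) := by
      have hid := counit_left Ch (q ∘ₗ Ch.toGradedConnected.proj n) ρ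
      rw [LinearMap.comp_apply, Ch.toGradedConnected.proj_of_mem (hρ ▸ Ch.homog ρ)] at hid
      rw [← hid, Finset.sum_filter]
      refine Finset.sum_congr rfl fun p hp => ?_
      have hd := Ch.deg_sum hp
      rw [hρ] at hd
      by_cases h1 : Ch.deg p.1 = 0
      · have h2 : Ch.deg p.2 = n := by omega
        rw [if_pos h1, ht]
        simp only [LinearMap.comp_apply]
        rw [Ch.toGradedConnected.proj_of_mem (h2 ▸ Ch.homog p.2)]
        obtain ⟨c, hc, hb⟩ := Ch.deg_zero h1
        have hq0 : q (Ch.b p.1) = (c : ℝ) := by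
          rw [hb, map_smul, hq1, smul_eq_mul, mul_one]
        have he0 : Coalgebra.counit (R := ℝ) (Ch.b p.1) = (c : ℝ) := by
          rw [hb, map_smul, Bialgebra.counit_one, smul_eq_mul, mul_one]
        rw [hq0, he0]
      · have h2 : Ch.deg p.2 ≠ n := by omega
        rw [if_neg h1]
        simp only [LinearMap.comp_apply]
        rw [Ch.toGradedConnected.proj_of_mem_ne h2 (Ch.homog p.2)]
        simp
    have hB : ∑ p ∈ S.filter (fun p => Ch.deg p.2 = 0), t p = q (Ch.b ρ) := by
      have hid := counit_right Ch (q ∘ₗ Ch.toGradedConnected.proj n) ρ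
      rw [LinearMap.comp_apply, Ch.toGradedConnected.proj_of_mem (hρ ▸ Ch.homog ρ)] at hid
      rw [← hid, Finset.sum_filter]
      refine Finset.sum_congr rfl fun p hp => ?_
      have hd := Ch.deg_sum hp
      rw [hρ] at hd
      by_cases h2 : Ch.deg p.2 = 0
      · have h1 : Ch.deg p.1 = n := by omega
        rw [if_pos h2, ht]
        simp only [LinearMap.comp_apply]
        rw [Ch.toGradedConnected.proj_of_mem (h1 ▸ Ch.homog p.1)]
        obtain ⟨c, hc, hb⟩ := Ch.deg_zero h2
        have hq0 : q (Ch.b p.2) = (c : ℝ) := by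
          rw [hb, map_smul, hq1, smul_eq_mul, mul_one]
        have he0 : Coalgebra.counit (R := ℝ) (Ch.b p.2) = (c : ℝ) := by
          rw [hb, map_smul, Bialgebra.counit_one, smul_eq_mul, mul_one]
        rw [hq0, he0]
      · have h1 : Ch.deg p.1 ≠ n := by omega
        rw [if_neg h2]
        simp only [LinearMap.comp_apply]
        rw [Ch.toGradedConnected.proj_of_mem_ne h1 (Ch.homog p.1)]
        simp
    have hsplit : ∑ p ∈ S, t p =
        ∑ p ∈ S.filter (fun p => Ch.deg p.1 = 0), t p +
        ∑ p ∈ S.filter (fun p => ¬ Ch.deg p.1 = 0), t p :=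
      (Finset.sum_filter_add_sum_filter_not S _ t).symm
    have hfeq : (S.filter (fun p => ¬ Ch.deg p.1 = 0)).filter (fun p => Ch.deg p.2 = 0) =
        S.filter (fun p => Ch.deg p.2 = 0) := by
      ext p
      simp only [Finset.mem_filter]
      constructor
      · rintro ⟨⟨hpS, -⟩, h2⟩; exact ⟨hpS, h2⟩
      · rintro ⟨hpS, h2⟩
        have hd := Ch.deg_sum hpS
        rw [hρ] at hd
        exact ⟨⟨hpS, by omega⟩, h2⟩
    have hmid : ∑ p ∈ S.filter (fun p => ¬ Ch.deg p.1 = 0), t p =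
        ∑ p ∈ S.filter (fun p => Ch.deg p.2 = 0), t p +
        ∑ p ∈ (S.filter (fun p => ¬ Ch.deg p.1 = 0)).filter (fun p => ¬ Ch.deg p.2 = 0), t p := by
      rw [← Finset.sum_filter_add_sum_filter_not (S.filter (fun p => ¬ Ch.deg p.1 = 0))
        (fun p => Ch.deg p.2 = 0) t, hfeq]
    have hCrat : ∃ r : ℚ, 0 ≤ r ∧
        ∑ p ∈ (S.filter (fun p => ¬ Ch.deg p.1 = 0)).filter (fun p => ¬ Ch.deg p.2 = 0), t p
          = (r : ℝ) := by
      refine Finset.sum_induction t (fun x => ∃ r : ℚ, 0 ≤ r ∧ x = (r : ℝ)) ?_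
        ⟨0, le_refl 0, by norm_num⟩ ?_
      · rintro a b ⟨r1, h1, rfl⟩ ⟨r2, h2, rfl⟩
        exact ⟨r1 + r2, by positivity, by push_cast; ring⟩
      · intro p hp
        rw [Finset.mem_filter] at hp
        obtain ⟨hp', h2⟩ := hp
        rw [Finset.mem_filter] at hp'
        obtain ⟨hpS, h1⟩ := hp'
        have hd := Ch.deg_sum hpS
        rw [hρ] at hd
        obtain ⟨m, hm⟩ := Ch.comul_int ρ p.1 p.2
        obtain ⟨r1, hr1, hqr1⟩ := IH (Ch.deg p.1) (by omega) p.1 rfl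
        obtain ⟨r2, hr2, hqr2⟩ := IH (Ch.deg p.2) (by omega) p.2 rfl
        refine ⟨m * r1 * r2, by positivity, ?_⟩
        rw [ht]
        simp only []
        rw [show M p = (m : ℝ) from hm, hqr1, hqr2]
        push_cast
        ring
    obtain ⟨r, hr0, hrC⟩ := hCrat
    have heq : (2 : ℝ) ^ n * q (Ch.b ρ) = q (Ch.b ρ) + (q (Ch.b ρ) + r) := by
      rw [← hfull, hsplit, hA, hmid, hB, hrC]
    have h4 : (4 : ℝ) ≤ 2 ^ n := by
      calc (4 : ℝ) = 2 ^ 2 := by norm_num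
      _ ≤ 2 ^ n := pow_le_pow_right₀ (by norm_num) hn
    have h4q : (4 : ℚ) ≤ 2 ^ n := by
      calc (4 : ℚ) = 2 ^ 2 := by norm_num
      _ ≤ 2 ^ n := pow_le_pow_right₀ (by norm_num) hn
    refine ⟨r / (2 ^ n - 2), div_nonneg hr0 (by linarith), ?_⟩
    have hpos : (0 : ℝ) < 2 ^ n - 2 := by linarith
    push_cast
    rw [eq_div_iff (ne_of_gt hpos)]
    linarith [heq]
end

section
/- Let (H, B) and (H', B') be commutative combinatorial Hopf algebras over ℝ and let Φ : (H, B) → (H', B') be a combinatorial Hopf algebra morphism. If X' = (X'_{st})_{s,t∈ℝ} is a γ-regular H'-rough path for some γ ∈ (0,1], then the pull-back X_{st} := X'_{st} ∘ Φ is a γ-regular H-rough path. -/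
open TensorProduct

-- auxiliary: coordinates of a homogeneous element vanish off its degree
theorem homog_repr_eq_zero {H : Type*} [Ring H] [HopfAlgebra ℝ H] {ι : Type*}
    (Ch : CombinatorialHopf H ι) {n : ℕ} {x : H} (hx : x ∈ Ch.grading n)
    (j : ι) (hj : Ch.deg j ≠ n) : Ch.b.repr x j = 0 := by
  letI : DirectSum.Decomposition Ch.grading := Ch.internal.chooseDecomposition
  set m := Ch.deg j
  have hφ : (Ch.b.coord j) ∘ₗ (Ch.grading m).subtype ∘ₗ
      (DirectSum.component ℝ ℕ (fun n => Ch.grading n) m) ∘ₗ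
      (DirectSum.decomposeLinearEquiv Ch.grading).toLinearMap = Ch.b.coord j := by
    apply Ch.b.ext
    intro k
    simp only [LinearMap.comp_apply, LinearEquiv.coe_coe,
      DirectSum.decomposeLinearEquiv_apply, Submodule.coe_subtype]
    by_cases hk : Ch.deg k = m
    · have := DirectSum.decompose_of_mem_same Ch.grading (hk ▸ Ch.homog k)
      rw [show (DirectSum.component ℝ ℕ (fun n => Ch.grading n) m)
        (DirectSum.decompose Ch.grading (Ch.b k)) = DirectSum.decompose Ch.grading (Ch.b k) m
        from rfl, this]
    · have := DirectSum.decompose_of_mem_ne Ch.grading (Ch.homog k) hk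
      rw [show (DirectSum.component ℝ ℕ (fun n => Ch.grading n) m)
        (DirectSum.decompose Ch.grading (Ch.b k)) = DirectSum.decompose Ch.grading (Ch.b k) m
        from rfl, this]
      have hkj : k ≠ j := fun h => hk (by rw [h])
      simp [Module.Basis.coord_apply, Module.Basis.repr_self, Finsupp.single_apply, hkj]
  have := LinearMap.congr_fun hφ x
  simp only [LinearMap.comp_apply, LinearEquiv.coe_coe,
    DirectSum.decomposeLinearEquiv_apply, Submodule.coe_subtype] at this
  rw [show (DirectSum.component ℝ ℕ (fun n => Ch.grading n) m)
      (DirectSum.decompose Ch.grading x) = DirectSum.decompose Ch.grading x m from rfl,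
    DirectSum.decompose_of_mem_ne Ch.grading hx (fun h => hj h.symm)] at this
  simpa [Module.Basis.coord_apply] using this.symm

/-- The pull-back of a `γ`-regular `H'`-rough path along a combinatorial
Hopf algebra morphism `Φ : (H, B) → (H', B')` is a `γ`-regular `H`-rough path. -/
theorem stmt8 {H H' : Type*} [CommRing H] [HopfAlgebra ℝ H] [CommRing H'] [HopfAlgebra ℝ H']
    {ι ι' : Type*} (Ch : CombinatorialHopf H ι) (Ch' : CombinatorialHopf H' ι')
    (Φ : H →ₐc[ℝ] H')
    -- `Φ` is a combinatorial morphism: degree-preserving with nonnegative integer matrix: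
    (hdeg : ∀ n : ℕ, ∀ x ∈ Ch.grading n, Φ x ∈ Ch'.grading n)
    (hmat : ∀ (i : ι) (j : ι'), ∃ m : ℕ, (Ch'.b.repr (Φ (Ch.b i))) j = (m : ℝ))
    (γ : ℝ) (hγ0 : 0 < γ) (hγ1 : γ ≤ 1)
    (X' : ℝ → ℝ → (H' →ₗ[ℝ] ℝ)) (hX' : IsRoughPath Ch' γ X') :
    IsRoughPath Ch γ (fun s t => (X' s t) ∘ₗ (Φ : H →ₗ[ℝ] H')) := by
  obtain ⟨h1, hmul, hchen, hreg⟩ := hX'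
  refine ⟨?_, ?_, ?_, ?_⟩
  · intro s t
    show X' s t (Φ 1) = 1
    rw [map_one]; exact h1 s t
  · intro s t x y
    show X' s t (Φ (x*y)) = X' s t (Φ x) * X' s t (Φ y)
    rw [map_mul]; exact hmul s t _ _
  · intro s u t x
    have hΦ : TensorProduct.map (Φ : H →ₗ[ℝ] H') (Φ : H →ₗ[ℝ] H') ∘ₗ
        (Coalgebra.comul (R := ℝ)) = Coalgebra.comul ∘ₗ (Φ : H →ₗ[ℝ] H') :=
      CoalgHomClass.map_comp_comul Φ
    have key : conv (X' s u ∘ₗ (Φ : H →ₗ[ℝ] H')) (X' u t ∘ₗ (Φ : H →ₗ[ℝ] H')) =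
        (conv (X' s u) (X' u t)) ∘ₗ (Φ : H →ₗ[ℝ] H') := by
      unfold conv
      rw [TensorProduct.map_comp, LinearMap.comp_assoc, LinearMap.comp_assoc, hΦ]
      rfl
    rw [key]
    exact hchen s u t (Φ x)
  · intro i
    classical
    set n := Ch.deg i with hn
    have hx : Φ (Ch.b i) ∈ Ch'.grading n := hdeg n _ (Ch.homog i)
    set c := Ch'.b.repr (Φ (Ch.b i)) with hc
    -- constants
    choose C hC using hreg
    refine ⟨∑ j ∈ c.support, |c j| * |C j|, ?_⟩
    intro s t hst
    have hpow : (0:ℝ) ≤ |t - s| ^ (γ * (n : ℝ)) :=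
      Real.rpow_nonneg (abs_nonneg _) _
    have hrepr : Φ (Ch.b i) = ∑ j ∈ c.support, c j • Ch'.b j := by
      conv_lhs => rw [← Ch'.b.linearCombination_repr (Φ (Ch.b i))]
      rw [Finsupp.linearCombination_apply, Finsupp.sum]
    calc |((X' s t) ∘ₗ (Φ : H →ₗ[ℝ] H')) (Ch.b i)|
        = |∑ j ∈ c.support, c j * X' s t (Ch'.b j)| := by
          have : ((X' s t) ∘ₗ (Φ : H →ₗ[ℝ] H')) (Ch.b i) = X' s t (Φ (Ch.b i)) := rfl
          rw [this, hrepr, map_sum]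
          simp [smul_eq_mul]
      _ ≤ ∑ j ∈ c.support, |c j * X' s t (Ch'.b j)| := Finset.abs_sum_le_sum_abs _ _
      _ ≤ ∑ j ∈ c.support, |c j| * (|C j| * |t - s| ^ (γ * (n : ℝ))) := by
          apply Finset.sum_le_sum
          intro j hj
          rw [abs_mul]
          apply mul_le_mul_of_nonneg_left _ (abs_nonneg _)
          have hdegj : Ch'.deg j = n := by
            by_contra hne
            exact Finsupp.mem_support_iff.mp hj (homog_repr_eq_zero Ch' hx j hne)
          calc |X' s t (Ch'.b j)| ≤ C j * |t - s| ^ (γ * ((Ch'.deg j) : ℝ)) := hC j s t hst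
            _ ≤ |C j| * |t - s| ^ (γ * (n : ℝ)) := by
                rw [hdegj]
                exact mul_le_mul_of_nonneg_right (le_abs_self _)
                  (Real.rpow_nonneg (abs_nonneg _) _)
      _ = (∑ j ∈ c.support, |c j| * |C j|) * |t - s| ^ (γ * (n : ℝ)) := by
          rw [Finset.sum_mul]; congr 1; ext j; ring
end

section
/- Let H and H' be graded connected Hopf algebras over ℝ with homogeneous bases B and B' respectively, let Φ : H → H' be a Hopf algebra morphism preserving the degree with α = α' ∘ Φ|_{H₁}, and let γ ∈ (0,1] with N := ⌊1/γ⌋. Let q_γ : H → ℝ be the linear map determined by q_γ(1) = 1, q_γ|_{H₁} = α, q_γ(x) = 2^{−|x|}(q_γ ⋆ q_γ)(x) for homogeneous x with 2 ≤ |x| ≤ N, and q_γ(x) = 2^{−γ|x|}(q_γ ⋆ q_γ)(x) for homogeneous x with |x| ≥ N+1, and let q'_γ be defined analogously on H' from α'. Then q_γ = q'_γ ∘ Φ. -/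
open TensorProduct

/-- Functoriality of the map `q_γ`: if `Φ : H → H'` is a degree-preserving
Hopf algebra morphism with `α = α' ∘ Φ|_{H₁}`, then `q_γ = q'_γ ∘ Φ`. -/
theorem stmt9 {H H' : Type*} [Ring H] [HopfAlgebra ℝ H] [Ring H'] [HopfAlgebra ℝ H']
    (G : GradedConnected ℝ H) (G' : GradedConnected ℝ H')
    (Φ : H →ₐc[ℝ] H')
    (hdeg : ∀ n : ℕ, ∀ x ∈ G.grading n, Φ x ∈ G'.grading n)
    (γ : ℝ) (hγ0 : 0 < γ) (hγ1 : γ ≤ 1) (N : ℕ) (hN : N = ⌊1 / γ⌋₊)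
    (qγ : H →ₗ[ℝ] ℝ) (qγ' : H' →ₗ[ℝ] ℝ)
    (hq1 : qγ 1 = 1) (hq'1 : qγ' 1 = 1)
    -- `α'` (the restriction of `q'_γ` to `H'₁`) is a nonzero linear map:
    (hα' : ∃ x ∈ G'.grading 1, qγ' x ≠ 0)
    -- `α := α' ∘ Φ|_{H₁}` is nonzero, and `q_γ` restricted to `H₁` equals `α`:
    (hα : ∃ x ∈ G.grading 1, qγ x ≠ 0)
    (hrestr : ∀ x ∈ G.grading 1, qγ x = qγ' (Φ x))
    -- defining recursions for `q_γ` on `H`: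
    (hmid : ∀ n : ℕ, 2 ≤ n → n ≤ N → ∀ x ∈ G.grading n,
      qγ x = (2 : ℝ) ^ (-(n : ℝ)) * conv qγ qγ x)
    (hhigh : ∀ n : ℕ, N + 1 ≤ n → ∀ x ∈ G.grading n,
      qγ x = (2 : ℝ) ^ (-(γ * n)) * conv qγ qγ x)
    -- defining recursions for `q'_γ` on `H'`:
    (hmid' : ∀ n : ℕ, 2 ≤ n → n ≤ N → ∀ x ∈ G'.grading n,
      qγ' x = (2 : ℝ) ^ (-(n : ℝ)) * conv qγ' qγ' x)
    (hhigh' : ∀ n : ℕ, N + 1 ≤ n → ∀ x ∈ G'.grading n,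
      qγ' x = (2 : ℝ) ^ (-(γ * n)) * conv qγ' qγ' x) :
    ∀ x : H, qγ x = qγ' (Φ x) := by
    classical
  set q : H →ₗ[ℝ] ℝ := qγ' ∘ₗ Φ.toLinearMap with hq
  have hqapp : ∀ x : H, q x = qγ' (Φ x) := fun x => rfl
  set f : H →ₗ[ℝ] ℝ := qγ - q with hfdef
  have hfapp : ∀ x : H, f x = qγ x - qγ' (Φ x) := fun x => rfl
  have hΦ1 : Φ (1 : H) = 1 := map_one Φ
  have hf1 : f (1 : H) = 0 := by rw [hfapp, hΦ1, hq1, hq'1, sub_self]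
  suffices hmain : ∀ n : ℕ, ∀ x ∈ G.grading n, f x = 0 by
    intro x
    have hx : x ∈ ⨆ n, G.grading n := by
      rw [G.internal.submodule_iSup_eq_top]; trivial
    have h0 : f x = 0 := by
      refine Submodule.iSup_induction _ (motive := fun y => f y = 0) hx hmain (map_zero f) ?_
      intro a b ha hb
      rw [map_add, ha, hb, add_zero]
    have := hfapp x
    rw [h0] at this
    linarith
  intro n
  induction n using Nat.strong_induction_on with
  | _ n IH =>
  intro x hx
  match n, IH, hx with
  | 0, _, hx =>
    rw [G.connected, Submodule.mem_span_singleton] at hx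
    obtain ⟨c, rfl⟩ := hx
    rw [map_smul, hf1, smul_zero]
  | 1, _, hx =>
    rw [hfapp, hrestr x hx, sub_self]
  | (m+2), IH, hx =>
    set n := m + 2 with hn
    have hn2 : 2 ≤ n := by omega
    -- the key linear functional
    set g : H ⊗[ℝ] H →ₗ[ℝ] ℝ :=
      (LinearMap.mul' ℝ ℝ ∘ₗ TensorProduct.map qγ qγ)
        - (LinearMap.mul' ℝ ℝ ∘ₗ TensorProduct.map q q)
        - (LinearMap.mul' ℝ ℝ ∘ₗ TensorProduct.map (Coalgebra.counit) f)
        - (LinearMap.mul' ℝ ℝ ∘ₗ TensorProduct.map f (Coalgebra.counit)) with hgdef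
    have hgtmul : ∀ a b : H, g (a ⊗ₜ[ℝ] b)
        = qγ a * qγ b - q a * q b - Coalgebra.counit (R := ℝ) a * f b
          - f a * Coalgebra.counit (R := ℝ) b := by
      intro a b
      simp [hgdef, LinearMap.mul'_apply]
    have hker : Coalgebra.comul (R := ℝ) x ∈ LinearMap.ker g := by
      refine SetLike.le_def.mp ?_ (G.comul_mem hx)
      refine iSup₂_le fun p hp => ?_
      have hpn : p ≤ n := by
        simpa [Nat.lt_succ_iff] using Finset.mem_range.mp hp
      rintro t ⟨u, rfl⟩
      induction u using TensorProduct.induction_on with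
      | zero => simp
      | add u v hu hv =>
        rw [LinearMap.mem_ker, map_add, map_add]
        rw [LinearMap.mem_ker] at hu hv
        rw [hu, hv, add_zero]
      | tmul a b =>
        rw [LinearMap.mem_ker]
        have : (TensorProduct.mapIncl (G.grading p) (G.grading (n - p))) (a ⊗ₜ[ℝ] b)
            = (a : H) ⊗ₜ[ℝ] (b : H) := rfl
        rw [this, hgtmul]
        rcases Nat.eq_zero_or_pos p with hp0 | hppos
        · -- p = 0 : a is a multiple of 1
          have ha : (a : H) ∈ G.grading 0 := by rw [← hp0]; exact a.2
          rw [G.connected, Submodule.mem_span_singleton] at ha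
          obtain ⟨c, hc⟩ := ha
          have h1 : qγ (a : H) = c := by
            rw [← hc, map_smul, hq1, smul_eq_mul, mul_one]
          have h2 : q (a : H) = c := by
            rw [← hc, map_smul, hqapp, hΦ1, hq'1, smul_eq_mul, mul_one]
          have h3 : Coalgebra.counit (R := ℝ) (a : H) = c := by
            rw [← hc, map_smul, Bialgebra.counit_one, smul_eq_mul, mul_one]
          have h4 : f (a : H) = 0 := by
            have hh : f (a : H) = qγ (a : H) - q (a : H) := rfl
            rw [hh, h1, h2, sub_self]
          have h5 : f (b : H) = qγ (b : H) - q (b : H) := rfl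
          rw [h1, h2, h3, h4, h5]; ring
        rcases eq_or_lt_of_le hpn with hpn' | hplt
        · -- p = n : b is a multiple of 1
          have hgr : G.grading (n - p) = G.grading 0 := by
            rw [show n - p = 0 by omega]
          have hb : (b : H) ∈ G.grading 0 := by rw [← hgr]; exact b.2
          rw [G.connected, Submodule.mem_span_singleton] at hb
          obtain ⟨c, hc⟩ := hb
          have h1 : qγ (b : H) = c := by
            rw [← hc, map_smul, hq1, smul_eq_mul, mul_one]
          have h2 : q (b : H) = c := by
            rw [← hc, map_smul, hqapp, hΦ1, hq'1, smul_eq_mul, mul_one]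
          have h3 : Coalgebra.counit (R := ℝ) (b : H) = c := by
            rw [← hc, map_smul, Bialgebra.counit_one, smul_eq_mul, mul_one]
          have h4 : f (b : H) = 0 := by
            have hh : f (b : H) = qγ (b : H) - q (b : H) := rfl
            rw [hh, h1, h2, sub_self]
          have h5 : f (a : H) = qγ (a : H) - q (a : H) := rfl
          rw [h1, h2, h3, h4, h5]; ring
        · -- 0 < p < n : both factors have degree < n
          have hfa : f (a : H) = 0 := IH p hplt (a : H) a.2
          have hfb : f (b : H) = 0 := IH (n - p) (by omega) (b : H) b.2
          have hqa : q (a : H) = qγ (a : H) := by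
            have := hfapp (a : H); rw [hfa] at this; rw [hqapp]; linarith
          have hqb : q (b : H) = qγ (b : H) := by
            have := hfapp (b : H); rw [hfb] at this; rw [hqapp]; linarith
          rw [hfa, hfb, hqa, hqb]; ring
    have hg0 : g (Coalgebra.comul (R := ℝ) x) = 0 := LinearMap.mem_ker.mp hker
    -- identify the four pieces
    have piece1 : (LinearMap.mul' ℝ ℝ ∘ₗ TensorProduct.map qγ qγ) (Coalgebra.comul (R := ℝ) x)
        = conv qγ qγ x := rfl
    have piece2 : (LinearMap.mul' ℝ ℝ ∘ₗ TensorProduct.map q q) (Coalgebra.comul (R := ℝ) x)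
        = conv qγ' qγ' (Φ x) := by
      have h1 : TensorProduct.map q q
          = TensorProduct.map qγ' qγ' ∘ₗ TensorProduct.map Φ.toLinearMap Φ.toLinearMap := by
        rw [← TensorProduct.map_comp]
      have h2 : TensorProduct.map Φ.toLinearMap Φ.toLinearMap (Coalgebra.comul (R := ℝ) x)
          = Coalgebra.comul (R := ℝ) (Φ x) := CoalgHomClass.map_comp_comul_apply Φ x
      simp only [LinearMap.comp_apply, h1, h2]
      rfl
    have piece3 : (LinearMap.mul' ℝ ℝ ∘ₗ TensorProduct.map (Coalgebra.counit) f)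
        (Coalgebra.comul (R := ℝ) x) = f x := by
      have h1 : TensorProduct.map (Coalgebra.counit (R := ℝ) (A := H)) f
          = LinearMap.lTensor ℝ f ∘ₗ LinearMap.rTensor H (Coalgebra.counit) :=
        (LinearMap.lTensor_comp_rTensor _ _ _).symm
      rw [LinearMap.comp_apply, h1, LinearMap.comp_apply,
        Coalgebra.rTensor_counit_comul, LinearMap.lTensor_tmul, LinearMap.mul'_apply, one_mul]
    have piece4 : (LinearMap.mul' ℝ ℝ ∘ₗ TensorProduct.map f (Coalgebra.counit))
        (Coalgebra.comul (R := ℝ) x) = f x := by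
      have h1 : TensorProduct.map f (Coalgebra.counit (R := ℝ) (A := H))
          = LinearMap.rTensor ℝ f ∘ₗ LinearMap.lTensor H (Coalgebra.counit) :=
        (LinearMap.rTensor_comp_lTensor _ _ _).symm
      rw [LinearMap.comp_apply, h1, LinearMap.comp_apply,
        Coalgebra.lTensor_counit_comul, LinearMap.rTensor_tmul, LinearMap.mul'_apply, mul_one]
    have hconv : conv qγ qγ x - conv qγ' qγ' (Φ x) = 2 * f x := by
      have : g (Coalgebra.comul (R := ℝ) x)
          = conv qγ qγ x - conv qγ' qγ' (Φ x) - f x - f x := by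
        simp only [hgdef, LinearMap.sub_apply, piece1, piece2, piece3, piece4]
      rw [this] at hg0
      linarith
    -- now the recursion
    have hΦx : Φ x ∈ G'.grading n := hdeg n x hx
    rcases le_or_gt n N with hnN | hnN
    · -- middle regime
      have e1 := hmid n hn2 hnN x hx
      have e2 := hmid' n hn2 hnN (Φ x) hΦx
      set lam : ℝ := (2 : ℝ) ^ (-(n : ℝ)) with hlam
      have hfx : f x = lam * (2 * f x) := by
        conv_lhs => rw [hfapp x, e1, e2]
        rw [← mul_sub, hconv]
      have hlt : lam < 1 / 2 := by
        rw [hlam]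
        have : (1 : ℝ) / 2 = (2 : ℝ) ^ (-(1 : ℝ)) := by
          rw [Real.rpow_neg_one]; norm_num
        rw [this]
        refine (Real.rpow_lt_rpow_left_iff (by norm_num : (1:ℝ) < 2)).mpr ?_
        have : (2 : ℝ) ≤ (n : ℝ) := by exact_mod_cast hn2
        linarith
      have h2 : (1 - 2 * lam) * f x = 0 := by linear_combination hfx
      rcases mul_eq_zero.mp h2 with h | h
      · linarith
      · exact h
    · -- high regime
      have e1 := hhigh n (by omega) x hx
      have e2 := hhigh' n (by omega) (Φ x) hΦx
      set lam : ℝ := (2 : ℝ) ^ (-(γ * n)) with hlam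
      have hfx : f x = lam * (2 * f x) := by
        conv_lhs => rw [hfapp x, e1, e2]
        rw [← mul_sub, hconv]
      have hγn : 1 < γ * n := by
        have h1 : 1 / γ < (N : ℝ) + 1 := by
          rw [hN]; exact Nat.lt_floor_add_one _
        have h2 : (N : ℝ) + 1 ≤ (n : ℝ) := by exact_mod_cast hnN
        have := (div_lt_iff₀ hγ0).mp (lt_of_lt_of_le h1 h2)
        linarith
      have hlt : lam < 1 / 2 := by
        rw [hlam]
        have : (1 : ℝ) / 2 = (2 : ℝ) ^ (-(1 : ℝ)) := by
          rw [Real.rpow_neg_one]; norm_num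
        rw [this]
        refine (Real.rpow_lt_rpow_left_iff (by norm_num : (1:ℝ) < 2)).mpr ?_
        linarith
      have h2 : (1 - 2 * lam) * f x = 0 := by linear_combination hfx
      rcases mul_eq_zero.mp h2 with h | h
      · linarith
      · exact h
end

section
/- Let γ ∈ (0,1], N := ⌊1/γ⌋, and suppose c_γ > 0 is a constant such that Σ_{k=0}^n 1/((k!)^γ ((n−k)!)^γ) ≤ c_γ · 2^{γn}/(n!)^γ for every integer n ≥ 0. Define u : ℕ_{≥1} → ℝ by u(n) := 1/n! for 1 ≤ n ≤ N and u(n) := (2^{γn} − 2)^{−1} Σ_{k=1}^{n−1} u(k) u(n−k) for n ≥ N + 1. Then with C_γ := max(1, 2^{γ(N+1)} c_γ/(2^{γ(N+1)} − 2)), the estimate u(n) ≤ C_γ^{n−1}/(n!)^γ holds for all n ≥ 1. -/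
/-- Factorial decay for the sequence `u(n)` of values of `q_γ` on words
of length `n` in a shuffle Hopf algebra: assuming the neoclassical inequality with constant
`c_γ`, one has `u(n) ≤ C_γ^{n−1}/(n!)^γ` with
`C_γ = max(1, 2^{γ(N+1)} c_γ/(2^{γ(N+1)} − 2))`. -/
theorem stmt10 (γ : ℝ) (hγ0 : 0 < γ) (hγ1 : γ ≤ 1) (N : ℕ) (hN : N = ⌊1 / γ⌋₊)
    (cγ : ℝ) (hcγ : 0 < cγ)
    (hneo : ∀ n : ℕ, ∑ k ∈ Finset.range (n + 1),
        1 / (((k.factorial : ℝ)) ^ γ * (((n - k).factorial : ℝ)) ^ γ)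
      ≤ cγ * (2 : ℝ) ^ (γ * n) / ((n.factorial : ℝ)) ^ γ)
    (u : ℕ → ℝ)
    (hu1 : ∀ n : ℕ, 1 ≤ n → n ≤ N → u n = 1 / (n.factorial : ℝ))
    (hu2 : ∀ n : ℕ, N + 1 ≤ n →
      u n = ((2 : ℝ) ^ (γ * n) - 2)⁻¹ * ∑ k ∈ Finset.Ico 1 n, u k * u (n - k))
    (Cγ : ℝ)
    (hCγ : Cγ = max 1 ((2 : ℝ) ^ (γ * (N + 1)) * cγ / ((2 : ℝ) ^ (γ * (N + 1)) - 2))) :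
    ∀ n : ℕ, 1 ≤ n → u n ≤ Cγ ^ (n - 1) / ((n.factorial : ℝ)) ^ γ := by
  have hC1 : (1:ℝ) ≤ Cγ := hCγ ▸ le_max_left _ _
  have hC0 : (0:ℝ) < Cγ := lt_of_lt_of_le one_pos hC1
  have hγN : 1 < γ * (N + 1) := by
    have h1 : (1:ℝ)/γ < N + 1 := by
      rw [hN]; exact_mod_cast Nat.lt_floor_add_one (1/γ)
    rw [div_lt_iff₀ hγ0] at h1
    nlinarith
  have h2N : (2:ℝ) < (2:ℝ) ^ (γ * (N+1)) := by
    calc (2:ℝ) = (2:ℝ) ^ (1:ℝ) := (Real.rpow_one 2).symm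
    _ < _ := (Real.rpow_lt_rpow_left_iff one_lt_two).mpr hγN
  have h2n : ∀ n : ℕ, N + 1 ≤ n → (2:ℝ) ^ (γ*(N+1)) ≤ (2:ℝ) ^ (γ * n) := by
    intro n hn
    apply (Real.rpow_le_rpow_left_iff one_lt_two).mpr
    have : ((N:ℝ) + 1) ≤ n := by exact_mod_cast hn
    nlinarith
  have hfact1 : ∀ m : ℕ, (1:ℝ) ≤ (m.factorial : ℝ) := fun m =>
    Nat.one_le_cast.mpr m.factorial_pos
  have hfp : ∀ m : ℕ, (0:ℝ) < (m.factorial : ℝ) ^ γ := fun m =>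
    Real.rpow_pos_of_pos (by linarith [hfact1 m]) γ
  have hkey : ∀ n : ℕ, N + 1 ≤ n → cγ * (2:ℝ)^(γ*n) / ((2:ℝ)^(γ*n) - 2) ≤ Cγ := by
    intro n hn
    have hy := h2n n hn
    set x := (2:ℝ)^(γ*(N+1)) with hx
    set y := (2:ℝ)^(γ*(n:ℕ)) with hyd
    have hx2 : (0:ℝ) < x - 2 := by linarith
    have hy2 : (0:ℝ) < y - 2 := by linarith
    have h1 : cγ * y / (y - 2) ≤ cγ * x / (x - 2) := by
      rw [div_le_div_iff₀ hy2 hx2]; nlinarith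
    have h2 : x * cγ / (x - 2) ≤ Cγ := hCγ ▸ le_max_right _ _
    calc cγ * y / (y-2) ≤ cγ * x / (x-2) := h1
    _ = x * cγ / (x-2) := by ring
    _ ≤ Cγ := h2
  suffices H : ∀ n : ℕ, 1 ≤ n → 0 ≤ u n ∧ u n ≤ Cγ ^ (n-1) / (n.factorial : ℝ)^γ from
    fun n hn => (H n hn).2
  intro n
  induction n using Nat.strong_induction_on with
  | _ n ih =>
    intro hn
    by_cases hle : n ≤ N
    · rw [hu1 n hn hle]
      have hf := hfact1 n
      have hfg : ((n.factorial:ℝ))^γ ≤ (n.factorial:ℝ) := by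
        calc ((n.factorial:ℝ))^γ ≤ ((n.factorial:ℝ))^(1:ℝ) :=
          Real.rpow_le_rpow_of_exponent_le hf hγ1
        _ = _ := Real.rpow_one _
      have hCp : (1:ℝ) ≤ Cγ ^ (n-1) := one_le_pow₀ hC1
      constructor
      · positivity
      · exact div_le_div₀ (by positivity) hCp (hfp n) hfg
    · push_neg at hle
      have hn' : N + 1 ≤ n := hle
      have hge2 : 2 ≤ n := by
        have : 1 ≤ N := by
          rw [hN]
          exact Nat.le_floor (by rw [Nat.cast_one, le_div_iff₀ hγ0]; linarith)
        omega
      rw [hu2 n hn']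
      have hinv : (0:ℝ) < ((2:ℝ)^(γ*n) - 2) := by
        have := h2n n hn'; linarith
      have hterm : ∀ k ∈ Finset.Ico 1 n, 0 ≤ u k * u (n-k) ∧
          u k * u (n-k) ≤ Cγ^(n-2) * (1 / (((k.factorial:ℝ))^γ * (((n-k).factorial:ℝ))^γ)) := by
        intro k hk
        rw [Finset.mem_Ico] at hk
        obtain ⟨hk1, hkn⟩ := hk
        have h1 := ih k hkn hk1
        have h2 := ih (n-k) (by omega) (by omega)
        refine ⟨mul_nonneg h1.1 h2.1, ?_⟩
        have hm := mul_le_mul h1.2 h2.2 h2.1 (by positivity)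
        calc u k * u (n-k)
            ≤ (Cγ^(k-1) / (k.factorial:ℝ)^γ) * (Cγ^((n-k)-1) / ((n-k).factorial:ℝ)^γ) := hm
          _ = (Cγ^(k-1) * Cγ^((n-k)-1)) / ((k.factorial:ℝ)^γ * ((n-k).factorial:ℝ)^γ) :=
              div_mul_div_comm _ _ _ _
          _ = Cγ^(n-2) / ((k.factorial:ℝ)^γ * ((n-k).factorial:ℝ)^γ) := by
              have he : k - 1 + (n - k - 1) = n - 2 := by omega
              rw [← pow_add, he]
          _ = Cγ^(n-2) * (1 / ((k.factorial:ℝ)^γ * ((n-k).factorial:ℝ)^γ)) :=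
              (mul_one_div _ _).symm
      have hsum : ∑ k ∈ Finset.Ico 1 n, u k * u (n-k)
          ≤ Cγ^(n-2) * (cγ * (2:ℝ)^(γ*n) / (n.factorial:ℝ)^γ) := by
        calc ∑ k ∈ Finset.Ico 1 n, u k * u (n-k)
            ≤ ∑ k ∈ Finset.Ico 1 n,
                Cγ^(n-2) * (1 / ((k.factorial:ℝ)^γ * ((n-k).factorial:ℝ)^γ)) :=
              Finset.sum_le_sum (fun k hk => (hterm k hk).2)
          _ = Cγ^(n-2) * ∑ k ∈ Finset.Ico 1 n,
                1 / ((k.factorial:ℝ)^γ * ((n-k).factorial:ℝ)^γ) :=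
              (Finset.mul_sum _ _ _).symm
          _ ≤ Cγ^(n-2) * ∑ k ∈ Finset.range (n+1),
                1 / ((k.factorial:ℝ)^γ * ((n-k).factorial:ℝ)^γ) := by
              apply mul_le_mul_of_nonneg_left ?_ (by positivity)
              apply Finset.sum_le_sum_of_subset_of_nonneg
              · intro k hk
                simp only [Finset.mem_Ico, Finset.mem_range] at *
                omega
              · intro k _ _
                have := hfp k; have := hfp (n-k); positivity
          _ ≤ Cγ^(n-2) * (cγ * (2:ℝ)^(γ*n) / (n.factorial:ℝ)^γ) :=
              mul_le_mul_of_nonneg_left (hneo n) (by positivity)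
      have hS0 : 0 ≤ ∑ k ∈ Finset.Ico 1 n, u k * u (n-k) :=
        Finset.sum_nonneg (fun k hk => (hterm k hk).1)
      constructor
      · exact mul_nonneg (inv_nonneg.mpr hinv.le) hS0
      · calc ((2:ℝ)^(γ*n) - 2)⁻¹ * ∑ k ∈ Finset.Ico 1 n, u k * u (n-k)
            ≤ ((2:ℝ)^(γ*n)-2)⁻¹ * (Cγ^(n-2) * (cγ * (2:ℝ)^(γ*n)/(n.factorial:ℝ)^γ)) :=
            mul_le_mul_of_nonneg_left hsum (inv_nonneg.mpr hinv.le)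
        _ = Cγ^(n-2) * (cγ * (2:ℝ)^(γ*n)/((2:ℝ)^(γ*n)-2)) * (1/(n.factorial:ℝ)^γ) := by
            field_simp
            try ring
        _ ≤ Cγ^(n-2) * Cγ * (1/(n.factorial:ℝ)^γ) :=
            mul_le_mul_of_nonneg_right
              (mul_le_mul_of_nonneg_left (hkey n hn') (by positivity))
              (by have := hfp n; positivity)
        _ = Cγ^(n-1)/(n.factorial:ℝ)^γ := by
            rw [← pow_succ]
            have h21 : n - 2 + 1 = n - 1 := by omega
            rw [h21, mul_one_div]
end

section
/- Let P be a finite poset with n elements and let s ≤ t be real numbers. Then the Lebesgue measure (on ℝ^P) of the set Ω^{st}_P := { x ∈ ℝ^P : s ≤ x_v ≤ t for all v ∈ P, and x_v ≥ x_w whenever v < w in P } equals e(P)·(t−s)^n/n!, where e(P) is the number of linear extensions of P. -/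
open MeasureTheory

section Helpers
open Finset

variable {P : Type*} [Fintype P] [PartialOrder P] (s t : ℝ)

def Treg (s t : ℝ) (α : P ≃ Fin (Fintype.card P)) : Set (P → ℝ) :=
  {x | (∀ v : P, x v ∈ Set.Icc s t) ∧ ∀ v w : P, α v < α w → x w < x v}

def Dreg (s t : ℝ) (n : ℕ) : Set (Fin n → ℝ) :=
  {y | (∀ i, y i ∈ Set.Icc s t) ∧ ∀ i j, i < j → y j < y i}

omit [PartialOrder P] in
lemma Treg_measurable (α : P ≃ Fin (Fintype.card P)) : MeasurableSet (Treg s t α) := by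
  have : Treg s t α = (⋂ v : P, {x : P → ℝ | x v ∈ Set.Icc s t}) ∩
      ⋂ (v : P) (w : P) (_ : α v < α w), {x : P → ℝ | x w < x v} := by
    ext x; simp [Treg, forall_and]
  rw [this]
  apply MeasurableSet.inter
  · exact MeasurableSet.iInter fun v =>
      (measurable_pi_apply v) measurableSet_Icc
  · exact MeasurableSet.iInter fun v => MeasurableSet.iInter fun w =>
      MeasurableSet.iInter fun _ =>
        measurableSet_lt (measurable_pi_apply w) (measurable_pi_apply v)

lemma Treg_vol (α : P ≃ Fin (Fintype.card P)) :
    volume (Treg s t α) = volume (Dreg s t (Fintype.card P)) := by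
  set g := MeasurableEquiv.piCongrLeft (fun _ : P => ℝ) α.symm with hg
  have hkey : ∀ (y : Fin (Fintype.card P) → ℝ) (i : Fin (Fintype.card P)), g y (α.symm i) = y i := by
    intro y i
    rw [hg, MeasurableEquiv.coe_piCongrLeft]
    exact Equiv.piCongrLeft_apply_apply (fun _ : P => ℝ) α.symm y i
  have hkey' : ∀ (y : Fin (Fintype.card P) → ℝ) (v : P), g y v = y (α v) := by
    intro y v
    have := hkey y (α v); rwa [Equiv.symm_apply_apply] at this
  have hpre : g ⁻¹' (Treg s t α) = Dreg s t (Fintype.card P) := by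
    ext y
    simp only [Set.mem_preimage, Treg, Dreg, Set.mem_setOf_eq, hkey']
    constructor
    · rintro ⟨h1, h2⟩
      refine ⟨fun i => by simpa using h1 (α.symm i), fun i j hij => ?_⟩
      have := h2 (α.symm i) (α.symm j) (by simpa using hij)
      simpa using this
    · rintro ⟨h1, h2⟩
      exact ⟨fun v => h1 (α v), fun v w hvw => h2 _ _ hvw⟩
  rw [← hpre]
  exact .symm ((volume_measurePreserving_piCongrLeft (fun _ : P => ℝ) α.symm).measure_preimage
    (Treg_measurable s t α).nullMeasurableSet)
variable {P : Type*} [Fintype P] [PartialOrder P] (s t : ℝ)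

omit [PartialOrder P] in
lemma Treg_disj {α β : P ≃ Fin (Fintype.card P)} {x : P → ℝ}
    (hxa : (∀ v : P, x v ∈ Set.Icc s t) ∧ ∀ v w : P, α v < α w → x w < x v)
    (hxb : (∀ v : P, x v ∈ Set.Icc s t) ∧ ∀ v w : P, β v < β w → x w < x v) : α = β := by
  have hmono : StrictMono (α.symm.trans β) := by
    intro i j hij
    have h1 : x (α.symm j) < x (α.symm i) := hxa.2 _ _ (by simpa using hij)
    rcases lt_trichotomy (β (α.symm i)) (β (α.symm j)) with h | h | h
    · exact h
    · exact absurd (α.symm.injective (β.injective h) ▸ hij) (lt_irrefl _)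
    · exact absurd (hxb.2 _ _ h) (not_lt.mpr h1.le)
  have hr : Set.range (α.symm.trans β) = Set.range (id : Fin _ → Fin _) := by
    rw [Set.range_id, Set.range_eq_univ]; exact (α.symm.trans β).surjective
  haveI : WellFoundedLT (Fin (Fintype.card P)) := inferInstance
  have hid : ⇑(α.symm.trans β) = id := (hmono.range_inj strictMono_id).mp hr
  refine Equiv.ext fun v => ?_
  have := congrFun hid (α v)
  simpa using this.symm

omit [PartialOrder P] in
lemma exists_sort (x : P → ℝ) (hinj : Function.Injective x) :
    ∃ α : P ≃ Fin (Fintype.card P), ∀ v w : P, α v < α w ↔ x w < x v := by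
  classical
  have hfinj : Function.Injective (fun v => -x v) :=
    fun a b h => hinj (neg_injective h)
  set S : Finset ℝ := Finset.univ.image (fun v => -x v) with hS
  have hcard : S.card = Fintype.card P := by
    rw [hS, Finset.card_image_of_injective _ hfinj, Finset.card_univ]
  let e2 := S.orderIsoOfFin hcard
  have hsurj : Function.Surjective
      (fun v => (⟨-x v, Finset.mem_image_of_mem _ (Finset.mem_univ v)⟩ : {a // a ∈ S})) := by
    rintro ⟨a, ha⟩
    obtain ⟨v, -, rfl⟩ := Finset.mem_image.mp ha
    exact ⟨v, rfl⟩
  let e1 : P ≃ {a // a ∈ S} := Equiv.ofBijective _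
    ⟨fun a b h => hfinj (congrArg Subtype.val h), hsurj⟩
  refine ⟨e1.trans e2.symm.toEquiv, fun v w => ?_⟩
  have h2 : e2.symm (e1 v) < e2.symm (e1 w) ↔ e1 v < e1 w := e2.symm.lt_iff_lt
  have h3 : e1 v < e1 w ↔ x w < x v := by
    simp only [e1, Equiv.ofBijective_apply, Subtype.mk_lt_mk, neg_lt_neg_iff]
    exact (neg_lt_neg_iff : -x v < -x w ↔ x w < x v)
  rw [Equiv.trans_apply, Equiv.trans_apply]
  change e2.symm (e1 v) < e2.symm (e1 w) ↔ _
  rw [h2, h3]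

omit [PartialOrder P] in
lemma hplane (v w : P) (hvw : v ≠ w) : volume {x : P → ℝ | x v = x w} = 0 := by
  classical
  let L : (P → ℝ) →ₗ[ℝ] ℝ := (LinearMap.proj v : (P → ℝ) →ₗ[ℝ] ℝ) - (LinearMap.proj w : (P → ℝ) →ₗ[ℝ] ℝ)
  have hset : {x : P → ℝ | x v = x w} = (LinearMap.ker L : Set (P → ℝ)) := by
    ext x
    simp [L, LinearMap.mem_ker, sub_eq_zero]
  rw [hset]
  apply Measure.addHaar_submodule
  intro h
  have h1 : Pi.single v (1:ℝ) ∈ LinearMap.ker L := h ▸ Submodule.mem_top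
  rw [LinearMap.mem_ker] at h1
  simp [L, Pi.single_eq_same, Pi.single_eq_of_ne (Ne.symm hvw)] at h1

omit [PartialOrder P] in
lemma nullset : volume {x : P → ℝ | ∃ v w : P, v ≠ w ∧ x v = x w} = 0 := by
  have hsub : {x : P → ℝ | ∃ v w : P, v ≠ w ∧ x v = x w} ⊆
      ⋃ (v : P) (w : P) (_ : v ≠ w), {x : P → ℝ | x v = x w} := by
    rintro x ⟨v, w, hvw, hx⟩
    exact Set.mem_iUnion.mpr ⟨v, Set.mem_iUnion.mpr ⟨w, Set.mem_iUnion.mpr ⟨hvw, hx⟩⟩⟩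
  refine measure_mono_null hsub ?_
  refine measure_iUnion_null fun v => measure_iUnion_null fun w => measure_iUnion_null fun h => ?_
  exact hplane v w h
variable {P : Type*} [Fintype P] [PartialOrder P] (s t : ℝ)

theorem stmt11' (hst : s ≤ t) :
    volume {x : P → ℝ | (∀ v : P, x v ∈ Set.Icc s t) ∧ ∀ v w : P, v < w → x w ≤ x v}
      = ENNReal.ofReal
          ((Nat.card {α : P ≃ Fin (Fintype.card P) // ∀ v w : P, v < w → α v < α w} : ℝ) *
            (t - s) ^ (Fintype.card P) / (Fintype.card P).factorial) := by
  classical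
  set N : Set (P → ℝ) := {x | ∃ v w : P, v ≠ w ∧ x v = x w} with hNdef
  have hN : volume N = 0 := nullset
  set T : (P ≃ Fin (Fintype.card P)) → Set (P → ℝ) := Treg s t with hTdef
  have hTN : ∀ α, ∀ x ∈ T α, x ∉ N := by
    rintro α x hx ⟨v, w, hvw, hxe⟩
    rcases lt_trichotomy (α v) (α w) with h | h | h
    · exact absurd hxe (ne_of_gt (hx.2 _ _ h))
    · exact hvw (α.injective h)
    · exact absurd hxe.symm (ne_of_gt (hx.2 _ _ h))
  have hdisj : ∀ (S : Finset (P ≃ Fin (Fintype.card P))),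
      (↑S : Set _).PairwiseDisjoint T :=
    fun S α _ β _ hne => Set.disjoint_left.mpr fun x hxα hxβ =>
      hne (Treg_disj s t hxα hxβ)
  -- the region attached to `Fin n` itself
  set D := Dreg s t (Fintype.card P) with hDdef
  -- cube decomposition
  have hCcover : {x : P → ℝ | ∀ v : P, x v ∈ Set.Icc s t} \ N = ⋃ α, T α := by
    ext x
    constructor
    · rintro ⟨hx, hxN⟩
      have hinj : Function.Injective x := by
        intro a b hab
        by_contra hne
        exact hxN ⟨a, b, hne, hab⟩
      obtain ⟨α, hα⟩ := exists_sort x hinj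
      exact Set.mem_iUnion.mpr ⟨α, hx, fun v w h => (hα v w).mp h⟩
    · intro hx
      obtain ⟨α, hxα⟩ := Set.mem_iUnion.mp hx
      exact ⟨hxα.1, hTN α x hxα⟩
  have hCvol : volume {x : P → ℝ | ∀ v : P, x v ∈ Set.Icc s t}
      = ENNReal.ofReal (t - s) ^ (Fintype.card P) := by
    have : {x : P → ℝ | ∀ v : P, x v ∈ Set.Icc s t}
        = Set.pi Set.univ (fun _ : P => Set.Icc s t) := by
      ext x; simp only [Set.mem_setOf_eq, Set.mem_pi, Set.mem_univ, forall_const]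
    rw [this, volume_pi_pi, Real.volume_Icc, Finset.prod_const, Finset.card_univ]
  have hsum : ∀ (S : Finset (P ≃ Fin (Fintype.card P))),
      volume (⋃ α ∈ S, T α) = S.card * volume D := by
    intro S
    rw [measure_biUnion_finset (hdisj S) (fun α _ => Treg_measurable s t α)]
    rw [Finset.sum_congr rfl (fun α _ => Treg_vol s t α), Finset.sum_const, nsmul_eq_mul]
  -- volume of D
  have hDvol : volume D = ENNReal.ofReal ((t - s) ^ (Fintype.card P)
      / (Fintype.card P).factorial) := by
    have h1 : ((Fintype.card P).factorial : ENNReal) * volume D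
        = ENNReal.ofReal ((t - s) ^ (Fintype.card P)) := by
      have hU : (⋃ α ∈ (Finset.univ : Finset (P ≃ Fin (Fintype.card P))), T α) = ⋃ α, T α := by
        simp
      have := hsum Finset.univ
      rw [hU, ← hCcover, measure_diff_null hN, hCvol, Finset.card_univ,
        Fintype.card_equiv (Fintype.equivFin P)] at this
      rw [← this, ENNReal.ofReal_pow (by linarith)]
    have h2 : ((Fintype.card P).factorial : ENNReal) *
        ENNReal.ofReal ((t - s) ^ (Fintype.card P) / (Fintype.card P).factorial)
        = ENNReal.ofReal ((t - s) ^ (Fintype.card P)) := by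
      rw [← ENNReal.ofReal_natCast, ← ENNReal.ofReal_mul (by positivity)]
      congr 1
      field_simp
    have hfac0 : ((Fintype.card P).factorial : ENNReal) ≠ 0 := by
      exact_mod_cast Nat.factorial_ne_zero _
    have hfact : ((Fintype.card P).factorial : ENNReal) ≠ ⊤ := ENNReal.natCast_ne_top _
    exact (ENNReal.mul_right_inj hfac0 hfact).mp (h1.trans h2.symm)
  -- decomposition of Ω
  set E : Finset (P ≃ Fin (Fintype.card P)) :=
    Finset.univ.filter (fun α => ∀ v w : P, v < w → α v < α w) with hEdef
  have hΩcover : {x : P → ℝ | (∀ v : P, x v ∈ Set.Icc s t) ∧ ∀ v w : P, v < w → x w ≤ x v} \ N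
      = ⋃ α ∈ E, T α := by
    ext x
    constructor
    · rintro ⟨⟨hx1, hx2⟩, hxN⟩
      have hinj : Function.Injective x := by
        intro a b hab
        by_contra hne
        exact hxN ⟨a, b, hne, hab⟩
      obtain ⟨α, hα⟩ := exists_sort x hinj
      have hαE : α ∈ E := by
        rw [hEdef, Finset.mem_filter]
        refine ⟨Finset.mem_univ _, fun v w hvw => (hα v w).mpr ?_⟩
        exact lt_of_le_of_ne (hx2 v w hvw) fun h => hvw.ne (hinj h).symm
      exact Set.mem_biUnion hαE ⟨hx1, fun v w h => (hα v w).mp h⟩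
    · intro hx
      obtain ⟨α, hαE, hxα⟩ := Set.mem_iUnion₂.mp hx
      rw [hEdef, Finset.mem_filter] at hαE
      exact ⟨⟨hxα.1, fun v w hvw => (hxα.2 v w (hαE.2 v w hvw)).le⟩, hTN α x hxα⟩
  -- conclusion
  have hcard : (Nat.card {α : P ≃ Fin (Fintype.card P) // ∀ v w : P, v < w → α v < α w})
      = E.card := by
    rw [Nat.card_eq_fintype_card, Fintype.card_subtype]
  rw [← measure_diff_null hN, hΩcover, hsum E, hDvol, hcard,
    ← ENNReal.ofReal_natCast, ← ENNReal.ofReal_mul (by positivity), mul_div_assoc]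
end Helpers

/-- The Lebesgue volume of the order simplex
`Ω^{st}_P = { x : s ≤ x_v ≤ t, x_v ≥ x_w for v < w }` attached to a finite poset `P` with
`n` elements is `e(P)·(t−s)^n/n!`, where `e(P)` is the number of linear extensions of `P`. -/
theorem stmt11 {P : Type*} [Fintype P] [PartialOrder P] (s t : ℝ) (hst : s ≤ t) :
    volume {x : P → ℝ | (∀ v : P, x v ∈ Set.Icc s t) ∧ ∀ v w : P, v < w → x w ≤ x v}
      = ENNReal.ofReal
          ((Nat.card {α : P ≃ Fin (Fintype.card P) // ∀ v w : P, v < w → α v < α w} : ℝ) *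
            (t - s) ^ (Fintype.card P) / (Fintype.card P).factorial) :=
  stmt11' s t hst
end

section
/- Let P be a finite poset with n elements such that for every v ∈ P the set { u ∈ P : u < v } is totally ordered (i.e., P is a rooted forest poset with roots as minimal elements). Then e(P) · ∏_{v ∈ P} |{ w ∈ P : v ≤ w }| = n!, where e(P) is the number of linear extensions of P. Equivalently, for s ≤ t the Lebesgue measure of Ω^{st}_P := { x ∈ ℝ^P : s ≤ x_v ≤ t for all v, x_v ≥ x_w whenever v < w } equals (t−s)^n / ∏_{v ∈ P} |{ w : v ≤ w }|. -/
open Finset MeasureTheory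
open scoped Classical

section Comb

variable {P : Type*} [Fintype P] [PartialOrder P]

/-- trivial alignment lemma -/
private lemma ext_card_congr (Q : Type*) [Fintype Q] [PartialOrder Q] {a b : ℕ} (h : a = b) :
    Nat.card {α : Q ≃ Fin a // ∀ v w : Q, v < w → α v < α w}
      = Nat.card {α : Q ≃ Fin b // ∀ v w : Q, v < w → α v < α w} := by subst h; rfl

/-- every element has a unique minimal element below it -/
private lemma exists_min_below (hforest : ∀ v u w : P, u < v → w < v → u ≤ w ∨ w ≤ u) (w : P) :
    ∃ m : P, IsMin m ∧ m ≤ w := by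
  classical
  obtain ⟨m, hm, hmin⟩ := Finset.exists_minimal (s := univ.filter (· ≤ w)) ⟨w, by simp⟩
  simp only [mem_filter, mem_univ, true_and] at hm hmin
  refine ⟨m, fun u hu => ?_, hm⟩
  have : ¬ u < m := not_lt_of_ge (hmin (le_trans hu hm) hu)
  rcases eq_or_lt_of_le hu with h | h
  · exact h.ge
  · exact absurd h this

private lemma chain_below (hforest : ∀ v u w : P, u < v → w < v → u ≤ w ∨ w ≤ u) {w u₁ u₂ : P}
    (h1 : u₁ ≤ w) (h2 : u₂ ≤ w) : u₁ ≤ u₂ ∨ u₂ ≤ u₁ := by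
  rcases eq_or_lt_of_le h1 with rfl | h1
  · exact Or.inr h2
  rcases eq_or_lt_of_le h2 with rfl | h2
  · exact Or.inl h1.le
  exact hforest w u₁ u₂ h1 h2

private lemma min_below_unique (hforest : ∀ v u w : P, u < v → w < v → u ≤ w ∨ w ≤ u)
    {w m₁ m₂ : P} (hm₁ : IsMin m₁) (h1 : m₁ ≤ w) (hm₂ : IsMin m₂) (h2 : m₂ ≤ w) : m₁ = m₂ := by
  rcases chain_below hforest h1 h2 with h | h
  · exact le_antisymm h (hm₂ h)
  · exact le_antisymm (hm₁ h) h

/-- sum of hooks of minimal elements is the cardinality -/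
private lemma sum_min_hooks (hforest : ∀ v u w : P, u < v → w < v → u ≤ w ∨ w ≤ u) :
    ∑ r ∈ univ.filter (fun r : P => IsMin r), Nat.card {w : P // r ≤ w} = Fintype.card P := by
  classical
  choose μ hμmin hμle using exists_min_below hforest
  have key : ∀ r : P, IsMin r → ∀ w : P, μ w = r ↔ r ≤ w := by
    intro r hr w
    constructor
    · rintro rfl; exact hμle w
    · intro h; exact min_below_unique hforest (hμmin w) (hμle w) hr h
  rw [Fintype.card, Finset.card_eq_sum_card_fiberwise (f := μ) (t := univ.filter IsMin)
    (fun x _ => by simp [hμmin x])]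
  refine Finset.sum_congr rfl fun r hr => ?_
  simp only [mem_filter] at hr
  rw [Nat.card_eq_fintype_card, Fintype.card_subtype]
  congr 1
  apply Finset.filter_congr
  intro w _
  simp [key r hr.2 w]

end Comb

section Comb2
variable {P : Type*} [Fintype P] [PartialOrder P]

/-- hooks don't change when removing a minimal element -/
private lemma hook_restrict {r : P} (hr : IsMin r) (v : {x : P // x ≠ r}) :
    Nat.card {w : {x : P // x ≠ r} // v ≤ w} = Nat.card {w : P // (v : P) ≤ w} := by
  apply Nat.card_eq_of_bijective (fun w => ⟨w.1.1, w.2⟩)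
  constructor
  · rintro ⟨⟨w₁, h₁⟩, hv₁⟩ ⟨⟨w₂, h₂⟩, hv₂⟩ h
    simp only [Subtype.mk.injEq] at h ⊢
    exact h
  · rintro ⟨w, hw⟩
    have hwr : w ≠ r := by
      rintro rfl
      exact v.2 (le_antisymm hw (hr hw))
    exact ⟨⟨⟨w, hwr⟩, hw⟩, rfl⟩

/-- extend an equiv on the complement of `r` by sending `r` to `0` -/
private noncomputable def extEquiv {n : ℕ} (r : P) (α' : {x : P // x ≠ r} ≃ Fin n) : P ≃ Fin (n+1) :=
  (Equiv.optionSubtypeNe r).symm.trans ((α'.optionCongr).trans (finSuccEquiv n).symm)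

private lemma extEquiv_apply_self {n : ℕ} (r : P) (α' : {x : P // x ≠ r} ≃ Fin n) :
    extEquiv r α' r = 0 := by
  simp [extEquiv, Equiv.optionSubtypeNe_symm_self, finSuccEquiv_symm_none]

private lemma extEquiv_apply_ne {n : ℕ} (r : P) (α' : {x : P // x ≠ r} ≃ Fin n)
    {v : P} (h : v ≠ r) : extEquiv r α' v = (α' ⟨v, h⟩).succ := by
  simp [extEquiv, Equiv.optionSubtypeNe_symm_of_ne h, finSuccEquiv_symm_some]

/-- counting extensions with `α r = 0` -/
private lemma count_fiber {r : P} (hr : IsMin r) {n : ℕ} :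
    Nat.card {α : P ≃ Fin (n+1) // (∀ v w : P, v < w → α v < α w) ∧ α r = 0}
      = Nat.card {α' : {x : P // x ≠ r} ≃ Fin n //
          ∀ v w : {x : P // x ≠ r}, v < w → α' v < α' w} := by
  classical
  symm
  have hprop : ∀ α' : {α' : {x : P // x ≠ r} ≃ Fin n //
      ∀ v w : {x : P // x ≠ r}, v < w → α' v < α' w},
      ∀ v w : P, v < w → extEquiv r α'.1 v < extEquiv r α'.1 w := by
    intro α' v w hvw
    have hwr : w ≠ r := fun h => hr.not_lt (h ▸ hvw)
    rcases eq_or_ne v r with heq | hvr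
    · subst heq
      rw [extEquiv_apply_self, extEquiv_apply_ne v α'.1 hwr]
      exact Fin.succ_pos _
    · rw [extEquiv_apply_ne r α'.1 hvr, extEquiv_apply_ne r α'.1 hwr]
      rw [Fin.succ_lt_succ_iff]
      exact α'.2 ⟨v, hvr⟩ ⟨w, hwr⟩ (Subtype.mk_lt_mk.2 hvw)
  apply Nat.card_eq_of_bijective (fun α' => ⟨extEquiv r α'.1, hprop α', extEquiv_apply_self r α'.1⟩)
  constructor
  · rintro ⟨α₁, h₁⟩ ⟨α₂, h₂⟩ h
    simp only [Subtype.mk.injEq] at h ⊢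
    ext v
    have := congrArg (fun e : P ≃ Fin (n+1) => e v.1) h
    simp only [extEquiv_apply_ne _ _ v.2] at this
    exact congrArg Fin.val (Fin.succ_injective _ this)
  · rintro ⟨α, hext, h0⟩
    set e : Option {x : P // x ≠ r} ≃ Option (Fin n) :=
      (Equiv.optionSubtypeNe r).trans (α.trans (finSuccEquiv n)) with he
    have hsome : ∀ v : {x : P // x ≠ r}, e (some v) = some ((finSuccEquiv n (α v.1)).get
        (by
          rw [Option.isSome_iff_ne_none]
          intro hnone
          have : α v.1 = 0 := by
            have := (finSuccEquiv n).injective (hnone.trans finSuccEquiv_zero.symm)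
            exact this
          exact v.2 (α.injective (this.trans h0.symm)))) := by
      intro v
      simp [he, Option.some_get]
    have hEq : extEquiv r (Equiv.removeNone e) = α := by
      ext v
      rcases eq_or_ne v r with rfl | hvr
      · rw [extEquiv_apply_self, h0]
      · rw [extEquiv_apply_ne r _ hvr]
        have h1 : some (Equiv.removeNone e ⟨v, hvr⟩) = e (some ⟨v, hvr⟩) :=
          Equiv.removeNone_some e ⟨_, hsome ⟨v, hvr⟩⟩
        rw [hsome ⟨v, hvr⟩] at h1
        have h2 := congrArg (finSuccEquiv n).symm (congrArg (fun o => o) h1)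
        have h3 : (finSuccEquiv n).symm (some (Equiv.removeNone e ⟨v, hvr⟩))
            = (Equiv.removeNone e ⟨v, hvr⟩).succ := finSuccEquiv_symm_some _
        rw [h1] at h3
        rw [← h3]
        simp [Option.some_get]
    refine ⟨⟨Equiv.removeNone e, ?_⟩, Subtype.ext hEq⟩
    intro v w hvw
    have := hext v.1 w.1 (Subtype.mk_lt_mk.1 hvw)
    rw [← hEq, extEquiv_apply_ne r _ v.2, extEquiv_apply_ne r _ w.2] at this
    simpa [Fin.succ_lt_succ_iff] using this

end Comb2

private theorem comb : ∀ (n : ℕ) (P : Type u) [Fintype P] [PartialOrder P],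
    (∀ v u w : P, u < v → w < v → u ≤ w ∨ w ≤ u) → Fintype.card P = n →
    (Nat.card {α : P ≃ Fin (Fintype.card P) // ∀ v w : P, v < w → α v < α w}) *
        (∏ v : P, Nat.card {w : P // v ≤ w}) = n.factorial := by
  intro n
  induction n using Nat.strong_induction_on with
  | _ n IH =>
    intro P _ _ hforest hcard
    classical
    match n, hcard with
    | 0, hcard =>
      have hPe : IsEmpty P := Fintype.card_eq_zero_iff.1 hcard
      have h1 : Nat.card {α : P ≃ Fin (Fintype.card P) // ∀ v w : P, v < w → α v < α w} = 1 := by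
        rw [Nat.card_eq_one_iff_unique]
        constructor
        · constructor
          intro a b
          apply Subtype.ext
          apply Equiv.ext
          intro v
          exact isEmptyElim v
        · refine ⟨⟨⟨fun v => isEmptyElim v, fun i => isEmptyElim (α := Fin 0) (by rw [← hcard]; exact i),
            fun v => isEmptyElim v, fun i => isEmptyElim (α := Fin 0) (by rw [← hcard]; exact i)⟩,
            fun v => isEmptyElim v⟩⟩
      rw [h1, one_mul, Finset.univ_eq_empty, Finset.prod_empty]
      rfl
    | (m+1), hcard =>
      -- partition by image of the minimum
      have hpart : Nat.card {α : P ≃ Fin (m+1) // ∀ v w : P, v < w → α v < α w}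
          = ∑ r ∈ univ.filter (fun r : P => IsMin r),
              Nat.card {α : P ≃ Fin (m+1) // (∀ v w : P, v < w → α v < α w) ∧ α r = 0} := by
        rw [Nat.card_eq_fintype_card, Fintype.card_subtype]
        rw [Finset.card_eq_sum_card_fiberwise
          (f := fun α : P ≃ Fin (m+1) => α.symm 0) (t := univ) (fun x _ => mem_univ _)]
        rw [← Finset.sum_filter_add_sum_filter_not univ (fun r : P => IsMin r)]
        have hzero : ∀ r ∈ univ.filter (fun r : P => ¬ IsMin r),
            ((univ.filter (fun α : P ≃ Fin (m+1) => ∀ v w : P, v < w → α v < α w)).filter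
              (fun α => α.symm 0 = r)).card = 0 := by
          intro r hr
          simp only [mem_filter, mem_univ, true_and] at hr
          rw [Finset.card_eq_zero, Finset.filter_eq_empty_iff]
          rintro α hα rfl
          simp only [mem_filter, mem_univ, true_and] at hα
          apply hr
          intro u hu
          rcases eq_or_lt_of_le hu with h | h
          · exact h.ge
          · exact absurd (hα _ _ h) (by simp)
        rw [Finset.sum_congr rfl hzero, Finset.sum_const, smul_eq_mul, mul_zero, add_zero]
        refine Finset.sum_congr rfl fun r hr => ?_
        rw [Nat.card_eq_fintype_card, Fintype.card_subtype, Finset.filter_filter]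
        congr 1
        apply Finset.filter_congr
        intro α _
        rw [and_congr_right_iff]
        intro _
        constructor
        · rintro rfl; simp
        · intro h; rw [← h, Equiv.symm_apply_apply]
      have hT : ∀ r : P, Fintype.card {x : P // x ≠ r} = m := by
        intro r
        have h2 : Fintype.card {x : P // x ≠ r} = Fintype.card P - 1 := by
          have := Fintype.card_subtype_compl (fun x : P => x = r)
          simp only [Fintype.card_subtype_eq] at this
          exact this
        rw [h2, hcard]
        rfl
      have hterm : ∀ r ∈ univ.filter (fun r : P => IsMin r),
          Nat.card {α : P ≃ Fin (m+1) // (∀ v w : P, v < w → α v < α w) ∧ α r = 0} *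
            ∏ v : P, Nat.card {w : P // v ≤ w}
          = Nat.card {w : P // r ≤ w} * m.factorial := by
        intro r hr
        simp only [mem_filter, mem_univ, true_and] at hr
        rw [count_fiber hr]
        -- split the product
        rw [← Finset.mul_prod_erase univ _ (mem_univ r)]
        have hprodT : ∏ v ∈ univ.erase r, Nat.card {w : P // v ≤ w}
            = ∏ v : {x : P // x ≠ r}, Nat.card {w : {x : P // x ≠ r} // v ≤ w} := by
          rw [Finset.prod_subtype (univ.erase r) (p := fun x : P => x ≠ r)
            (fun x => by simp [Finset.mem_erase])]
          exact Finset.prod_congr rfl fun v _ => (hook_restrict hr v).symm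
        rw [hprodT]
        have hforest' : ∀ v u w : {x : P // x ≠ r}, u < v → w < v → u ≤ w ∨ w ≤ u := by
          intro v u w huv hwv
          have := hforest v.1 u.1 w.1 (Subtype.mk_lt_mk.1 huv) (Subtype.mk_lt_mk.1 hwv)
          rcases this with h | h
          · exact Or.inl h
          · exact Or.inr h
        have hIH := IH m (Nat.lt_succ_self m) {x : P // x ≠ r} hforest' (hT r)
        rw [ext_card_congr {x : P // x ≠ r} (hT r)] at hIH
        rw [← hIH]
        ring
      rw [ext_card_congr P hcard, hpart, Finset.sum_mul,
        Finset.sum_congr rfl hterm, ← Finset.sum_mul, sum_min_hooks hforest, hcard,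
        Nat.factorial_succ]


section Meas
variable {P : Type*} [Fintype P] [PartialOrder P]

private lemma hyperplane_null {v w : P} (hvw : v ≠ w) :
    volume {x : P → ℝ | x v = x w} = 0 := by
  classical
  set f : (P → ℝ) →ₗ[ℝ] ℝ := (LinearMap.proj v : (P → ℝ) →ₗ[ℝ] ℝ) - (LinearMap.proj w : (P → ℝ) →ₗ[ℝ] ℝ) with hf
  have hset : {x : P → ℝ | x v = x w} = (LinearMap.ker f : Set (P → ℝ)) := by
    ext x
    simp [hf, LinearMap.mem_ker, sub_eq_zero]
  rw [hset]
  apply Measure.addHaar_submodule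
  intro htop
  have h1 : (Pi.single v 1 : P → ℝ) ∈ LinearMap.ker f := htop ▸ Submodule.mem_top
  simp only [LinearMap.mem_ker, hf, LinearMap.sub_apply, LinearMap.proj_apply] at h1
  rw [Pi.single_eq_same, Pi.single_eq_of_ne (Ne.symm hvw)] at h1
  norm_num at h1

/-- existence of a linear extension -/
private lemma exists_linext :
    ∃ β : P ≃ Fin (Fintype.card P), ∀ v w : P, v < w → β v < β w := by
  classical
  letI : Fintype (LinearExtension P) := ‹Fintype P›
  have hcard : Fintype.card (LinearExtension P) = Fintype.card P := rfl
  let m := monoEquivOfFin (LinearExtension P) hcard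
  refine ⟨Equiv.mk (fun v => m.symm (toLinearExtension v)) (fun i => m i)
    (fun v => m.apply_symm_apply _) (fun i => m.symm_apply_apply _), ?_⟩
  intro v w hvw
  have hlt : toLinearExtension v < toLinearExtension (α := P) w :=
    lt_of_le_of_ne (toLinearExtension.monotone hvw.le) (fun h => hvw.ne h)
  exact m.symm.strictMono hlt

private def Wrap (P : Type*) : Type _ := P

private lemma sorting (β₀ : P ≃ Fin (Fintype.card P)) (hβ₀ : ∀ v w : P, v < w → β₀ v < β₀ w)
    (x : P → ℝ) :
    ∃ α : P ≃ Fin (Fintype.card P),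
      (∀ i j : Fin (Fintype.card P), i ≤ j → x (α.symm j) ≤ x (α.symm i)) ∧
      ((∀ v w : P, v < w → x w ≤ x v) → ∀ v w : P, v < w → α v < α w) := by
  classical
  let f : P → ℝ ×ₗ (Fin (Fintype.card P)) := fun v => toLex (-(x v), β₀ v)
  have hinj : Function.Injective f := fun a b h =>
    β₀.injective (congrArg (fun p => (ofLex p).2) h)
  letI : LinearOrder (Wrap P) := LinearOrder.lift' (fun v : Wrap P => f v) hinj
  letI : Fintype (Wrap P) := ‹Fintype P›
  have hc : Fintype.card (Wrap P) = Fintype.card P := rfl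
  let m := monoEquivOfFin (Wrap P) hc
  have hle : ∀ a b : Wrap P, a ≤ b ↔ f a ≤ f b := fun a b => Iff.rfl
  have hlt : ∀ a b : Wrap P, a < b ↔ f a < f b := by
    intro a b
    rw [lt_iff_le_not_ge, lt_iff_le_not_ge, hle, hle]
  refine ⟨Equiv.mk (fun v => m.symm v) (fun i => m i)
    (fun v => m.apply_symm_apply _) (fun i => m.symm_apply_apply _), ?_, ?_⟩
  · intro i j hij
    have h1 : f (m i) ≤ f (m j) := (hle _ _).1 (m.monotone hij)
    have h2 : -(x (m i)) ≤ -(x (m j)) := by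
      rcases (Prod.Lex.le_iff).1 h1 with h | h
      · exact le_of_lt h
      · exact le_of_eq h.1
    exact neg_le_neg_iff.1 h2
  · intro hx v w hvw
    have h1 : f v < f w := by
      apply (Prod.Lex.lt_iff).2
      rcases eq_or_lt_of_le (neg_le_neg (hx v w hvw)) with h | h
      · exact Or.inr ⟨h, hβ₀ v w hvw⟩
      · exact Or.inl h
    exact m.symm.strictMono ((hlt v w).2 h1)

private def simS (s t : ℝ) (α : P ≃ Fin (Fintype.card P)) : Set (P → ℝ) :=
  {x | (∀ v : P, x v ∈ Set.Icc s t) ∧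
    ∀ i j : Fin (Fintype.card P), i ≤ j → x (α.symm j) ≤ x (α.symm i)}

private lemma measurable_cube (s t : ℝ) :
    MeasurableSet {x : P → ℝ | ∀ v : P, x v ∈ Set.Icc s t} := by
  have : {x : P → ℝ | ∀ v : P, x v ∈ Set.Icc s t} = ⋂ v : P, (fun x => x v) ⁻¹' Set.Icc s t := by
    ext x; simp
  rw [this]
  exact MeasurableSet.iInter fun v => (measurable_pi_apply v) measurableSet_Icc

private lemma measurable_simS (s t : ℝ) (α : P ≃ Fin (Fintype.card P)) :
    MeasurableSet (simS s t α) := by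
  have heq : simS s t α = {x : P → ℝ | ∀ v : P, x v ∈ Set.Icc s t} ∩
      (⋂ i, ⋂ j, ⋂ (_ : i ≤ j), {x : P → ℝ | x (α.symm j) ≤ x (α.symm i)}) := by
    ext x
    simp only [simS, Set.mem_setOf_eq, Set.mem_inter_iff, Set.mem_iInter]
  rw [heq]
  exact (measurable_cube s t).inter (MeasurableSet.iInter fun i => MeasurableSet.iInter fun j =>
    MeasurableSet.iInter fun _ => measurableSet_le (measurable_pi_apply _) (measurable_pi_apply _))

private lemma simS_subset_cube (s t : ℝ) (α : P ≃ Fin (Fintype.card P)) :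
    simS s t α ⊆ {x : P → ℝ | ∀ v : P, x v ∈ Set.Icc s t} := fun _ hx => hx.1

private lemma volume_simS_eq (s t : ℝ) (α β : P ≃ Fin (Fintype.card P)) :
    volume (simS s t α) = volume (simS s t β) := by
  set e : P ≃ P := α.trans β.symm with he
  set T := MeasurableEquiv.piCongrLeft (fun _ : P => ℝ) e with hT
  have hTapp : ∀ (x : P → ℝ) (b : P), T x b = x (e.symm b) := by
    intro x b
    simp [hT, MeasurableEquiv.coe_piCongrLeft, Equiv.piCongrLeft_apply_eq_cast]
  have hpre : T ⁻¹' (simS s t β) = simS s t α := by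
    ext x
    simp only [Set.mem_preimage, simS, Set.mem_setOf_eq]
    constructor
    · rintro ⟨h1, h2⟩
      constructor
      · intro v
        have := h1 (e v)
        rwa [hTapp, Equiv.symm_apply_apply] at this
      · intro i j hij
        have := h2 i j hij
        rw [hTapp, hTapp] at this
        have hs : ∀ k : Fin (Fintype.card P), e.symm (β.symm k) = α.symm k := by
          intro k; simp [he]
        rwa [hs i, hs j] at this
    · rintro ⟨h1, h2⟩
      constructor
      · intro v; rw [hTapp]; exact h1 _
      · intro i j hij
        rw [hTapp, hTapp]
        have hs : ∀ k : Fin (Fintype.card P), e.symm (β.symm k) = α.symm k := by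
          intro k; simp [he]
        rw [hs i, hs j]; exact h2 i j hij
  calc volume (simS s t α) = volume (T ⁻¹' (simS s t β)) := by rw [hpre]
    _ = volume (simS s t β) :=
      (volume_measurePreserving_piCongrLeft (fun _ : P => ℝ) e).measure_preimage
        (measurable_simS s t β).nullMeasurableSet

private lemma simS_aedisjoint (s t : ℝ) {α β : P ≃ Fin (Fintype.card P)} (hab : α ≠ β) :
    volume (simS s t α ∩ simS s t β) = 0 := by
  classical
  -- find a pair ordered oppositely
  set γ : Fin (Fintype.card P) ≃ Fin (Fintype.card P) := α.symm.trans β with hγ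
  have hγne : ∃ i j : Fin (Fintype.card P), i < j ∧ γ j < γ i := by
    by_contra hcon
    push_neg at hcon
    have hmono : StrictMono γ := by
      intro i j hij
      rcases lt_trichotomy (γ i) (γ j) with h | h | h
      · exact h
      · exact absurd (γ.injective h) (ne_of_lt hij)
      · exact absurd h (not_lt.2 (hcon i j hij))
    have hid : ∀ k, γ k = k := by
      have h1 : ∀ k, γ k = (StrictMono.orderIsoOfSurjective γ hmono γ.surjective) k := fun k =>
        (congrFun (StrictMono.coe_orderIsoOfSurjective γ hmono γ.surjective) k).symm
      have h2 : StrictMono.orderIsoOfSurjective γ hmono γ.surjective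
          = OrderIso.refl (Fin (Fintype.card P)) := Subsingleton.elim _ _
      intro k
      rw [h1 k, h2]
      rfl
    apply hab
    ext v
    have h2 := hid (α v)
    simp only [hγ, Equiv.trans_apply, Equiv.symm_apply_apply] at h2
    exact congrArg Fin.val h2.symm
  obtain ⟨i, j, hij, hji⟩ := hγne
  have hsub : simS s t α ∩ simS s t β ⊆ {x : P → ℝ | x (α.symm i) = x (α.symm j)} := by
    rintro x ⟨⟨_, h1⟩, ⟨_, h2⟩⟩
    have ha : x (α.symm j) ≤ x (α.symm i) := h1 i j hij.le
    have hb : x (β.symm (γ i)) ≤ x (β.symm (γ j)) := h2 (γ j) (γ i) hji.le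
    have hs : ∀ k, β.symm (γ k) = α.symm k := by intro k; simp [hγ]
    rw [hs i, hs j] at hb
    exact le_antisymm hb ha
  have hne : α.symm i ≠ α.symm j := fun h => (ne_of_lt hij) (α.symm.injective h)
  exact measure_mono_null hsub (hyperplane_null hne)

private lemma volume_cube (s t : ℝ) (hst : s ≤ t) :
    volume {x : P → ℝ | ∀ v : P, x v ∈ Set.Icc s t}
      = ENNReal.ofReal ((t - s) ^ (Fintype.card P)) := by
  have h : {x : P → ℝ | ∀ v, x v ∈ Set.Icc s t}
      = Set.pi Set.univ (fun _ : P => Set.Icc s t) := by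
    ext x; simp [Set.mem_pi, Pi.le_def, forall_and]
  rw [h, volume_pi_pi, ENNReal.ofReal_pow (sub_nonneg.2 hst)]
  simp [Real.volume_Icc]

private lemma factorial_smul_simS (β₀ : P ≃ Fin (Fintype.card P))
    (hβ₀ : ∀ v w : P, v < w → β₀ v < β₀ w) (s t : ℝ) (hst : s ≤ t) :
    (Fintype.card P).factorial * volume (simS s t β₀)
      = ENNReal.ofReal ((t - s) ^ (Fintype.card P)) := by
  classical
  have hunion : {x : P → ℝ | ∀ v : P, x v ∈ Set.Icc s t}
      = ⋃ α ∈ (univ : Finset (P ≃ Fin (Fintype.card P))), simS s t α := by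
    apply Set.Subset.antisymm
    · intro x hx
      obtain ⟨α, hα, -⟩ := sorting β₀ hβ₀ x
      exact Set.mem_biUnion (mem_univ α) ⟨hx, hα⟩
    · intro x hx
      simp only [Set.mem_iUnion] at hx
      obtain ⟨α, -, hα⟩ := hx
      exact simS_subset_cube s t α hα
  rw [← volume_cube s t hst, hunion,
    measure_biUnion_finset₀ (fun α _ β _ hne => simS_aedisjoint s t hne)
      (fun b _ => (measurable_simS s t b).nullMeasurableSet),
    Finset.sum_congr rfl (fun α _ => volume_simS_eq s t α β₀), Finset.sum_const,
    Finset.card_univ, Fintype.card_equiv β₀]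
  simp [nsmul_eq_mul]

private lemma volume_Omega (β₀ : P ≃ Fin (Fintype.card P))
    (hβ₀ : ∀ v w : P, v < w → β₀ v < β₀ w) (s t : ℝ) :
    volume {x : P → ℝ | (∀ v : P, x v ∈ Set.Icc s t) ∧ ∀ v w : P, v < w → x w ≤ x v}
      = (Nat.card {α : P ≃ Fin (Fintype.card P) // ∀ v w : P, v < w → α v < α w})
          * volume (simS s t β₀) := by
  classical
  set E := univ.filter (fun α : P ≃ Fin (Fintype.card P) => ∀ v w : P, v < w → α v < α w)
    with hE
  have hΩ : {x : P → ℝ | (∀ v : P, x v ∈ Set.Icc s t) ∧ ∀ v w : P, v < w → x w ≤ x v}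
      = ⋃ α ∈ E, simS s t α := by
    apply Set.Subset.antisymm
    · rintro x ⟨hx1, hx2⟩
      obtain ⟨α, hα1, hα2⟩ := sorting β₀ hβ₀ x
      have hmem : α ∈ E := by
        simp only [hE, mem_filter, mem_univ, true_and]
        exact hα2 hx2
      exact Set.mem_biUnion hmem ⟨hx1, hα1⟩
    · intro x hx
      simp only [Set.mem_iUnion] at hx
      obtain ⟨α, hαE, hα⟩ := hx
      simp only [hE, mem_filter, mem_univ, true_and] at hαE
      refine ⟨hα.1, fun v w hvw => ?_⟩
      have := hα.2 (α v) (α w) (hαE v w hvw).le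
      simpa using this
  rw [hΩ, measure_biUnion_finset₀ (fun α _ β _ hne => simS_aedisjoint s t hne)
      (fun b _ => (measurable_simS s t b).nullMeasurableSet),
    Finset.sum_congr rfl (fun α _ => volume_simS_eq s t α β₀), Finset.sum_const]
  rw [Nat.card_eq_fintype_card, Fintype.card_subtype]
  simp [nsmul_eq_mul, hE]

end Meas

/-- For a finite forest poset `P` (the strict lower set of every element is
totally ordered), the number of linear extensions satisfies
`e(P) · ∏_v |{w : v ≤ w}| = n!`; equivalently the order simplex has volume
`(t−s)^n / ∏_v |{w : v ≤ w}|`. -/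
theorem stmt12 {P : Type*} [Fintype P] [PartialOrder P]
    (hforest : ∀ v u w : P, u < v → w < v → u ≤ w ∨ w ≤ u) :
    (Nat.card {α : P ≃ Fin (Fintype.card P) // ∀ v w : P, v < w → α v < α w}) *
        (∏ v : P, Nat.card {w : P // v ≤ w}) = (Fintype.card P).factorial ∧
      ∀ s t : ℝ, s ≤ t →
        volume {x : P → ℝ | (∀ v : P, x v ∈ Set.Icc s t) ∧ ∀ v w : P, v < w → x w ≤ x v}
          = ENNReal.ofReal
              ((t - s) ^ (Fintype.card P) / ∏ v : P, (Nat.card {w : P // v ≤ w} : ℝ)) := by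
  classical
  obtain ⟨β₀, hβ₀⟩ := exists_linext (P := P)
  have hcomb := comb (Fintype.card P) P hforest rfl
  refine ⟨hcomb, ?_⟩
  intro s t hst
  have hfac := factorial_smul_simS β₀ hβ₀ s t hst
  have hHpos : 0 < ∏ v : P, Nat.card {w : P // v ≤ w} := by
    apply Finset.prod_pos
    intro v _
    have : Nonempty {w : P // v ≤ w} := ⟨⟨v, le_refl v⟩⟩
    exact Nat.card_pos
  have hepos : 0 < Nat.card {α : P ≃ Fin (Fintype.card P) // ∀ v w : P, v < w → α v < α w} := by
    have : Nonempty {α : P ≃ Fin (Fintype.card P) // ∀ v w : P, v < w → α v < α w} :=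
      ⟨⟨β₀, hβ₀⟩⟩
    exact Nat.card_pos
  have hn0 : (((Fintype.card P).factorial : ℕ) : ENNReal) ≠ 0 :=
    Nat.cast_ne_zero.2 (Nat.factorial_ne_zero _)
  have hnt : (((Fintype.card P).factorial : ℕ) : ENNReal) ≠ ⊤ := ENNReal.natCast_ne_top _
  have hc : volume (simS s t β₀)
      = ENNReal.ofReal ((t - s) ^ (Fintype.card P)) / ((Fintype.card P).factorial : ENNReal) :=
    (ENNReal.eq_div_iff hn0 hnt).2 hfac
  rw [volume_Omega β₀ hβ₀ s t, hc]
  have hcastH : (∏ v : P, (Nat.card {w : P // v ≤ w} : ℝ))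
      = (((∏ v : P, Nat.card {w : P // v ≤ w} : ℕ)) : ℝ) := by
    push_cast
    ring
  rw [hcastH, ENNReal.ofReal_div_of_pos (by exact_mod_cast hHpos), ENNReal.ofReal_natCast]
  have he0 : ((Nat.card {α : P ≃ Fin (Fintype.card P) // ∀ v w : P, v < w → α v < α w} : ℕ)
      : ENNReal) ≠ 0 := Nat.cast_ne_zero.2 (Nat.pos_iff_ne_zero.1 hepos)
  have het : ((Nat.card {α : P ≃ Fin (Fintype.card P) // ∀ v w : P, v < w → α v < α w} : ℕ)
      : ENNReal) ≠ ⊤ := ENNReal.natCast_ne_top _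
  rw [← ENNReal.mul_div_mul_left (ENNReal.ofReal ((t - s) ^ (Fintype.card P)))
    (((∏ v : P, Nat.card {w : P // v ≤ w} : ℕ)) : ENNReal) he0 het]
  have hmul : ((Nat.card {α : P ≃ Fin (Fintype.card P) // ∀ v w : P, v < w → α v < α w}
        : ENNReal)) * (((∏ v : P, Nat.card {w : P // v ≤ w} : ℕ)) : ENNReal)
      = (((Fintype.card P).factorial : ℕ) : ENNReal) := by
    rw [← Nat.cast_mul]
    exact_mod_cast congrArg (Nat.cast : ℕ → ENNReal) hcomb
  rw [hmul, mul_div_assoc]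
end

section
/- Let P be a finite poset with n elements and define the poset factorial Q! := |Q|!/e(Q) for any finite poset Q, where e(Q) is its number of linear extensions. Then for all real numbers h, k ≥ 0: (h + k)^n / P! = Σ_D h^{n−|D|} k^{|D|} / ((P∖D)! · D!), where the sum runs over all down-sets D of P (subsets D with w ∈ D and v < w implying v ∈ D), and P∖D and D carry the induced partial orders. -/
open scoped Classical

/-- The factorial of a finite poset: `Q! = |Q|!/e(Q)`, where `e(Q)` is the number of linear
extensions of `Q`. -/
noncomputable def posetFactorial (Q : Type*) [Fintype Q] [PartialOrder Q] : ℝ :=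
  ((Fintype.card Q).factorial : ℝ) /
    (Nat.card {α : Q ≃ Fin (Fintype.card Q) // ∀ v w : Q, v < w → α v < α w} : ℝ)

/-- Order-preserving bijections from a finite poset onto `Fin r`. -/
def ExtTo (Q : Type*) [Fintype Q] [PartialOrder Q] (r : ℕ) : Type _ :=
  {α : Q ≃ Fin r // ∀ v w : Q, v < w → α v < α w}

instance extToFinite (Q : Type*) [Fintype Q] [PartialOrder Q] (r : ℕ) :
    Finite (ExtTo Q r) := by
  unfold ExtTo; infer_instance

noncomputable instance extToFintype (Q : Type*) [Fintype Q] [PartialOrder Q] (r : ℕ) :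
    Fintype (ExtTo Q r) := Fintype.ofFinite _

lemma extTo_nonempty (Q : Type*) [Fintype Q] [PartialOrder Q] :
    Nonempty (ExtTo Q (Fintype.card Q)) := by
  letI : Fintype (LinearExtension Q) := ‹Fintype Q›
  have hcard : Fintype.card (LinearExtension Q) = Fintype.card Q := rfl
  let e : Fin (Fintype.card Q) ≃o LinearExtension Q := monoEquivOfFin _ hcard
  let f : Q → Fin (Fintype.card Q) := fun v => e.symm (toLinearExtension v)
  have hmono : ∀ v w : Q, v < w → f v < f w := by
    intro v w hvw
    apply e.symm.strictMono
    have h1 : toLinearExtension v ≤ toLinearExtension w := toLinearExtension.monotone hvw.le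
    have h2 : toLinearExtension v ≠ toLinearExtension w := by
      intro hEq
      exact absurd (show v = w from hEq) hvw.ne
    exact h1.lt_of_ne h2
  have hinj : Function.Injective f := by
    intro a b hab
    have h1 : (toLinearExtension a : LinearExtension Q) = toLinearExtension b :=
      e.symm.injective hab
    exact h1
  have hbij : Function.Bijective f :=
    (Fintype.bijective_iff_injective_and_card f).mpr ⟨hinj, by simp⟩
  exact ⟨⟨Equiv.ofBijective f hbij, hmono⟩⟩

lemma extTo_pos (Q : Type*) [Fintype Q] [PartialOrder Q] {r : ℕ}
    (hr : Fintype.card Q = r) : 0 < Nat.card (ExtTo Q r) := by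
  subst hr
  have := extTo_nonempty Q
  exact Nat.card_pos

lemma pf_eq (Q : Type*) [Fintype Q] [PartialOrder Q] {r : ℕ}
    (hr : Fintype.card Q = r) :
    posetFactorial Q = (r.factorial : ℝ) / (Nat.card (ExtTo Q r) : ℝ) := by
  subst hr; rfl

lemma card_mem_eq {P : Type*} [Fintype P] (D : Finset P) :
    Fintype.card {v : P // v ∈ D} = D.card :=
  (Fintype.card_congr (Equiv.refl _)).trans (Fintype.card_coe D)

lemma card_not_mem_eq {P : Type*} [Fintype P] (D : Finset P) :
    Fintype.card {v : P // v ∉ D} = Fintype.card P - D.card := by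
  rw [Fintype.card_subtype_compl, card_mem_eq]

/-- Shrink `{i : Fin n // i < m}` to `Fin m`. -/
def finShrink {m n : ℕ} (hm : m ≤ n) : {i : Fin n // (i : ℕ) < m} ≃ Fin m where
  toFun i := ⟨i.1, i.2⟩
  invFun j := ⟨⟨j.1, lt_of_lt_of_le j.2 hm⟩, j.2⟩
  left_inv i := Subtype.ext (Fin.ext rfl)
  right_inv j := Fin.ext rfl

/-- Drop the first `m` values: `{i : Fin n // ¬ i < m} ≃ Fin (n - m)`. -/
def finDrop {m n : ℕ} (hm : m ≤ n) : {i : Fin n // ¬ (i : ℕ) < m} ≃ Fin (n - m) where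
  toFun i := ⟨i.1 - m, by have h1 := i.1.isLt; have h2 := i.2; omega⟩
  invFun j := ⟨⟨m + j.1, by have := j.2; omega⟩, by show ¬ m + j.1 < m; omega⟩
  left_inv i := Subtype.ext (Fin.ext (by have := i.2; simp; omega))
  right_inv j := Fin.ext (by simp)

/-- Assemble a linear extension of `P` from linear extensions of a down-set `D`
and of its complement. -/
noncomputable def mkEquiv {P : Type*} [Fintype P] [PartialOrder P] (D : Finset P)
    {m r : ℕ} (hmk : m + r = Fintype.card P)
    (β : {v : P // v ∈ D} ≃ Fin m) (γ : {v : P // v ∉ D} ≃ Fin r) :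
    P ≃ Fin (Fintype.card P) :=
  (Equiv.sumCompl (· ∈ D)).symm.trans
    ((β.sumCongr γ).trans (finSumFinEquiv.trans (finCongr hmk)))

lemma mkEquiv_val_mem {P : Type*} [Fintype P] [PartialOrder P] {D : Finset P}
    {m r : ℕ} (hmk : m + r = Fintype.card P)
    (β : {v : P // v ∈ D} ≃ Fin m) (γ : {v : P // v ∉ D} ≃ Fin r)
    {v : P} (hv : v ∈ D) :
    (mkEquiv D hmk β γ v : ℕ) = (β ⟨v, hv⟩ : ℕ) := by
  simp [mkEquiv, Equiv.sumCompl_symm_apply_of_pos hv]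

lemma mkEquiv_val_not_mem {P : Type*} [Fintype P] [PartialOrder P] {D : Finset P}
    {m r : ℕ} (hmk : m + r = Fintype.card P)
    (β : {v : P // v ∈ D} ≃ Fin m) (γ : {v : P // v ∉ D} ≃ Fin r)
    {v : P} (hv : v ∉ D) :
    (mkEquiv D hmk β γ v : ℕ) = m + (γ ⟨v, hv⟩ : ℕ) := by
  simp [mkEquiv, Equiv.sumCompl_symm_apply_of_neg hv]

lemma alg (a b eA eB F1 F2 F C : ℝ) (hA : eA ≠ 0) (hB : eB ≠ 0) (h1 : F1 ≠ 0)
    (h2 : F2 ≠ 0) (hF : F ≠ 0) (hC : C * F2 * F1 = F) :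
    b * a * C * (eA * eB) / F = a * b / (F1 / eB * (F2 / eA)) := by
  field_simp
  linear_combination (b * a) * hC

/-- Splitting linear extensions of `P` along down-sets of size `m`. -/
lemma split {P : Type*} [Fintype P] [PartialOrder P] (m : ℕ) (hm : m ≤ Fintype.card P) :
    Nat.card (ExtTo P (Fintype.card P)) =
      ∑ D ∈ Finset.univ.filter
        (fun D : Finset P => (∀ v w : P, w ∈ D → v < w → v ∈ D) ∧ D.card = m),
        Nat.card (ExtTo {v : P // v ∈ D} m) *
          Nat.card (ExtTo {v : P // v ∉ D} (Fintype.card P - m)) := by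
  have hmk : m + (Fintype.card P - m) = Fintype.card P := Nat.add_sub_cancel' hm
  set p : Finset P → Prop :=
    fun D => (∀ v w : P, w ∈ D → v < w → v ∈ D) ∧ D.card = m with hp
  let G : (Σ D : {D : Finset P // p D},
      ExtTo {v : P // v ∈ D.1} m × ExtTo {v : P // v ∉ D.1} (Fintype.card P - m)) →
      ExtTo P (Fintype.card P) := fun x =>
    ⟨mkEquiv x.1.1 hmk x.2.1.1 x.2.2.1, by
      intro v w hvw
      rw [Fin.lt_def]
      by_cases hv : v ∈ x.1.1 <;> by_cases hw : w ∈ x.1.1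
      · rw [mkEquiv_val_mem _ _ _ hv, mkEquiv_val_mem _ _ _ hw]
        exact x.2.1.2 ⟨v, hv⟩ ⟨w, hw⟩ (Subtype.mk_lt_mk.mpr hvw)
      · rw [mkEquiv_val_mem _ _ _ hv, mkEquiv_val_not_mem _ _ _ hw]
        have := (x.2.1.1 ⟨v, hv⟩).isLt
        omega
      · exact absurd (x.1.2.1 v w hw hvw) hv
      · rw [mkEquiv_val_not_mem _ _ _ hv, mkEquiv_val_not_mem _ _ _ hw]
        have h1 : (x.2.2.1 ⟨v, hv⟩ : ℕ) < (x.2.2.1 ⟨w, hw⟩ : ℕ) :=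
          x.2.2.2 ⟨v, hv⟩ ⟨w, hw⟩ (Subtype.mk_lt_mk.mpr hvw)
        omega⟩
  have hbij : Function.Bijective G := by
    constructor
    · rintro ⟨⟨D, hD⟩, ⟨β, hβ⟩, ⟨γ, hγ⟩⟩ ⟨⟨D', hD'⟩, ⟨β', hβ'⟩, ⟨γ', hγ'⟩⟩ hEq
      have hα : ∀ v : P, (mkEquiv D hmk β γ v : ℕ) = (mkEquiv D' hmk β' γ' v : ℕ) := by
        intro v
        have h1 : (mkEquiv D hmk β γ : P ≃ Fin (Fintype.card P)) = mkEquiv D' hmk β' γ' :=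
          congrArg Subtype.val hEq
        rw [h1]
      have hDD : D = D' := by
        ext v
        constructor
        · intro hv
          by_contra hv'
          have h2 := hα v
          rw [mkEquiv_val_mem _ _ _ hv, mkEquiv_val_not_mem _ _ _ hv'] at h2
          have := (β ⟨v, hv⟩).isLt
          omega
        · intro hv
          by_contra hv'
          have h2 := hα v
          rw [mkEquiv_val_not_mem _ _ _ hv', mkEquiv_val_mem _ _ _ hv] at h2
          have := (β' ⟨v, hv⟩).isLt
          omega
      subst hDD
      have hββ : β = β' := by
        apply Equiv.ext; intro a
        apply Fin.ext
        have h2 := hα a.1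
        rw [mkEquiv_val_mem _ _ _ a.2, mkEquiv_val_mem _ _ _ a.2] at h2
        exact h2
      have hγγ : γ = γ' := by
        apply Equiv.ext; intro a
        apply Fin.ext
        have h2 := hα a.1
        rw [mkEquiv_val_not_mem _ _ _ a.2, mkEquiv_val_not_mem _ _ _ a.2] at h2
        exact Nat.add_left_cancel h2
      subst hββ; subst hγγ
      rfl
    · rintro ⟨α, hα⟩
      set D := Finset.univ.filter (fun v : P => (α v : ℕ) < m) with hDdef
      have hmem : ∀ v : P, v ∈ D ↔ (α v : ℕ) < m := by
        intro v; simp [hDdef]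
      have hDds : ∀ v w : P, w ∈ D → v < w → v ∈ D := by
        intro v w hw hvw
        have h1 := (hmem w).mp hw
        have h2 : (α v : ℕ) < (α w : ℕ) := hα v w hvw
        exact (hmem v).mpr (h2.trans h1)
      let β : {v : P // v ∈ D} ≃ Fin m :=
        (Equiv.subtypeEquiv α (fun v => hmem v)).trans (finShrink hm)
      let γ : {v : P // v ∉ D} ≃ Fin (Fintype.card P - m) :=
        (Equiv.subtypeEquiv α (fun v => not_congr (hmem v))).trans (finDrop hm)
      have hβval : ∀ a : {v : P // v ∈ D}, (β a : ℕ) = (α a.1 : ℕ) := fun a => rfl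
      have hγval : ∀ a : {v : P // v ∉ D}, (γ a : ℕ) = (α a.1 : ℕ) - m := fun a => rfl
      have hDcard : D.card = m := by
        rw [← Fintype.card_coe D]
        exact (Fintype.card_congr β).trans (Fintype.card_fin m)
      have hβmono : ∀ a b : {v : P // v ∈ D}, a < b → β a < β b := by
        intro a b hab
        rw [Fin.lt_def, hβval, hβval]
        exact hα a.1 b.1 (Subtype.coe_lt_coe.mpr hab)
      have hγmono : ∀ a b : {v : P // v ∉ D}, a < b → γ a < γ b := by
        intro a b hab
        rw [Fin.lt_def, hγval, hγval]
        have h1 : (α a.1 : ℕ) < (α b.1 : ℕ) := hα a.1 b.1 (Subtype.coe_lt_coe.mpr hab)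
        have h2 : ¬ (α a.1 : ℕ) < m := fun hc => a.2 ((hmem a.1).mpr hc)
        have h3 : ¬ (α b.1 : ℕ) < m := fun hc => b.2 ((hmem b.1).mpr hc)
        omega
      refine ⟨⟨⟨D, hDds, hDcard⟩, ⟨β, hβmono⟩, ⟨γ, hγmono⟩⟩, ?_⟩
      apply Subtype.ext
      apply Equiv.ext
      intro v
      apply Fin.ext
      by_cases hv : v ∈ D
      · rw [show ((⟨α, hα⟩ : ExtTo P (Fintype.card P)) : P ≃ Fin (Fintype.card P)) v = α v
          from rfl]
        rw [mkEquiv_val_mem _ _ _ hv, hβval]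
      · rw [show ((⟨α, hα⟩ : ExtTo P (Fintype.card P)) : P ≃ Fin (Fintype.card P)) v = α v
          from rfl]
        rw [mkEquiv_val_not_mem _ _ _ hv]
        show m + ((α v : ℕ) - m) = (α v : ℕ)
        have h2 : ¬ (α v : ℕ) < m := fun hc => hv ((hmem v).mpr hc)
        omega
  have h0 := (Nat.card_eq_of_bijective G hbij).symm
  rw [h0, Nat.card_eq_fintype_card, Fintype.card_sigma]
  rw [Finset.sum_subtype (p := p) (Finset.univ.filter p)
    (fun D => by simp) (fun E : Finset P =>
      Nat.card (ExtTo {v : P // v ∈ E} m) *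
        Nat.card (ExtTo {v : P // v ∉ E} (Fintype.card P - m)))]
  apply Finset.sum_congr rfl
  intro D _
  rw [Fintype.card_prod, Nat.card_eq_fintype_card, Nat.card_eq_fintype_card]

/-- Binomial formula for poset factorials: for `h, k ≥ 0`,
`(h+k)^n / P! = Σ_D h^{n−|D|} k^{|D|} / ((P∖D)!·D!)`, the sum running over all down-sets
`D` of `P`. -/
theorem stmt13 {P : Type*} [Fintype P] [PartialOrder P] (h k : ℝ)
    (hh : 0 ≤ h) (hk : 0 ≤ k) :
    (h + k) ^ (Fintype.card P) / posetFactorial P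
      = ∑ D ∈ Finset.univ.filter
          (fun D : Finset P => ∀ v w : P, w ∈ D → v < w → v ∈ D),
          h ^ (Fintype.card P - D.card) * k ^ D.card /
            (posetFactorial {v : P // v ∉ D} * posetFactorial {v : P // v ∈ D}) := by
  set n := Fintype.card P with hn
  have hsum : ∀ j ∈ Finset.range (n + 1),
      k ^ j * h ^ (n - j) * (n.choose j : ℝ) * (Nat.card (ExtTo P n) : ℝ) / (n.factorial : ℝ)
        = ∑ D ∈ Finset.univ.filter
            (fun D : Finset P => (∀ v w : P, w ∈ D → v < w → v ∈ D) ∧ D.card = j),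
            h ^ (n - D.card) * k ^ D.card /
              (posetFactorial {v : P // v ∉ D} * posetFactorial {v : P // v ∈ D}) := by
    intro j hj
    have hjn : j ≤ n := Nat.lt_succ_iff.mp (Finset.mem_range.mp hj)
    rw [split j hjn, Nat.cast_sum, Finset.mul_sum, Finset.sum_div]
    apply Finset.sum_congr rfl
    intro D hD
    rw [Finset.mem_filter] at hD
    obtain ⟨-, hDds, hDcard⟩ := hD
    subst hDcard
    rw [pf_eq {v : P // v ∉ D} (card_not_mem_eq D), pf_eq {v : P // v ∈ D} (card_mem_eq D)]
    have h1 : (0 : ℝ) < (Nat.card (ExtTo {v : P // v ∈ D} D.card) : ℝ) := by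
      exact_mod_cast extTo_pos _ (card_mem_eq D)
    have h2 : (0 : ℝ) < (Nat.card (ExtTo {v : P // v ∉ D} (n - D.card)) : ℝ) := by
      exact_mod_cast extTo_pos _ (card_not_mem_eq D)
    have h3 : (n.choose D.card : ℝ) * (D.card.factorial : ℝ) * ((n - D.card).factorial : ℝ)
        = (n.factorial : ℝ) := by
      exact_mod_cast congrArg (Nat.cast : ℕ → ℝ)
        (Nat.choose_mul_factorial_mul_factorial hjn)
    have hf1 : ((n - D.card).factorial : ℝ) ≠ 0 := by
      exact_mod_cast (Nat.factorial_pos _).ne'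
    have hf2 : ((D.card).factorial : ℝ) ≠ 0 := by
      exact_mod_cast (Nat.factorial_pos _).ne'
    have hf3 : ((n).factorial : ℝ) ≠ 0 := by
      exact_mod_cast (Nat.factorial_pos _).ne'
    rw [Nat.cast_mul]
    exact alg _ _ _ _ _ _ _ _ h1.ne' h2.ne' hf1 hf2 hf3 h3
  calc (h + k) ^ n / posetFactorial P
      = (∑ j ∈ Finset.range (n + 1), k ^ j * h ^ (n - j) * (n.choose j : ℝ))
          * (Nat.card (ExtTo P n) : ℝ) / (n.factorial : ℝ) := by
        rw [pf_eq P hn.symm, div_div_eq_mul_div, add_comm h k, add_pow]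
    _ = ∑ j ∈ Finset.range (n + 1),
          k ^ j * h ^ (n - j) * (n.choose j : ℝ) * (Nat.card (ExtTo P n) : ℝ)
            / (n.factorial : ℝ) := by
        rw [Finset.sum_mul, Finset.sum_div]
    _ = ∑ j ∈ Finset.range (n + 1),
          ∑ D ∈ Finset.univ.filter
            (fun D : Finset P => (∀ v w : P, w ∈ D → v < w → v ∈ D) ∧ D.card = j),
            h ^ (n - D.card) * k ^ D.card /
              (posetFactorial {v : P // v ∉ D} * posetFactorial {v : P // v ∈ D}) :=
        Finset.sum_congr rfl hsum
    _ = ∑ D ∈ Finset.univ.filter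
          (fun D : Finset P => ∀ v w : P, w ∈ D → v < w → v ∈ D),
          h ^ (n - D.card) * k ^ D.card /
            (posetFactorial {v : P // v ∉ D} * posetFactorial {v : P // v ∈ D}) := by
        rw [← Finset.sum_fiberwise_of_maps_to
          (g := Finset.card) (t := Finset.range (n + 1))
          (fun D _ => Finset.mem_range.mpr (Nat.lt_succ_of_le (Finset.card_le_univ D)))]
        apply Finset.sum_congr rfl
        intro j _
        rw [Finset.filter_filter]
end

section
/- Let U and V be compact subsets of ℂ^n, and let r > 0 be such that for every y ∈ V the closed polydisc { z ∈ ℂ^n : |z_α − y_α| ≤ r for all α } is contained in U. Let f₁, …, f_k be first-order differential operators f_j = Σ_{α=1}^n f_j^α ∂_α whose coefficients f_j^α are holomorphic on an open set containing U, and set M := max_{j,α} sup_{z ∈ U} |f_j^α(z)|. Then for every function φ holomorphic on an open set containing U, sup_{y ∈ V} |(f₁ ∘ f₂ ∘ ⋯ ∘ f_k φ)(y)| ≤ (nM/r)^k · k^k · sup_{z ∈ U} |φ(z)|. -/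
/-- The first-order differential operator `φ ↦ Σ_α g^α ∂_α φ` with coefficients `g`. -/
noncomputable def opApply {n : ℕ} (g : Fin n → (Fin n → ℂ) → ℂ)
    (φ : (Fin n → ℂ) → ℂ) : (Fin n → ℂ) → ℂ :=
  fun y => ∑ α, g α y * fderiv ℂ φ y (Pi.single α 1)

/-- The successive application `f_{k-1} ∘ ⋯ ∘ f_1 ∘ f_0` of a family of first-order
differential operators to a function. -/
noncomputable def opIter {n : ℕ} (f : ℕ → Fin n → (Fin n → ℂ) → ℂ) :
    ℕ → ((Fin n → ℂ) → ℂ) → ((Fin n → ℂ) → ℂ)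
  | 0, φ => φ
  | j + 1, φ => opApply (f j) (opIter f j φ)


section Auxiliary

open Metric MeasureTheory Complex

set_option maxHeartbeats 1000000
set_option synthInstance.maxHeartbeats 200000

variable {n : ℕ} {F : (Fin n → ℂ) → ℂ} {O : Set (Fin n → ℂ)}

lemma hasDerivAt_line {n : ℕ} {F : (Fin n → ℂ) → ℂ} {z v : Fin n → ℂ} {w : ℂ}
    (hF : DifferentiableAt ℂ F (z + w • v)) :
    HasDerivAt (fun w : ℂ => F (z + w • v)) (fderiv ℂ F (z + w • v) v) w := by
  have h1 : HasDerivAt (fun w : ℂ => z + w • v) v w := by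
    simpa using ((hasDerivAt_id w).smul_const v).const_add z
  exact hF.hasFDerivAt.comp_hasDerivAt w h1

lemma abs_fderiv_single_le {n : ℕ} {F : (Fin n → ℂ) → ℂ} {O : Set (Fin n → ℂ)}
    (hO : IsOpen O) (hF : DifferentiableOn ℂ F O) {z : Fin n → ℂ} (α : Fin n)
    {ρ C : ℝ} (hρ : 0 < ρ)
    (hsub : ∀ w : ℂ, ‖w‖ ≤ ρ → z + w • (Pi.single α 1 : Fin n → ℂ) ∈ O)
    (hC : ∀ w : ℂ, ‖w‖ ≤ ρ → ‖F (z + w • (Pi.single α 1 : Fin n → ℂ))‖ ≤ C) :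
    ‖fderiv ℂ F z ((Pi.single α 1 : Fin n → ℂ))‖ ≤ C / ρ := by
  set g : ℂ → ℂ := fun w => F (z + w • (Pi.single α 1 : Fin n → ℂ)) with hg
  have hdiff : ∀ w ∈ closedBall (0:ℂ) ρ, DifferentiableAt ℂ g w := by
    intro w hw
    rw [mem_closedBall_zero_iff] at hw
    have hFat : DifferentiableAt ℂ F (z + w • (Pi.single α 1 : Fin n → ℂ)) :=
      hF.differentiableAt (hO.mem_nhds (hsub w hw))
    exact (hasDerivAt_line hFat).differentiableAt
  have hdo : DifferentiableOn ℂ g (closedBall (0:ℂ) ρ) :=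
    fun w hw => (hdiff w hw).differentiableWithinAt
  have hdc : DiffContOnCl ℂ g (ball (0:ℂ) ρ) :=
    (hdo.mono closure_ball_subset_closedBall).diffContOnCl
  have hb : ∀ w ∈ sphere (0:ℂ) ρ, ‖g w‖ ≤ C := by
    intro w hw
    rw [mem_sphere_zero_iff_norm] at hw
    exact hC w (le_of_eq hw)
  have key : ‖deriv g 0‖ ≤ C / ρ :=
    Complex.norm_deriv_le_of_forall_mem_sphere_norm_le hρ hdc hb
  have h0 : deriv g 0 = fderiv ℂ F z ((Pi.single α 1 : Fin n → ℂ)) := by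
    have hFat : DifferentiableAt ℂ F (z + (0:ℂ) • (Pi.single α 1 : Fin n → ℂ)) := by
      simpa using hF.differentiableAt (hO.mem_nhds (hsub 0 (by simpa using hρ.le)))
    have := (hasDerivAt_line (v := (Pi.single α 1 : Fin n → ℂ)) hFat).deriv
    simpa using this
  rw [← h0]
  exact key

lemma norm_fderiv_le (hO : IsOpen O) (hF : DifferentiableOn ℂ F O) {z : Fin n → ℂ}
    {ρ C : ℝ} (hρ : 0 < ρ) (hC0 : 0 ≤ C) (hsub : closedBall z ρ ⊆ O)
    (hC : ∀ y ∈ closedBall z ρ, ‖F y‖ ≤ C) :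
    ‖fderiv ℂ F z‖ ≤ n * (C / ρ) := by
  have hmem : ∀ (α : Fin n) (w : ℂ), ‖w‖ ≤ ρ →
      z + w • (Pi.single α 1 : Fin n → ℂ) ∈ closedBall z ρ := by
    intro α w hw
    rw [mem_closedBall, dist_eq_norm]
    simpa [norm_smul, Pi.norm_single] using hw
  have key : ∀ α : Fin n, ‖fderiv ℂ F z ((Pi.single α 1 : Fin n → ℂ))‖ ≤ C / ρ := by
    intro α
    exact abs_fderiv_single_le hO hF α hρ
      (fun w hw => hsub (hmem α w hw)) (fun w hw => hC _ (hmem α w hw))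
  refine ContinuousLinearMap.opNorm_le_bound _ (by positivity) fun u => ?_
  have hu : (fderiv ℂ F z) u = ∑ α, u α • fderiv ℂ F z ((Pi.single α 1 : Fin n → ℂ)) := by
    conv_lhs => rw [pi_eq_sum_univ u, map_sum]
    refine Finset.sum_congr rfl fun α _ => ?_
    rw [_root_.map_smul]
    congr 2
    funext j
    simp [Pi.single_apply, eq_comm]
  rw [hu]
  calc ‖∑ α, u α • fderiv ℂ F z ((Pi.single α 1 : Fin n → ℂ))‖
      ≤ ∑ α : Fin n, ‖u α • fderiv ℂ F z ((Pi.single α 1 : Fin n → ℂ))‖ := norm_sum_le _ _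
    _ ≤ ∑ _α : Fin n, (C / ρ) * ‖u‖ := by
        refine Finset.sum_le_sum fun α _ => ?_
        rw [norm_smul]
        calc ‖u α‖ * ‖fderiv ℂ F z ((Pi.single α 1 : Fin n → ℂ))‖
            ≤ ‖u‖ * (C / ρ) := by
              refine mul_le_mul (norm_le_pi_norm u α) (key α) (norm_nonneg _) (norm_nonneg _)
          _ = (C / ρ) * ‖u‖ := mul_comm _ _
    _ = n * (C / ρ) * ‖u‖ := by simp [Finset.sum_const, mul_assoc]

lemma differentiableOn_fderiv_single (hO : IsOpen O) (hF : DifferentiableOn ℂ F O) (α : Fin n) :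
    DifferentiableOn ℂ (fun z => fderiv ℂ F z ((Pi.single α 1 : Fin n → ℂ))) O := by
  intro z₀ hz₀
  suffices h : DifferentiableAt ℂ (fun z => fderiv ℂ F z ((Pi.single α 1 : Fin n → ℂ))) z₀ from
    h.differentiableWithinAt
  obtain ⟨δ, hδ0, hδ⟩ : ∃ δ > 0, closedBall z₀ δ ⊆ O :=
    nhds_basis_closedBall.mem_iff.1 (hO.mem_nhds hz₀)
  set ε : ℝ := δ / 3 with hεdef
  have hε : 0 < ε := by positivity
  obtain ⟨C, hC⟩ :=
    (isCompact_closedBall z₀ δ).exists_bound_of_continuousOn (hF.continuousOn.mono hδ)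
  have hC0 : 0 ≤ C := le_trans (norm_nonneg _) (hC z₀ (mem_closedBall_self hδ0.le))
  set eα : Fin n → ℂ := (Pi.single α 1 : Fin n → ℂ) with heα
  have heαnorm : ‖eα‖ = 1 := by simp [heα, Pi.norm_single]
  have hdist : ∀ (z : Fin n → ℂ) (w : ℂ), dist (z + w • eα) z = ‖w‖ := by
    intro z w
    rw [dist_eq_norm, add_sub_cancel_left, norm_smul, heαnorm, mul_one]
  have habsε : ∀ θ : ℝ, ‖circleMap 0 ε θ‖ = ε := by
    intro θ; rw [norm_circleMap_zero, abs_of_pos hε]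
  -- fderiv bound on the double ball
  have hfb : ∀ z ∈ closedBall z₀ (2 * ε), ‖fderiv ℂ F z‖ ≤ n * (C / ε) := by
    intro z hz
    have hsub2 : closedBall z ε ⊆ closedBall z₀ δ := by
      apply closedBall_subset_closedBall'
      rw [mem_closedBall] at hz
      rw [hεdef] at hz ⊢; linarith
    refine norm_fderiv_le hO hF hε hC0 (hsub2.trans hδ) fun y hy => ?_
    exact hC y (hsub2 hy)
  have hmem2 : ∀ z ∈ ball z₀ ε, ∀ θ : ℝ, z + circleMap 0 ε θ • eα ∈ closedBall z₀ (2 * ε) := by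
    intro z hz θ
    rw [mem_ball] at hz
    rw [mem_closedBall]
    calc dist (z + circleMap 0 ε θ • eα) z₀
        ≤ dist (z + circleMap 0 ε θ • eα) z + dist z z₀ := dist_triangle _ _ _
      _ ≤ ε + ε := add_le_add (by rw [hdist, habsε]) hz.le
      _ = 2 * ε := by ring
  have h2εδ : closedBall z₀ (2 * ε) ⊆ O := by
    refine (closedBall_subset_closedBall ?_).trans hδ
    rw [hεdef]; linarith
  -- the parametrized integrand
  set μ : Measure ℝ := volume.restrict (Set.Ioc (0:ℝ) (2 * Real.pi)) with hμ
  set c : ℝ → ℂ := fun θ => deriv (circleMap 0 ε) θ * (circleMap 0 ε θ) ^ (-2 : ℤ) with hc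
  set Φ : (Fin n → ℂ) → ℝ → ℂ := fun z θ => c θ • F (z + circleMap 0 ε θ • eα) with hΦ
  have hcabs : ∀ θ : ℝ, ‖c θ‖ = ε⁻¹ := by
    intro θ
    rw [hc, norm_mul, norm_zpow, habsε, deriv_circleMap, norm_mul, habsε, Complex.norm_I]
    rw [mul_one, zpow_neg, zpow_two, mul_inv, ← mul_assoc, mul_inv_cancel₀ hε.ne', one_mul]
  -- integral representation
  have hrep : ∀ z ∈ ball z₀ ε,
      fderiv ℂ F z eα = (2 * Real.pi * I : ℂ)⁻¹ • ∫ θ, Φ z θ ∂μ := by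
    intro z hz
    set g : ℂ → ℂ := fun w => F (z + w • eα) with hgdef
    have hmemO : ∀ w : ℂ, ‖w‖ ≤ ε → z + w • eα ∈ O := by
      intro w hw
      apply h2εδ
      rw [mem_closedBall]
      calc dist (z + w • eα) z₀ ≤ dist (z + w • eα) z + dist z z₀ := dist_triangle _ _ _
        _ ≤ ε + ε := add_le_add (by rw [hdist]; exact hw) (mem_ball.1 hz).le
        _ = 2 * ε := by ring
    have hgd : DifferentiableOn ℂ g (closedBall (0:ℂ) ε) := by
      intro w hw
      rw [mem_closedBall_zero_iff] at hw
      exact (hasDerivAt_line (hF.differentiableAt (hO.mem_nhds (hmemO w hw)))).differentiableAt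
        |>.differentiableWithinAt
    have hdc : DiffContOnCl ℂ g (ball (0:ℂ) ε) :=
      (hgd.mono closure_ball_subset_closedBall).diffContOnCl
    have hderiv : deriv g 0 = (2 * Real.pi * I : ℂ)⁻¹ •
        circleIntegral (fun w => (w - 0) ^ (-2 : ℤ) • g w) 0 ε := by
      have E := hdc.deriv_eq_smul_circleIntegral hε
      have hfun : (fun w : ℂ => (w - 0) ^ (-2 : ℤ) • g w) = fun w => (1 / (w - 0) ^ 2) • g w := by
        funext w; simp [zpow_neg, one_div]
      rw [hfun, E, smul_smul, inv_mul_cancel₀ (mul_ne_zero (mul_ne_zero two_ne_zero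
        (ofReal_ne_zero.mpr Real.pi_ne_zero)) I_ne_zero), one_smul]
    have h0 : deriv g 0 = fderiv ℂ F z eα := by
      have hFat : DifferentiableAt ℂ F (z + (0:ℂ) • eα) := by
        apply hF.differentiableAt (hO.mem_nhds (hmemO 0 (by simpa using hε.le)))
      have := (hasDerivAt_line (v := eα) hFat).deriv
      simpa using this
    rw [← h0, hderiv]
    congr 1
    rw [circleIntegral, intervalIntegral.integral_of_le (by positivity)]
    refine setIntegral_congr_fun measurableSet_Ioc fun θ _ => ?_
    rw [hΦ, hc]
    simp only [sub_zero, smul_smul, hgdef]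
  -- differentiate under the integral
  set F' : (Fin n → ℂ) → ℝ → (Fin n → ℂ) →L[ℂ] ℂ := fun z θ =>
    c θ • fderiv ℂ F (z + circleMap 0 ε θ • eα) with hF'
  have hccont : Continuous c := by
    have h1 : Continuous (circleMap 0 ε) := continuous_circleMap 0 ε
    have h2 : Continuous fun θ => (circleMap 0 ε θ) ^ (-2 : ℤ) := by
      simp only [zpow_neg]
      exact ((h1.pow 2).inv₀ fun θ => pow_ne_zero 2 (circleMap_ne_center hε.ne')).congr
        (fun θ => by rw [zpow_two, sq]; rfl)
    simpa only [hc, deriv_circleMap] using (h1.fun_mul continuous_const).fun_mul h2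
  have hmapcont : Continuous fun θ : ℝ => circleMap 0 ε θ • eα :=
    (continuous_circleMap 0 ε).smul continuous_const
  have hFcont : ∀ z ∈ ball z₀ ε, Continuous fun θ => F (z + circleMap 0 ε θ • eα) := by
    intro z hz
    refine (hF.continuousOn.mono (h2εδ)).comp_continuous
      (continuous_const.add hmapcont) fun θ => hmem2 z hz θ
  have key : HasFDerivAt (fun z => ∫ θ, Φ z θ ∂μ) (∫ θ, F' z₀ θ ∂μ) z₀ := by
    apply hasFDerivAt_integral_of_dominated_of_fderiv_le (𝕜 := ℂ)
      (bound := fun _ => ε⁻¹ * ((n : ℝ) * (C / ε))) (hs := ball_mem_nhds z₀ hε)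
    · filter_upwards [eventually_mem_nhds_iff.mpr (ball_mem_nhds z₀ hε)] with z hz
      exact ((hccont.smul (hFcont z (mem_of_mem_nhds hz))).aestronglyMeasurable)
    · exact ((hccont.smul (hFcont z₀ (mem_ball_self hε))).integrableOn_Ioc)
    · have hm : Measurable fun θ => fderiv ℂ F (z₀ + circleMap 0 ε θ • eα) :=
        (measurable_fderiv ℂ F).comp (continuous_const.add hmapcont).measurable
      exact (hccont.stronglyMeasurable.smul hm.stronglyMeasurable).aestronglyMeasurable
    · refine Filter.Eventually.of_forall fun θ => fun z hz => ?_
      show ‖c θ • fderiv ℂ F (z + circleMap 0 ε θ • eα)‖ ≤ ε⁻¹ * ((n:ℝ) * (C / ε))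
      rw [norm_smul, hcabs θ]
      exact mul_le_mul_of_nonneg_left (hfb _ (hmem2 z hz θ)) (inv_nonneg.2 hε.le)
    · exact integrableOn_const measure_Ioc_lt_top.ne
    · refine Filter.Eventually.of_forall fun θ => fun z hz => ?_
      have hmemO : z + circleMap 0 ε θ • eα ∈ O := h2εδ (hmem2 z hz θ)
      have hFd : HasFDerivAt F (fderiv ℂ F (z + circleMap 0 ε θ • eα))
          (z + circleMap 0 ε θ • eα) := (hF.differentiableAt (hO.mem_nhds hmemO)).hasFDerivAt
      have htrans : HasFDerivAt (fun z : Fin n → ℂ => z + circleMap 0 ε θ • eα)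
          (ContinuousLinearMap.id ℂ (Fin n → ℂ)) z := (hasFDerivAt_id z).add_const _
      have hcomp := hFd.comp z htrans
      rw [ContinuousLinearMap.comp_id] at hcomp
      exact hcomp.const_smul (c θ)
  have hev : (fun z => fderiv ℂ F z eα) =ᶠ[nhds z₀]
      fun z => (2 * Real.pi * I : ℂ)⁻¹ • ∫ θ, Φ z θ ∂μ :=
    Filter.eventuallyEq_of_mem (ball_mem_nhds z₀ hε) hrep
  exact (key.differentiableAt.fun_const_smul _).congr_of_eventuallyEq hev

lemma opApply_differentiableOn (hO : IsOpen O) {g : Fin n → (Fin n → ℂ) → ℂ}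
    {φ : (Fin n → ℂ) → ℂ}
    (hg : ∀ α, DifferentiableOn ℂ (g α) O) (hφ : DifferentiableOn ℂ φ O) :
    DifferentiableOn ℂ (opApply g φ) O := by
  unfold opApply
  exact DifferentiableOn.fun_sum fun α _ => (hg α).mul (differentiableOn_fderiv_single hO hφ α)

lemma opIter_differentiableOn (hO : IsOpen O) {f : ℕ → Fin n → (Fin n → ℂ) → ℂ}
    {φ : (Fin n → ℂ) → ℂ} (hφ : DifferentiableOn ℂ φ O) :
    ∀ j, (∀ i < j, ∀ α, DifferentiableOn ℂ (f i α) O) →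
      DifferentiableOn ℂ (opIter f j φ) O := by
  intro j
  induction j with
  | zero => exact fun _ => hφ
  | succ j ih =>
    intro hf
    exact opApply_differentiableOn hO (fun α => hf j (Nat.lt_succ_self j) α)
      (ih fun i hi α => hf i (hi.trans (Nat.lt_succ_self j)) α)

end Auxiliary

/-- **iterated Cauchy estimate.** If every closed polydisc of polyradius `r`
centred at a point of `V` is contained in `U`, the coefficients of the first-order operators
`f_0, …, f_{k-1}` are holomorphic on an open set containing `U` and bounded by `M` on `U`,
then for every `φ` holomorphic on that open set,
`sup_V |(f_{k-1} ∘ ⋯ ∘ f_0) φ| ≤ (nM/r)^k k^k sup_U |φ|`. -/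
theorem stmt16 {n : ℕ} (U V : Set (Fin n → ℂ)) (hUc : IsCompact U) (hVc : IsCompact V)
    (r : ℝ) (hr : 0 < r)
    (hpoly : ∀ y ∈ V, ∀ z : Fin n → ℂ, (∀ α, ‖z α - y α‖ ≤ r) → z ∈ U)
    (O : Set (Fin n → ℂ)) (hO : IsOpen O) (hUO : U ⊆ O)
    (k : ℕ) (f : ℕ → Fin n → (Fin n → ℂ) → ℂ)
    (hf : ∀ j < k, ∀ α, DifferentiableOn ℂ (f j α) O)
    (M : ℝ) (hM : ∀ j < k, ∀ α, ∀ z ∈ U, ‖f j α z‖ ≤ M)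
    (φ : (Fin n → ℂ) → ℂ) (hφ : DifferentiableOn ℂ φ O)
    (Mφ : ℝ) (hMφ : ∀ z ∈ U, ‖φ z‖ ≤ Mφ) :
    ∀ y ∈ V,
      ‖opIter f k φ y‖ ≤ ((n : ℝ) * M / r) ^ k * (k : ℝ) ^ k * Mφ := by
  intro y hy
  rcases Nat.eq_zero_or_pos k with hk | hk
  · subst hk
    have hyU : y ∈ U := hpoly y hy y fun α => by simpa using hr.le
    simpa [opIter] using hMφ y hyU
  have hk0 : (k : ℝ) ≠ 0 := by exact_mod_cast hk.ne'
  set ρ : ℝ := r / k with hρdef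
  have hρ : 0 < ρ := div_pos hr (by exact_mod_cast hk)
  have hkρ : (k : ℝ) * ρ = r := by rw [hρdef]; field_simp
  set B : ℝ := (n : ℝ) * M * k / r with hB
  have main : ∀ j, j ≤ k → ∀ x : Fin n → ℂ,
      (∃ v ∈ V, ∀ β, ‖x β - v β‖ ≤ ((k : ℝ) - j) * ρ) →
      ‖opIter f j φ x‖ ≤ B ^ j * Mφ := by
    intro j
    induction j with
    | zero =>
      rintro - x ⟨v, hv, hvx⟩
      have hxU : x ∈ U := hpoly v hv x fun β => (hvx β).trans (by
        push_cast
        rw [sub_zero, hkρ])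
      simpa [opIter] using hMφ x hxU
    | succ j ih =>
      rintro hjk x ⟨v, hv, hvx'⟩
      have hvx : ∀ β, ‖x β - v β‖ ≤ ((k:ℝ) - ((j:ℝ) + 1)) * ρ := by
        intro β
        refine (hvx' β).trans ?_
        push_cast
        exact le_rfl
      have hj_lt : j < k := hjk
      have hjk' : j ≤ k := hj_lt.le
      have hjr : ((k : ℝ) - (j + 1)) * ρ ≤ r := by
        rw [← hkρ]
        have : ((k : ℝ) - (j + 1)) ≤ (k : ℝ) := by
          have : (0:ℝ) ≤ (j:ℝ) + 1 := by positivity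
          linarith
        nlinarith [hρ.le]
      have hjr' : ((k : ℝ) - j) * ρ ≤ r := by
        rw [← hkρ]
        have : ((k : ℝ) - j) ≤ (k : ℝ) := by
          have : (0:ℝ) ≤ (j:ℝ) := by positivity
          linarith
        nlinarith [hρ.le]
      have hxU : x ∈ U := hpoly v hv x fun β => (hvx β).trans hjr
      -- the disc in direction α stays in the larger region
      have hdisc : ∀ (α : Fin n) (w : ℂ), ‖w‖ ≤ ρ →
          ∀ β, ‖(x + w • (Pi.single α 1 : Fin n → ℂ)) β - v β‖
            ≤ ((k : ℝ) - j) * ρ := by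
        intro α w hw β
        rcases eq_or_ne β α with hβ | hβ
        · subst hβ
          have : (x + w • (Pi.single β 1 : Fin n → ℂ)) β = x β + w := by
            simp [Pi.single_apply]
          rw [this]
          calc ‖x β + w - v β‖
              ≤ ‖x β - v β‖ + ‖w‖ := by
                rw [add_sub_right_comm]; exact norm_add_le _ _
            _ ≤ ((k : ℝ) - (j + 1)) * ρ + ρ := add_le_add (hvx β) hw
            _ = ((k : ℝ) - j) * ρ := by ring
        · have : (x + w • (Pi.single α 1 : Fin n → ℂ)) β = x β := by
            simp [Pi.single_apply, hβ]
          rw [this]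
          refine (hvx β).trans ?_
          have h1 : ((k : ℝ) - (j + 1)) ≤ (k : ℝ) - j := by linarith
          nlinarith [hρ.le]
      have hFdiff : DifferentiableOn ℂ (opIter f j φ) O :=
        opIter_differentiableOn hO hφ j fun i hi α => hf i (hi.trans_le hjk') α
      have hB0 : 0 ≤ B ^ j * Mφ := by
        have h0 : ‖opIter f j φ x‖ ≤ B ^ j * Mφ :=
          ih hjk' x ⟨v, hv, fun β => (hvx β).trans (by
            have h1 : ((k : ℝ) - (j + 1)) ≤ (k : ℝ) - j := by linarith
            nlinarith [hρ.le])⟩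
        exact (norm_nonneg _).trans h0
      have hpart : ∀ α : Fin n,
          ‖fderiv ℂ (opIter f j φ) x ((Pi.single α 1 : Fin n → ℂ))‖
            ≤ (B ^ j * Mφ) / ρ := by
        intro α
        refine abs_fderiv_single_le hO hFdiff α hρ (fun w hw => ?_) (fun w hw => ?_)
        · exact hUO (hpoly v hv _ fun β => (hdisc α w hw β).trans hjr')
        · exact ih hjk' _ ⟨v, hv, hdisc α w hw⟩
      have hstep : opIter f (j+1) φ x
          = ∑ α, f j α x * fderiv ℂ (opIter f j φ) x (Pi.single α 1) := rfl
      rw [hstep]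
      calc ‖∑ α, f j α x * fderiv ℂ (opIter f j φ) x (Pi.single α 1)‖
          ≤ ∑ α, ‖f j α x * fderiv ℂ (opIter f j φ) x (Pi.single α 1)‖ :=
            norm_sum_le _ _
        _ ≤ ∑ _α : Fin n, M * ((B ^ j * Mφ) / ρ) := by
            refine Finset.sum_le_sum fun α _ => ?_
            rw [norm_mul]
            exact mul_le_mul (hM j hj_lt α x hxU) (hpart α) (norm_nonneg _)
              ((norm_nonneg _).trans (hM j hj_lt α x hxU))
        _ = (n : ℝ) * (M * ((B ^ j * Mφ) / ρ)) := by
            simp [Finset.sum_const, Finset.card_univ, nsmul_eq_mul]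
        _ = B ^ (j + 1) * Mφ := by
            rw [hB, hρdef, pow_succ]
            field_simp
  have hfin := main k le_rfl y ⟨y, hy, fun β => by simp⟩
  have hBpow : B ^ k = ((n : ℝ) * M / r) ^ k * (k : ℝ) ^ k := by
    rw [← mul_pow, hB]
    congr 1
    field_simp
  calc ‖opIter f k φ y‖ ≤ B ^ k * Mφ := hfin
    _ = ((n : ℝ) * M / r) ^ k * (k : ℝ) ^ k * Mφ := by rw [hBpow]
end
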